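/- arXiv:1611.09423 — 9 statements merged into one kernel-verified Lean document; each statement's English description precedes it below -/
import Mathlib

section
/- Let R and T be positive integers with R ≤ T, and let J be a nonnegative integer. If R < T, then the number of sequences (a_1, …, a_R) of positive integers with a_1 + ⋯ + a_R = T and with exactly J indices i such that a_i = 1 equals C(R,J)·C(T−R−1, R−J−1). If R = T, then this number equals 1 when J = T (and 0 otherwise). -/
/-- Binomial coefficient `C(p,q)` with the conventions `C(0,0)=1` and
`C(p,q)=0` whenever `q < 0` or `q > p`. -/
def intChoose (p q : ℤ) : ℤ :=
  if 0 ≤ q ∧ q ≤ p then (p.toNat).choose q.toNat else 0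


/-- Stars and bars: number of `ℕ`-valued tuples with a given sum. -/
lemma aux_card_sumEq (α : Type*) [Fintype α] [DecidableEq α] (m : ℕ) :
    Nat.card {P : α → ℕ // ∑ i, P i = m} =
      (Fintype.card α + m - 1).choose m := by
  rw [← Nat.card_congr (Sym.equivNatSumOfFintype α m), Nat.card_eq_fintype_card,
    Sym.card_sym_eq_choose]

/-- Number of positive tuples with a given sum. -/
lemma aux_card_posSumEq (α : Type*) [Fintype α] [DecidableEq α] (n : ℕ)
    (h0 : 0 < Fintype.card α) (hn : 0 < n) :
    Nat.card {a : α → ℕ // (∀ i, 1 ≤ a i) ∧ ∑ i, a i = n} =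
      (n - 1).choose (Fintype.card α - 1) := by
  rcases le_or_gt (Fintype.card α) n with h | h
  · have e : {a : α → ℕ // (∀ i, 1 ≤ a i) ∧ ∑ i, a i = n} ≃
        {P : α → ℕ // ∑ i, P i = n - Fintype.card α} :=
    { toFun := fun a => ⟨fun i => a.1 i - 1, by
        have h1 := a.2.1
        have h2 := a.2.2
        have key : ∑ i, (a.1 i - 1 + 1) = ∑ i, a.1 i :=
          Finset.sum_congr rfl fun i _ => by have := h1 i; omega
        rw [Finset.sum_add_distrib, Finset.sum_const, Finset.card_univ] at key
        simp only [smul_eq_mul, mul_one] at key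
        show ∑ i, (a.1 i - 1) = n - Fintype.card α
        omega⟩
      invFun := fun P => ⟨fun i => P.1 i + 1, fun i => Nat.succ_le_succ (Nat.zero_le _), by
        have h2 := P.2
        show ∑ i, (P.1 i + 1) = n
        rw [Finset.sum_add_distrib, Finset.sum_const, Finset.card_univ, h2]
        simp only [smul_eq_mul, mul_one]
        omega⟩
      left_inv := fun a => by
        ext i
        have := a.2.1 i
        simp only
        omega
      right_inv := fun P => by
        ext i
        simp }
    rw [Nat.card_congr e, aux_card_sumEq]
    have h1 : Fintype.card α + (n - Fintype.card α) - 1 = n - 1 := by omega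
    rw [h1]
    have h2 : n - Fintype.card α = (n - 1) - (Fintype.card α - 1) := by omega
    rw [h2, Nat.choose_symm (by omega)]
  · have : IsEmpty {a : α → ℕ // (∀ i, 1 ≤ a i) ∧ ∑ i, a i = n} := by
      constructor
      rintro ⟨a, h1, h2⟩
      have : ∑ _i : α, 1 ≤ ∑ i, a i := Finset.sum_le_sum fun i _ => h1 i
      rw [Finset.sum_const, Finset.card_univ, smul_eq_mul, mul_one, h2] at this
      omega
    rw [Nat.card_of_isEmpty, Nat.choose_eq_zero_of_lt (by omega)]

/-- Glue a constant-1 function on `s` with `c + 1` off `s`. -/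
def auxGlue {R : ℕ} (s : Finset (Fin R)) (c : {i // i ∈ sᶜ} → ℕ) : Fin R → ℕ :=
  fun i => if h : i ∈ s then 1 else c ⟨i, Finset.mem_compl.2 h⟩ + 1

lemma auxGlue_ones {R : ℕ} (s : Finset (Fin R)) (c : {i // i ∈ sᶜ} → ℕ)
    (hc : ∀ i, 1 ≤ c i) :
    Finset.univ.filter (fun i => auxGlue s c i = 1) = s := by
  ext i
  simp only [Finset.mem_filter, Finset.mem_univ, true_and, auxGlue]
  by_cases h : i ∈ s
  · simp [h]
  · have := hc ⟨i, Finset.mem_compl.2 h⟩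
    simp only [h, dif_neg, not_false_iff]
    constructor
    · intro hcon; simp [h] at hcon; omega
    · intro hcon; exact hcon.elim

lemma auxGlue_sum {R : ℕ} (s : Finset (Fin R)) (c : {i // i ∈ sᶜ} → ℕ) :
    ∑ i, auxGlue s c i = s.card + ∑ i, (c i + 1) := by
  rw [← Finset.sum_add_sum_compl s (auxGlue s c)]
  congr 1
  · have h1 : ∑ i ∈ s, auxGlue s c i = ∑ _i ∈ s, 1 :=
      Finset.sum_congr rfl (fun i hi => by simp [auxGlue, hi])
    rw [h1, Finset.sum_const, smul_eq_mul, mul_one]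
  · rw [← Finset.sum_coe_sort sᶜ (auxGlue s c)]
    refine Finset.sum_congr rfl fun i _ => ?_
    have hi : (i : Fin R) ∉ s := Finset.mem_compl.1 i.2
    simp [auxGlue, hi]

lemma aux_main_card (R T J : ℕ) (hR : 0 < R) (hRT : R < T) (hJR : J < R) :
    Nat.card {a : Fin R → ℕ // (∀ i, 1 ≤ a i) ∧ (∑ i, a i) = T ∧
        (Finset.univ.filter (fun i => a i = 1)).card = J} =
      R.choose J * (T - R - 1).choose (R - J - 1) := by
  classical
  set Sub := {a : Fin R → ℕ // (∀ i, 1 ≤ a i) ∧ (∑ i, a i) = T ∧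
      (Finset.univ.filter (fun i => a i = 1)).card = J} with hSub
  set S := {s : Finset (Fin R) // s.card = J} with hS
  set G := {c : Fin (R - J) → ℕ // (∀ i, 1 ≤ c i) ∧ ∑ i, c i = T - R} with hG
  set F : S → Type := fun s =>
    {c : {i // i ∈ s.1ᶜ} → ℕ // (∀ i, 1 ≤ c i) ∧ ∑ i, c i = T - R} with hF
  -- the gluing map from the sigma type to the subtype
  have hcompl : ∀ s : S, (s.1ᶜ : Finset (Fin R)).card = R - J := by
    intro s
    rw [Finset.card_compl, s.2, Fintype.card_fin]
  let E : (Σ s : S, F s) → Sub := fun p =>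
    ⟨auxGlue p.1.1 (fun i => p.2.1 i), by
      refine ⟨fun i => ?_, ?_, ?_⟩
      · unfold auxGlue; split <;> omega
      · rw [auxGlue_sum, p.1.2]
        have hsum := p.2.2.2
        have hcard := hcompl p.1
        have h2 : ∑ i : {i // i ∈ p.1.1ᶜ}, (p.2.1 i + 1) =
            (T - R) + (p.1.1ᶜ : Finset (Fin R)).card := by
          rw [Finset.sum_add_distrib, hsum, Finset.sum_const, Finset.card_univ,
            smul_eq_mul, mul_one, Fintype.card_coe]
        rw [h2, hcard]
        omega
      · rw [auxGlue_ones _ _ p.2.2.1, p.1.2]⟩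
  have hbij : Function.Bijective E := by
    constructor
    · rintro ⟨⟨s, hs⟩, c, hc⟩ ⟨⟨s', hs'⟩, c', hc'⟩ h
      have h0 : auxGlue s (fun i => c i) = auxGlue s' (fun i => c' i) :=
        congrArg Subtype.val h
      have hss : s = s' := by
        rw [← auxGlue_ones s (fun i => c i) hc.1, ← auxGlue_ones s' (fun i => c' i) hc'.1, h0]
      subst hss
      have hcc : c = c' := by
        funext i
        have := congrFun h0 i.1
        have hni : (i : Fin R) ∉ s := Finset.mem_compl.1 i.2
        simpa [auxGlue, hni] using this
      subst hcc
      rfl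
    · rintro ⟨a, ha1, ha2, ha3⟩
      refine ⟨⟨⟨Finset.univ.filter (fun i => a i = 1), ha3⟩,
        ⟨fun i => a i.1 - 1, fun i => ?_, ?_⟩⟩, ?_⟩
      · have hni := Finset.mem_compl.1 i.2
        simp only [Finset.mem_filter, Finset.mem_univ, true_and] at hni
        have := ha1 i.1
        show 1 ≤ a i.1 - 1
        omega
      · -- sum of (a i - 1) over the complement is T - R
        set s := Finset.univ.filter (fun i => a i = 1) with hs
        have hsc : s.card = J := ha3
        have hscc : (sᶜ : Finset (Fin R)).card = R - J := by
          rw [Finset.card_compl, hsc, Fintype.card_fin]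
        have hJle : J ≤ R := by
          have h := Finset.card_le_univ s
          rw [hsc, Fintype.card_fin] at h
          exact h
        have hsum1 : ∑ i ∈ s, a i = J := by
          have : ∑ i ∈ s, a i = ∑ _i ∈ s, 1 :=
            Finset.sum_congr rfl fun i hi => by
              simp only [hs, Finset.mem_filter] at hi; exact hi.2
          rw [this, Finset.sum_const, smul_eq_mul, mul_one, hsc]
        have hsplit := Finset.sum_add_sum_compl s a
        rw [ha2, hsum1] at hsplit
        have hsum2 : ∑ i ∈ sᶜ, a i = T - J := by omega
        have key : ∑ i ∈ sᶜ, (a i - 1 + 1) = ∑ i ∈ sᶜ, a i :=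
          Finset.sum_congr rfl fun i _ => by have := ha1 i; omega
        rw [Finset.sum_add_distrib, Finset.sum_const, smul_eq_mul, mul_one, hscc,
          hsum2] at key
        have : ∑ i : {i // i ∈ sᶜ}, (a i.1 - 1) = ∑ i ∈ sᶜ, (a i - 1) :=
          Finset.sum_coe_sort sᶜ (fun i => a i - 1)
        show ∑ i : {i // i ∈ sᶜ}, (a i.1 - 1) = T - R
        omega
      · apply Subtype.ext
        funext i
        simp only [E, auxGlue]
        split
        · rename_i hmem
          simp only [Finset.mem_filter, Finset.mem_univ, true_and] at hmem
          exact hmem.symm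
        · have := ha1 i
          omega
  -- fiberwise equivalence to the fixed type G
  have fiberEquiv : ∀ s : S, F s ≃ G := by
    intro s
    have hc : Fintype.card {i // i ∈ s.1ᶜ} = R - J := by
      rw [Fintype.card_coe]; exact hcompl s
    have e : {i // i ∈ s.1ᶜ} ≃ Fin (R - J) := Fintype.equivFinOfCardEq hc
    refine Equiv.subtypeEquiv (Equiv.arrowCongr e (Equiv.refl ℕ)) fun c => ?_
    simp only [Equiv.arrowCongr_apply, Equiv.coe_refl, Function.comp, id_eq]
    constructor
    · rintro ⟨h1, h2⟩
      refine ⟨fun k => h1 _, ?_⟩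
      rw [← h2]
      exact Equiv.sum_comp e.symm (fun i => c i)
    · rintro ⟨h1, h2⟩
      refine ⟨fun i => by simpa using h1 (e i), ?_⟩
      rw [← h2]
      exact (Equiv.sum_comp e.symm (fun i => c i)).symm
  have e2 : (Σ s : S, F s) ≃ S × G :=
    (Equiv.sigmaCongrRight fiberEquiv).trans (Equiv.sigmaEquivProd S G)
  rw [← Nat.card_congr (Equiv.ofBijective E hbij), Nat.card_congr e2, Nat.card_prod]
  have hcS : Nat.card S = R.choose J := by
    rw [Nat.card_eq_fintype_card, Fintype.card_finset_len, Fintype.card_fin]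
  have hcG : Nat.card G = (T - R - 1).choose (R - J - 1) := by
    have := aux_card_posSumEq (Fin (R - J)) (T - R)
      (by rw [Fintype.card_fin]; omega) (by omega)
    rw [Fintype.card_fin] at this
    exact this
  rw [hcS, hcG]
lemma intChoose_eq (p q : ℤ) (hp : 0 ≤ p) (hq : 0 ≤ q) :
    intChoose p q = ((p.toNat).choose q.toNat : ℤ) := by
  unfold intChoose
  split
  · rfl
  · rename_i h
    push_neg at h
    have h1 : p < q := h hq
    have h2 : p.toNat < q.toNat := by omega
    rw [Nat.choose_eq_zero_of_lt h2]
    simp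

lemma aux_all_ones {R : ℕ} (a : Fin R → ℕ) (h1 : ∀ i, 1 ≤ a i)
    (h2 : ∑ i, a i = R) : ∀ i, a i = 1 := by
  by_contra hcon
  push_neg at hcon
  obtain ⟨j, hj⟩ := hcon
  have hlt : ∑ _i : Fin R, 1 < ∑ i, a i := by
    apply Finset.sum_lt_sum (fun i _ => h1 i)
    exact ⟨j, Finset.mem_univ j, by have := h1 j; omega⟩
  rw [h2, Finset.sum_const, Finset.card_univ, Fintype.card_fin, smul_eq_mul, mul_one] at hlt
  omega

/-- Lemma (counting sequences of positive integers with a prescribed sum and a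
prescribed number of entries equal to `1`). -/
theorem stmt_0 (R T J : ℕ) (hR : 0 < R) (hT : 0 < T) (hRT : R ≤ T) :
    (R < T →
      (Nat.card {a : Fin R → ℕ // (∀ i, 1 ≤ a i) ∧ (∑ i, a i) = T ∧
          (Finset.univ.filter (fun i => a i = 1)).card = J} : ℤ) =
        intChoose (R : ℤ) (J : ℤ) * intChoose ((T : ℤ) - R - 1) ((R : ℤ) - J - 1)) ∧
    (R = T →
      Nat.card {a : Fin R → ℕ // (∀ i, 1 ≤ a i) ∧ (∑ i, a i) = T ∧
          (Finset.univ.filter (fun i => a i = 1)).card = J} =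
        if J = T then 1 else 0) := by
  constructor
  · intro hlt
    rcases lt_or_ge J R with hJR | hRJ
    · -- main case
      rw [aux_main_card R T J hR hlt hJR]
      rw [intChoose_eq (R : ℤ) (J : ℤ) (by positivity) (by positivity),
        intChoose_eq ((T : ℤ) - R - 1) ((R : ℤ) - J - 1) (by omega) (by omega)]
      have e1 : ((R : ℤ)).toNat = R := by omega
      have e2 : ((J : ℤ)).toNat = J := by omega
      have e3 : ((T : ℤ) - R - 1).toNat = T - R - 1 := by omega
      have e4 : ((R : ℤ) - J - 1).toNat = R - J - 1 := by omega
      rw [e1, e2, e3, e4]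
      push_cast
      ring
    · -- J ≥ R : the set is empty
      have hE : IsEmpty {a : Fin R → ℕ // (∀ i, 1 ≤ a i) ∧ (∑ i, a i) = T ∧
          (Finset.univ.filter (fun i => a i = 1)).card = J} := by
        constructor
        rintro ⟨a, h1, h2, h3⟩
        have hle : (Finset.univ.filter (fun i => a i = 1)).card ≤ R := by
          have := Finset.card_filter_le (Finset.univ : Finset (Fin R)) (fun i => a i = 1)
          rwa [Finset.card_univ, Fintype.card_fin] at this
        rcases lt_or_eq_of_le hRJ with h | h
        · omega
        · -- J = R: all entries are 1, so the sum is R < T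
          subst h
          have hfu : Finset.univ.filter (fun i => a i = 1) = Finset.univ := by
            apply Finset.eq_univ_of_card
            rw [h3, Fintype.card_fin]
          have hall : ∀ i : Fin R, a i = 1 := by
            intro i
            have := Finset.mem_filter.1 (hfu ▸ Finset.mem_univ i)
            exact this.2
          have : ∑ i, a i = R := by
            rw [Finset.sum_congr rfl (fun i _ => hall i), Finset.sum_const,
              Finset.card_univ, Fintype.card_fin, smul_eq_mul, mul_one]
          omega
      rw [Nat.card_of_isEmpty]
      rcases lt_or_eq_of_le hRJ with h | h
      · have h1 : intChoose (R : ℤ) (J : ℤ) = 0 := by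
          unfold intChoose
          rw [if_neg]
          push_neg
          intro _
          exact_mod_cast h
        rw [h1]
        ring
      · have h2 : intChoose ((T : ℤ) - R - 1) ((R : ℤ) - J - 1) = 0 := by
          unfold intChoose
          rw [if_neg]
          push_neg
          intro hq
          omega
        rw [h2]
        ring
  · intro hRT'
    subst hRT'
    by_cases hJ : J = R
    · subst hJ
      rw [if_pos rfl]
      rw [Nat.card_eq_one_iff_unique]
      constructor
      · constructor
        rintro ⟨a, h1, h2, h3⟩ ⟨b, g1, g2, g3⟩
        have ha := aux_all_ones a h1 h2
        have hb := aux_all_ones b g1 g2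
        apply Subtype.ext
        funext i
        show a i = b i
        rw [ha i, hb i]
      · refine ⟨⟨fun _ => 1, fun _ => le_refl 1, ?_, ?_⟩⟩
        · rw [Finset.sum_const, Finset.card_univ, Fintype.card_fin, smul_eq_mul, mul_one]
        · rw [Finset.filter_true_of_mem (fun _ _ => rfl), Finset.card_univ, Fintype.card_fin]
    · rw [if_neg (fun h => hJ h)]
      have hE : IsEmpty {a : Fin R → ℕ // (∀ i, 1 ≤ a i) ∧ (∑ i, a i) = R ∧
          (Finset.univ.filter (fun i => a i = 1)).card = J} := by
        constructor
        rintro ⟨a, h1, h2, h3⟩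
        have ha := aux_all_ones a h1 h2
        rw [Finset.filter_true_of_mem (fun i _ => ha i), Finset.card_univ,
          Fintype.card_fin] at h3
        exact hJ h3.symm
      rw [Nat.card_of_isEmpty]
end

section
/- Let t, a, b, c be integers with b ≥ 1 and 0 ≤ c ≤ b ≤ a ≤ t−1. Then the number of pairs of sequences (ℓ, u), where ℓ = (ℓ_1, …, ℓ_b) is a sequence of positive integers summing to t−a having exactly c entries that are at least 2 (equivalently, exactly b−c entries equal to 1), and u = (u_1, …, u_b) is a sequence of positive integers summing to a, equals (b·ξ_t(a,b,c)/a)·C(a,b)·C(b,c)·C(t−a−b, c), where ξ_t(a,b,c) = c/(t−a−b) if a+b < t and ξ_t(a,b,c) = 1 if a+b ≥ t. -/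
def posTuples (k n : ℕ) : Finset (Fin k → ℕ) :=
  (Finset.Nat.antidiagonalTuple k n).filter (fun f => ∀ i, 1 ≤ f i)

lemma mem_posTuples {k n : ℕ} {f : Fin k → ℕ} :
    f ∈ posTuples k n ↔ (∀ i, 1 ≤ f i) ∧ ∑ i, f i = n := by
  simp [posTuples, Finset.Nat.mem_antidiagonalTuple, and_comm]

lemma posTuples_rec (k n : ℕ) :
    (posTuples (k + 1) (n + 1)).card = (posTuples k n).card + (posTuples (k + 1) n).card := by
  classical
  rw [← Finset.card_filter_add_card_filter_not (s := posTuples (k+1) (n+1))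
    (fun f => f 0 = 1)]
  congr 1
  · refine Finset.card_bij' (fun f _ => Fin.tail f) (fun g _ => Fin.cons 1 g)
      ?_ ?_ ?_ ?_
    · intro f hf
      rw [Finset.mem_filter, mem_posTuples] at hf
      obtain ⟨⟨hpos, hsum⟩, hf0⟩ := hf
      rw [mem_posTuples]
      refine ⟨fun i => hpos i.succ, ?_⟩
      rw [Fin.sum_univ_succ, hf0] at hsum
      simp only [Fin.tail]
      omega
    · intro g hg
      rw [mem_posTuples] at hg
      rw [Finset.mem_filter, mem_posTuples]
      refine ⟨⟨?_, ?_⟩, by simp⟩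
      · intro i
        refine Fin.cases (by simp) (fun j => by simpa using hg.1 j) i
      · rw [Fin.sum_univ_succ]
        simp only [Fin.cons_zero, Fin.cons_succ]
        have := hg.2
        omega
    · intro f hf
      rw [Finset.mem_filter] at hf
      funext i
      refine Fin.cases ?_ (fun j => ?_) i
      · simp [hf.2]
      · simp [Fin.tail]
    · intro g _
      funext i
      simp [Fin.tail]
  · refine Finset.card_bij' (fun f _ => Fin.cons (f 0 - 1) (Fin.tail f))
      (fun g _ => Fin.cons (g 0 + 1) (Fin.tail g)) ?_ ?_ ?_ ?_
    · intro f hf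
      rw [Finset.mem_filter, mem_posTuples] at hf
      obtain ⟨⟨hpos, hsum⟩, hf0⟩ := hf
      have h2 : 2 ≤ f 0 := by have := hpos 0; omega
      rw [mem_posTuples]
      constructor
      · intro i
        refine Fin.cases ?_ (fun j => ?_) i
        · simpa using by omega
        · simpa [Fin.tail] using hpos j.succ
      · rw [Fin.sum_univ_succ] at hsum ⊢
        simp only [Fin.cons_zero, Fin.cons_succ, Fin.tail]
        omega
    · intro g hg
      rw [mem_posTuples] at hg
      obtain ⟨hpos, hsum⟩ := hg
      rw [Finset.mem_filter, mem_posTuples]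
      refine ⟨⟨?_, ?_⟩, by have := hpos 0; simp only [Fin.cons_zero]; omega⟩
      · intro i
        refine Fin.cases (by simp) (fun j => ?_) i
        simpa [Fin.tail] using hpos j.succ
      · rw [Fin.sum_univ_succ] at hsum ⊢
        simp only [Fin.cons_zero, Fin.cons_succ, Fin.tail]
        omega
    · intro f hf
      rw [Finset.mem_filter, mem_posTuples] at hf
      have h1 : 1 ≤ f 0 := hf.1.1 0
      funext i
      refine Fin.cases ?_ (fun j => ?_) i
      · simp; omega
      · simp [Fin.tail]
    · intro g _
      funext i
      refine Fin.cases (by simp) (fun j => by simp [Fin.tail]) i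

lemma posTuples_zero_right (k : ℕ) :
    (posTuples k 0).card = if k = 0 then 1 else 0 := by
  split
  · subst ‹k = 0›
    rw [Finset.card_eq_one]
    exact ⟨fun i => i.elim0, by ext f; simp [mem_posTuples, funext_iff]⟩
  · rw [Finset.card_eq_zero]
    ext f
    simp only [mem_posTuples, Finset.notMem_empty, iff_false, not_and]
    intro hpos hsum
    have hk : 0 < k := Nat.pos_of_ne_zero ‹k ≠ 0›
    have : 0 < ∑ i, f i :=
      Finset.sum_pos (fun i _ => hpos i) ⟨⟨0, hk⟩, Finset.mem_univ _⟩
    omega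

lemma posTuples_zero_left (n : ℕ) :
    (posTuples 0 n).card = if n = 0 then 1 else 0 := by
  split
  · subst ‹n = 0›; exact posTuples_zero_right 0
  · rw [Finset.card_eq_zero]
    ext f
    simp only [mem_posTuples, Finset.notMem_empty, iff_false, not_and]
    intro _
    simp
    omega

lemma posTuples_card_succ (n k : ℕ) : (posTuples (k + 1) (n + 1)).card = n.choose k := by
  induction n generalizing k with
  | zero =>
    cases k with
    | zero =>
      rw [Nat.choose_self, Finset.card_eq_one]
      refine ⟨fun _ => 1, ?_⟩
      ext f
      simp only [Finset.mem_singleton, mem_posTuples]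
      constructor
      · rintro ⟨h1, h2⟩
        funext i
        rw [Fin.sum_univ_one] at h2
        rw [Fin.eq_zero i]
        simpa using h2
      · rintro rfl
        simp
    | succ k' =>
      rw [Nat.choose_eq_zero_of_lt (by omega), Finset.card_eq_zero]
      ext f
      simp only [mem_posTuples, Finset.notMem_empty, iff_false, not_and]
      intro h1 h2
      have : (k' + 2) * 1 ≤ ∑ i, f i := by
        calc (k' + 2) * 1 = ∑ _i : Fin (k' + 2), 1 := by simp [mul_comm]
        _ ≤ ∑ i, f i := Finset.sum_le_sum (fun i _ => h1 i)
      omega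
  | succ n ih =>
    rw [posTuples_rec]
    cases k with
    | zero =>
      rw [show (0:ℕ) = 0 from rfl] at *
      rw [posTuples_zero_left, ih 0]
      simp
    | succ k' =>
      rw [ih k', ih (k' + 1)]
      exact (Nat.choose_succ_succ n k').symm
/-- Tuples `g : Fin b → ℕ` summing to `s` with exactly `c` nonzero entries. -/
def zTuples (b c s : ℕ) : Finset (Fin b → ℕ) :=
  (Finset.Nat.antidiagonalTuple b s).filter
    (fun g => (Finset.univ.filter (fun i => 1 ≤ g i)).card = c)

lemma mem_zTuples {b c s : ℕ} {g : Fin b → ℕ} :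
    g ∈ zTuples b c s ↔ ∑ i, g i = s ∧ (Finset.univ.filter (fun i => 1 ≤ g i)).card = c := by
  simp [zTuples, Finset.Nat.mem_antidiagonalTuple]

lemma zTuples_fiber_card (b c s : ℕ) (S : Finset (Fin b)) (hS : S.card = c) :
    ((zTuples b c s).filter
      (fun g => Finset.univ.filter (fun i => 1 ≤ g i) = S)).card = (posTuples c s).card := by
  classical
  have e : {x // x ∈ S} ≃ Fin c := S.equivFin.trans (finCongr hS)
  refine Finset.card_bij' (fun g _ => fun j : Fin c => g (e.symm j : Fin b))
    (fun h _ => fun i : Fin b => if hi : i ∈ S then h (e ⟨i, hi⟩) else 0) ?_ ?_ ?_ ?_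
  · intro g hg
    rw [Finset.mem_filter, mem_zTuples] at hg
    obtain ⟨⟨hsum, _⟩, hsupp⟩ := hg
    rw [mem_posTuples]
    constructor
    · intro j
      have h2 : ((e.symm j : {x // x ∈ S}) : Fin b) ∈ Finset.univ.filter (fun i => 1 ≤ g i) := by
        rw [hsupp]; exact (e.symm j).2
      simpa using h2
    · rw [Equiv.sum_comp e.symm (fun x : {x // x ∈ S} => g (x : Fin b))]
      rw [Finset.sum_coe_sort S g]
      rw [← hsum]
      refine Finset.sum_subset (Finset.subset_univ S) ?_
      intro i _ hiS
      rw [← hsupp] at hiS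
      simp only [Finset.mem_filter, Finset.mem_univ, true_and, not_le] at hiS
      omega
  · intro h hh
    rw [mem_posTuples] at hh
    obtain ⟨hpos, hsum⟩ := hh
    have hsupp : Finset.univ.filter (fun i => 1 ≤ if hi : i ∈ S then h (e ⟨i, hi⟩) else 0) = S := by
      ext i
      simp only [Finset.mem_filter, Finset.mem_univ, true_and]
      by_cases hi : i ∈ S
      · simp only [dif_pos hi]
        exact ⟨fun _ => hi, fun _ => hpos _⟩
      · simp [dif_neg hi, hi]
    rw [Finset.mem_filter, mem_zTuples]
    refine ⟨⟨?_, by rw [hsupp, hS]⟩, hsupp⟩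
    rw [show (∑ i : Fin b, if hi : i ∈ S then h (e ⟨i, hi⟩) else 0)
        = ∑ i ∈ S, (if hi : i ∈ S then h (e ⟨i, hi⟩) else 0) from
      (Finset.sum_subset (Finset.subset_univ S) (fun i _ hiS => dif_neg hiS)).symm]
    rw [← Finset.sum_attach S (fun i => if hi : i ∈ S then h (e ⟨i, hi⟩) else 0)]
    rw [show (∑ x ∈ S.attach, if hi : (x : Fin b) ∈ S then h (e ⟨x, hi⟩) else 0)
        = ∑ x : {x // x ∈ S}, h (e x) from
      Finset.sum_congr rfl (fun x _ => by rw [dif_pos x.2])]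
    rw [Equiv.sum_comp e h]
    exact hsum
  · intro g hg
    rw [Finset.mem_filter] at hg
    obtain ⟨hg', hsupp⟩ := hg
    funext i
    by_cases hi : i ∈ S
    · simp only [dif_pos hi, Equiv.symm_apply_apply]
    · simp only [dif_neg hi]
      rw [← hsupp] at hi
      simp only [Finset.mem_filter, Finset.mem_univ, true_and, not_le] at hi
      omega
  · intro h _
    funext j
    dsimp only
    rw [dif_pos (e.symm j).2, Subtype.coe_eta, e.apply_symm_apply]

lemma zTuples_card (b c s : ℕ) :
    (zTuples b c s).card = b.choose c * (posTuples c s).card := by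
  classical
  rw [Finset.card_eq_sum_card_fiberwise
    (f := fun g => Finset.univ.filter (fun i => 1 ≤ g i))
    (t := Finset.powersetCard c (Finset.univ : Finset (Fin b)))
    (fun g hg => by
      rw [Finset.mem_coe, mem_zTuples] at hg
      rw [Finset.mem_coe, Finset.mem_powersetCard]
      exact ⟨Finset.subset_univ _, hg.2⟩)]
  rw [Finset.sum_congr rfl (fun S hS => zTuples_fiber_card b c s S
    (Finset.mem_powersetCard.1 hS).2)]
  rw [Finset.sum_const, Finset.card_powersetCard, Finset.card_univ, Fintype.card_fin,
    smul_eq_mul]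
def cTuples (b c m : ℕ) : Finset (Fin b → ℕ) :=
  (Finset.Nat.antidiagonalTuple b m).filter
    (fun f => (∀ i, 1 ≤ f i) ∧ (Finset.univ.filter (fun i => 2 ≤ f i)).card = c)

lemma mem_cTuples {b c m : ℕ} {f : Fin b → ℕ} :
    f ∈ cTuples b c m ↔
      (∀ i, 1 ≤ f i) ∧ ∑ i, f i = m ∧ (Finset.univ.filter (fun i => 2 ≤ f i)).card = c := by
  simp only [cTuples, Finset.mem_filter, Finset.Nat.mem_antidiagonalTuple]
  tauto

lemma cTuples_card_shift (b c s : ℕ) :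
    (cTuples b c (b + s)).card = (zTuples b c s).card := by
  classical
  refine Finset.card_bij' (fun f _ => fun i => f i - 1) (fun g _ => fun i => g i + 1)
    ?_ ?_ ?_ ?_
  · intro f hf
    rw [mem_cTuples] at hf
    obtain ⟨hpos, hsum, hsupp⟩ := hf
    rw [mem_zTuples]
    constructor
    · have h1 : ∑ i, f i = ∑ i, ((f i - 1) + 1) :=
        Finset.sum_congr rfl (fun i _ => by have := hpos i; omega)
      rw [Finset.sum_add_distrib] at h1
      simp only [Finset.sum_const, Finset.card_univ, Fintype.card_fin, smul_eq_mul,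
        mul_one] at h1
      omega
    · rw [← hsupp]
      congr 1
      apply Finset.filter_congr
      intro i _
      have := hpos i
      omega
  · intro g hg
    rw [mem_zTuples] at hg
    obtain ⟨hsum, hsupp⟩ := hg
    rw [mem_cTuples]
    refine ⟨fun i => by omega, ?_, ?_⟩
    · rw [Finset.sum_add_distrib]
      simp only [Finset.sum_const, Finset.card_univ, Fintype.card_fin, smul_eq_mul,
        mul_one, hsum]
      omega
    · rw [← hsupp]
      congr 1
      apply Finset.filter_congr
      intro i _
      omega
  · intro f hf
    rw [mem_cTuples] at hf
    funext i
    dsimp only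
    have := hf.1 i
    omega
  · intro g _
    funext i
    dsimp only
    omega

lemma cTuples_card_of_lt {b c m : ℕ} (h : m < b) : (cTuples b c m).card = 0 := by
  rw [Finset.card_eq_zero]
  ext f
  simp only [mem_cTuples, Finset.notMem_empty, iff_false, not_and]
  intro hpos hsum
  exfalso
  have : b * 1 ≤ ∑ i, f i := by
    calc b * 1 = ∑ _i : Fin b, 1 := by simp [mul_comm]
    _ ≤ ∑ i, f i := Finset.sum_le_sum (fun i _ => hpos i)
  omega

theorem main_card (t a b c : ℕ) :
    (Nat.card {p : (Fin b → ℕ) × (Fin b → ℕ) //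
        (∀ i, 1 ≤ p.1 i) ∧ (∑ i, p.1 i) = t - a ∧
        (Finset.univ.filter (fun i => 2 ≤ p.1 i)).card = c ∧
        (∀ i, 1 ≤ p.2 i) ∧ (∑ i, p.2 i) = a}) =
      (cTuples b c (t - a)).card * (posTuples b a).card := by
  classical
  have e1 : {p : (Fin b → ℕ) × (Fin b → ℕ) //
        (∀ i, 1 ≤ p.1 i) ∧ (∑ i, p.1 i) = t - a ∧
        (Finset.univ.filter (fun i => 2 ≤ p.1 i)).card = c ∧
        (∀ i, 1 ≤ p.2 i) ∧ (∑ i, p.2 i) = a} ≃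
      {p : (Fin b → ℕ) × (Fin b → ℕ) // p.1 ∈ cTuples b c (t - a) ∧ p.2 ∈ posTuples b a} := by
    refine Equiv.subtypeEquivRight ?_
    intro p
    rw [mem_cTuples, mem_posTuples]
    tauto
  rw [Nat.card_congr e1, Nat.card_congr (Equiv.subtypeProdEquivProd), Nat.card_prod,
    Nat.card_eq_finsetCard, Nat.card_eq_finsetCard]

lemma intChoose_coe (p q : ℕ) : intChoose (p : ℤ) (q : ℤ) = (p.choose q : ℤ) := by
  unfold intChoose
  split_ifs with h
  · simp
  · push_neg at h
    have : (p : ℤ) < q := h (Int.ofNat_nonneg q)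
    rw [Nat.choose_eq_zero_of_lt (by exact_mod_cast this)]
    simp

lemma intChoose_neg {p : ℤ} (hp : p < 0) (q : ℤ) : intChoose p q = 0 := by
  unfold intChoose
  rw [if_neg]
  rintro ⟨h1, h2⟩
  omega

/-- The number of pairs of sequences `(ℓ, u)`, where `ℓ = (ℓ_1, …, ℓ_b)` is a sequence of
positive integers summing to `t−a` with exactly `c` entries at least `2`, and
`u = (u_1, …, u_b)` is a sequence of positive integers summing to `a`, equals
`(b·ξ_t(a,b,c)/a)·C(a,b)·C(b,c)·C(t−a−b, c)` where `ξ_t(a,b,c) = c/(t−a−b)` if `a+b < t`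
and `ξ_t(a,b,c) = 1` if `a+b ≥ t`. -/
theorem stmt_1 (t a b c : ℕ) (hb : 1 ≤ b) (hcb : c ≤ b) (hba : b ≤ a) (hat : a < t) :
    (Nat.card {p : (Fin b → ℕ) × (Fin b → ℕ) //
        (∀ i, 1 ≤ p.1 i) ∧ (∑ i, p.1 i) = t - a ∧
        (Finset.univ.filter (fun i => 2 ≤ p.1 i)).card = c ∧
        (∀ i, 1 ≤ p.2 i) ∧ (∑ i, p.2 i) = a} : ℚ) =
      ((b : ℚ) * (if a + b < t then (c : ℚ) / ((t : ℚ) - a - b) else 1) / (a : ℚ)) *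
        (intChoose (a : ℤ) (b : ℤ) : ℚ) * (intChoose (b : ℤ) (c : ℤ) : ℚ) *
        (intChoose ((t : ℤ) - a - b) (c : ℤ) : ℚ) := by
  classical
  rw [main_card t a b c]
  obtain ⟨b', rfl⟩ : ∃ b', b = b' + 1 := ⟨b - 1, by omega⟩
  obtain ⟨a', rfl⟩ : ∃ a', a = a' + 1 := ⟨a - 1, by omega⟩
  have hpa : (posTuples (b' + 1) (a' + 1)).card = a'.choose b' := posTuples_card_succ a' b'
  have ha0 : ((a' + 1 : ℕ) : ℚ) ≠ 0 := by positivity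
  have q1 : ((a' + 1 : ℕ) : ℚ) * a'.choose b' = ((a' + 1).choose (b' + 1) : ℚ) * ((b' + 1 : ℕ) : ℚ) := by
    exact_mod_cast congrArg (Nat.cast : ℕ → ℚ) (Nat.add_one_mul_choose_eq a' b')
  rw [intChoose_coe (a' + 1) (b' + 1), intChoose_coe (b' + 1) c]
  rcases lt_trichotomy ((a' + 1) + (b' + 1)) t with hlt | heq | hgt
  · -- a + b < t
    obtain ⟨s', hm⟩ : ∃ s', t - (a' + 1) = (b' + 1) + (s' + 1) := ⟨t - a' - b' - 3, by omega⟩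
    have hiz : ((t : ℤ) - ((a' + 1 : ℕ) : ℤ) - ((b' + 1 : ℕ) : ℤ)) = ((s' + 1 : ℕ) : ℤ) := by push_cast; omega
    have hqz : ((t : ℚ) - ((a' + 1 : ℕ) : ℚ) - ((b' + 1 : ℕ) : ℚ)) = ((s' + 1 : ℕ) : ℚ) := by
      have h' : ((a' + 1) + (b' + 1) + (s' + 1) : ℕ) = t := by omega
      push_cast [← h']; ring
    rw [hm, cTuples_card_shift, zTuples_card, hpa, if_pos hlt, hiz,
      intChoose_coe (s' + 1) c, hqz]
    have hs0 : ((s' + 1 : ℕ) : ℚ) ≠ 0 := by positivity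
    rcases Nat.eq_zero_or_pos c with rfl | hc
    · rw [posTuples_zero_left, if_neg (by omega)]
      push_cast
      ring
    · obtain ⟨c'', rfl⟩ : ∃ c'', c = c'' + 1 := ⟨c - 1, by omega⟩
      rw [posTuples_card_succ s' c'']
      have q2 : ((s' + 1 : ℕ) : ℚ) * s'.choose c'' = ((s' + 1).choose (c'' + 1) : ℚ) * ((c'' + 1 : ℕ) : ℚ) := by
        exact_mod_cast congrArg (Nat.cast : ℕ → ℚ) (Nat.add_one_mul_choose_eq s' c'')
      push_cast at q1 q2 ⊢
      field_simp
      linear_combination (((b' + 1).choose (c'' + 1) : ℚ) * ((a' : ℚ) + 1) * (a'.choose b' : ℚ)) * q2 +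
        (((b' + 1).choose (c'' + 1) : ℚ) * ((c'' : ℚ) + 1) * ((s' + 1).choose (c'' + 1) : ℚ)) * q1
  · -- a + b = t
    have hm : t - (a' + 1) = (b' + 1) + 0 := by omega
    have hiz : ((t : ℤ) - ((a' + 1 : ℕ) : ℤ) - ((b' + 1 : ℕ) : ℤ)) = (0 : ℤ) := by push_cast; omega
    rw [hm, cTuples_card_shift, zTuples_card, hpa, if_neg (by omega), hiz]
    rw [posTuples_zero_right]
    rcases Nat.eq_zero_or_pos c with rfl | hc
    · rw [if_pos rfl]
      show _ = _ * _ * _ * ((intChoose 0 0 : ℤ) : ℚ)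
      rw [show intChoose 0 0 = 1 from rfl]
      push_cast at q1 ⊢
      field_simp
      linear_combination q1
    · rw [if_neg (by omega)]
      have h0 : intChoose 0 (c : ℤ) = 0 := by
        unfold intChoose
        rw [if_neg]
        rintro ⟨h1, h2⟩
        omega
      rw [h0]
      push_cast
      ring
  · -- a + b > t
    have hlt' : t - (a' + 1) < b' + 1 := by omega
    rw [cTuples_card_of_lt hlt']
    rw [intChoose_neg (by push_cast; omega) (c : ℤ)]
    push_cast
    ring
end

section
/- Suppose s ≥ 3 and r ≥ s+1. Then |ζ_1| + |ζ_2| < ((r−1)(s−1))^{1/2}. -/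
lemma key1 (r s : ℤ) (hs : 3 ≤ s) (hr : s + 1 ≤ r) :
    (r * s ^ 2 - s ^ 2 - 2 * r * s + r + 2) ^ 2
      < (r - 1) * (s - 1) * (r * s - r - s) ^ 2 := by
  obtain ⟨u, hu, rfl⟩ : ∃ u, 0 ≤ u ∧ s = u + 3 := ⟨s - 3, by omega, by omega⟩
  obtain ⟨t, ht, rfl⟩ : ∃ t, 0 ≤ t ∧ r = t + u + 4 := ⟨r - u - 4, by omega, by omega⟩
  nlinarith [ht, hu, mul_nonneg ht hu, mul_nonneg (mul_nonneg ht ht) ht,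
    mul_nonneg (mul_nonneg hu hu) hu, mul_nonneg ht ht, mul_nonneg hu hu,
    mul_nonneg (mul_nonneg ht ht) hu, mul_nonneg (mul_nonneg ht hu) hu]

lemma key2 (r s : ℤ) (hs : 3 ≤ s) (hr : s + 1 ≤ r) :
    4 * ((s - 1) * (s - 2) * (r - 1)) < (r - 1) * (s - 1) * (r * s - r - s) := by
  obtain ⟨u, hu, rfl⟩ : ∃ u, 0 ≤ u ∧ s = u + 3 := ⟨s - 3, by omega, by omega⟩
  obtain ⟨t, ht, rfl⟩ : ∃ t, 0 ≤ t ∧ r = t + u + 4 := ⟨r - u - 4, by omega, by omega⟩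
  nlinarith [ht, hu, mul_nonneg ht hu, mul_nonneg ht ht, mul_nonneg hu hu,
    mul_nonneg (mul_nonneg ht ht) hu, mul_nonneg (mul_nonneg ht hu) hu]

/-- If `s ≥ 3` and `r ≥ s+1`, and `ζ₁, ζ₂` are the two roots of the quadratic
`z² + ((rs²−s²−2rs+r+2)/(rs−r−s))z + (s−1)(s−2)(r−1)/(rs−r−s) = 0`,
then `|ζ₁| + |ζ₂| < ((r−1)(s−1))^{1/2}`. -/
theorem stmt_2 (r s : ℤ) (hs : 3 ≤ s) (hr : s + 1 ≤ r) (ζ1 ζ2 : ℂ)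
    (hsum : ζ1 + ζ2 =
      -(((r * s ^ 2 - s ^ 2 - 2 * r * s + r + 2 : ℤ) : ℂ) / ((r * s - r - s : ℤ) : ℂ)))
    (hprod : ζ1 * ζ2 =
      (((s - 1) * (s - 2) * (r - 1) : ℤ) : ℂ) / ((r * s - r - s : ℤ) : ℂ)) :
    ‖ζ1‖ + ‖ζ2‖ < Real.sqrt (((r - 1) * (s - 1) : ℤ) : ℝ) := by
  have hDz : (0 : ℤ) < r * s - r - s := by nlinarith
  have hD : (0 : ℝ) < ((r * s - r - s : ℤ) : ℝ) := by exact_mod_cast hDz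
  set Sv : ℝ := -(((r * s ^ 2 - s ^ 2 - 2 * r * s + r + 2 : ℤ) : ℝ) / ((r * s - r - s : ℤ) : ℝ))
    with hSv
  set Pv : ℝ := (((s - 1) * (s - 2) * (r - 1) : ℤ) : ℝ) / ((r * s - r - s : ℤ) : ℝ) with hPv
  have hPnum : (0 : ℤ) < (s - 1) * (s - 2) * (r - 1) := by nlinarith
  have hP : 0 < Pv := div_pos (by exact_mod_cast hPnum) hD
  have hsum' : ζ1 + ζ2 = (Sv : ℂ) := by rw [hsum, hSv]; push_cast; ring
  have hprod' : ζ1 * ζ2 = (Pv : ℂ) := by rw [hprod, hPv]; push_cast; ring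
  set x1 := ζ1.re; set y1 := ζ1.im; set x2 := ζ2.re; set y2 := ζ2.im
  have hre : x1 + x2 = Sv := by
    have := congrArg Complex.re hsum'; simpa using this
  have him : y1 + y2 = 0 := by
    have := congrArg Complex.im hsum'; simpa using this
  have hpre : x1 * x2 - y1 * y2 = Pv := by
    have := congrArg Complex.re hprod'; simpa [Complex.mul_re] using this
  have hpim : x1 * y2 + y1 * x2 = 0 := by
    have := congrArg Complex.im hprod'; simpa [Complex.mul_im] using this
  have hRS : (0 : ℝ) < (((r - 1) * (s - 1) : ℤ) : ℝ) := by
    have : (0 : ℤ) < (r - 1) * (s - 1) := by nlinarith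
    exact_mod_cast this
  by_cases hy : y1 = 0
  · -- real roots case
    have hy2 : y2 = 0 := by linarith [him, hy]
    have hz1 : ζ1 = (x1 : ℂ) := Complex.ext rfl (by simpa using hy)
    have hz2 : ζ2 = (x2 : ℂ) := Complex.ext rfl (by simpa using hy2)
    rw [hz1, hz2, Complex.norm_real, Complex.norm_real, Real.norm_eq_abs, Real.norm_eq_abs]
    have hx : 0 < x1 * x2 := by
      have : x1 * x2 = Pv := by rw [← hpre, hy, hy2]; ring
      rw [this]; exact hP
    have habs : |x1| + |x2| = |Sv| := by
      rcases mul_pos_iff.1 hx with ⟨h1, h2⟩ | ⟨h1, h2⟩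
      · rw [abs_of_pos h1, abs_of_pos h2, ← hre, abs_of_pos (by linarith)]
      · rw [abs_of_neg h1, abs_of_neg h2, ← hre, abs_of_neg (by linarith)]; ring
    rw [habs, show Real.sqrt (((r - 1) * (s - 1) : ℤ) : ℝ) = Real.sqrt (((r - 1) * (s - 1) : ℤ) : ℝ) from rfl]
    rw [show |Sv| = Real.sqrt (Sv ^ 2) by rw [Real.sqrt_sq_eq_abs]]
    apply Real.sqrt_lt_sqrt (by positivity)
    have hSv2 : Sv ^ 2 = ((r * s ^ 2 - s ^ 2 - 2 * r * s + r + 2 : ℤ) : ℝ) ^ 2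
        / ((r * s - r - s : ℤ) : ℝ) ^ 2 := by rw [hSv]; ring
    rw [hSv2, div_lt_iff₀ (by positivity)]
    exact_mod_cast key1 r s hs hr
  · -- conjugate pair case
    have hy2 : y2 = -y1 := by linarith
    have hx21 : x2 = x1 := by
      have h : y1 * (x2 - x1) = 0 := by rw [hy2] at hpim; linarith [hpim]
      rcases mul_eq_zero.1 h with h' | h'
      · exact absurd h' hy
      · linarith
    have h' : x1 * x1 + y1 * y1 = Pv := by rw [← hpre, hx21, hy2]; ring
    have hnsq : Complex.normSq ζ1 = Pv := by rw [Complex.normSq_apply]; exact h'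
    have hnsq2 : Complex.normSq ζ2 = Pv := by
      rw [Complex.normSq_apply]
      show x2 * x2 + y2 * y2 = Pv
      rw [hx21, hy2, ← h']; ring
    have ha1 : ‖ζ1‖ ^ 2 = Pv := by rw [Complex.sq_norm, hnsq]
    have ha2 : ‖ζ2‖ = ‖ζ1‖ := by
      rw [Complex.norm_def, Complex.norm_def, hnsq, hnsq2]
    rw [ha2]
    rw [show ‖ζ1‖ + ‖ζ1‖ = 2 * ‖ζ1‖ by ring]
    rw [show (2 : ℝ) * ‖ζ1‖ = Real.sqrt ((2 * ‖ζ1‖) ^ 2) by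
      rw [Real.sqrt_sq (by positivity)]]
    apply Real.sqrt_lt_sqrt (by positivity)
    have h4p : (2 * ‖ζ1‖) ^ 2 = 4 * Pv := by rw [mul_pow, ha1]; norm_num
    rw [h4p, hPv]
    have hkR : 4 * (((s - 1) * (s - 2) * (r - 1) : ℤ) : ℝ)
        < (((r - 1) * (s - 1) : ℤ) : ℝ) * ((r * s - r - s : ℤ) : ℝ) := by
      exact_mod_cast key2 r s hs hr
    rw [show 4 * ((((s - 1) * (s - 2) * (r - 1) : ℤ) : ℝ) / ((r * s - r - s : ℤ) : ℝ))
        = (4 * (((s - 1) * (s - 2) * (r - 1) : ℤ) : ℝ)) / ((r * s - r - s : ℤ) : ℝ) by ring,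
      div_lt_iff₀ hD]
    exact hkR
end

section
/- Suppose s ≥ 3 and r ≥ s+1. Then for every integer k ≥ 1, ((r−1)(s−1))^k + ζ_1^k + ζ_2^k − 1 > 0 (this quantity being real); equivalently, δ_k > −1 for all k ≥ 1, where δ_k = (ζ_1^k + ζ_2^k − 1)/((r−1)(s−1))^k. -/
/-- If `s ≥ 3` and `r ≥ s+1`, and `ζ₁, ζ₂` are the two roots of the quadratic
`z² + ((rs²−s²−2rs+r+2)/(rs−r−s))z + (s−1)(s−2)(r−1)/(rs−r−s) = 0`, then for every
integer `k ≥ 1` the quantity `((r−1)(s−1))^k + ζ₁^k + ζ₂^k − 1` is real and strictly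
positive; equivalently `δ_k > −1` where `δ_k = (ζ₁^k + ζ₂^k − 1)/((r−1)(s−1))^k`. -/
theorem stmt_3 (r s : ℤ) (hs : 3 ≤ s) (hr : s + 1 ≤ r) (ζ1 ζ2 : ℂ)
    (hsum : ζ1 + ζ2 =
      -(((r * s ^ 2 - s ^ 2 - 2 * r * s + r + 2 : ℤ) : ℂ) / ((r * s - r - s : ℤ) : ℂ)))
    (hprod : ζ1 * ζ2 =
      (((s - 1) * (s - 2) * (r - 1) : ℤ) : ℂ) / ((r * s - r - s : ℤ) : ℂ)) :
    ∀ k : ℕ, 1 ≤ k →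
      (ζ1 ^ k + ζ2 ^ k).im = 0 ∧
      0 < (((r - 1) * (s - 1) : ℤ) : ℝ) ^ k + (ζ1 ^ k + ζ2 ^ k).re - 1 := by
  have hdz : (5:ℤ) ≤ r * s - r - s := by nlinarith
  have hd : (0:ℝ) < ((r * s - r - s : ℤ) : ℝ) := by
    have : (0:ℤ) < r * s - r - s := by linarith
    exact_mod_cast this
  set B : ℝ := (s : ℝ) - 1 with hB
  set A : ℝ := (r : ℝ) - 1 with hA
  have hsR : (3:ℝ) ≤ (s:ℝ) := by exact_mod_cast hs
  have hrR : (s:ℝ) + 1 ≤ (r:ℝ) := by exact_mod_cast hr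
  have hB2 : (2:ℝ) ≤ B := by rw [hB]; linarith
  have hA3 : (3:ℝ) ≤ A := by rw [hA]; linarith
  set E1 : ℝ := -(((r * s ^ 2 - s ^ 2 - 2 * r * s + r + 2 : ℤ) : ℝ) /
      ((r * s - r - s : ℤ) : ℝ)) with hE1
  set E2 : ℝ := (((s - 1) * (s - 2) * (r - 1) : ℤ) : ℝ) / ((r * s - r - s : ℤ) : ℝ) with hE2
  have hsum' : ζ1 + ζ2 = (E1 : ℂ) := by rw [hsum, hE1]; push_cast; ring
  have hprod' : ζ1 * ζ2 = (E2 : ℂ) := by rw [hprod, hE2]; push_cast; ring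
  have hnum1 : (1:ℤ) ≤ r * s ^ 2 - s ^ 2 - 2 * r * s + r + 2 := by nlinarith
  have hnum1R : (1:ℝ) ≤ ((r * s ^ 2 - s ^ 2 - 2 * r * s + r + 2 : ℤ) : ℝ) := by
    exact_mod_cast hnum1
  have hE1neg : E1 < 0 := by
    rw [hE1]
    have := div_pos (by linarith : (0:ℝ) < ((r * s ^ 2 - s ^ 2 - 2 * r * s + r + 2 : ℤ) : ℝ)) hd
    linarith
  have hE1geB : -E1 ≤ B := by
    rw [hE1, hB, neg_neg, div_le_iff₀ hd]
    have h1 : (r * s ^ 2 - s ^ 2 - 2 * r * s + r + 2 : ℤ) ≤ (s - 1) * (r * s - r - s) := by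
      nlinarith
    exact_mod_cast h1
  have hE2pos : 0 < E2 := by
    rw [hE2]
    apply div_pos _ hd
    have h1 : (1:ℤ) ≤ (s - 1) * (s - 2) * (r - 1) := by nlinarith
    have : (1:ℝ) ≤ (((s - 1) * (s - 2) * (r - 1) : ℤ) : ℝ) := by exact_mod_cast h1
    linarith
  have hE2leB2 : E2 ≤ B ^ 2 := by
    rw [hE2, hB, div_le_iff₀ hd]
    have h1 : ((s - 1) * (s - 2) * (r - 1) : ℤ) ≤ (s - 1) ^ 2 * (r * s - r - s) := by
      nlinarith
    have h2 : ((((s - 1) * (s - 2) * (r - 1) : ℤ)) : ℝ) ≤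
        (((s - 1) ^ 2 * (r * s - r - s) : ℤ) : ℝ) := by exact_mod_cast h1
    push_cast at h2 ⊢
    nlinarith [h2]
  -- the quadratic satisfied by ζ1
  have hquad : ζ1 ^ 2 - (E1 : ℂ) * ζ1 + (E2 : ℂ) = 0 := by
    linear_combination ζ1 * hsum' - hprod'
  have hconj : (starRingEnd ℂ) ζ1 = ζ1 ∨ (starRingEnd ℂ) ζ1 = ζ2 := by
    have h := congrArg (starRingEnd ℂ) hquad
    simp only [map_add, map_sub, map_mul, map_pow, map_zero, Complex.conj_ofReal] at h
    have hc : ((starRingEnd ℂ) ζ1 - ζ1) * ((starRingEnd ℂ) ζ1 - ζ2) = 0 := by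
      linear_combination h - (starRingEnd ℂ) ζ1 * hsum' + hprod'
    rcases mul_eq_zero.mp hc with h' | h'
    · exact Or.inl (sub_eq_zero.mp h')
    · exact Or.inr (sub_eq_zero.mp h')
  intro k hk
  have hk0 : k ≠ 0 := by omega
  -- key bound on the power sum
  have key : (ζ1 ^ k + ζ2 ^ k).im = 0 ∧ -(2 * B ^ k) ≤ (ζ1 ^ k + ζ2 ^ k).re := by
    rcases hconj with h | h
    · -- both roots real
      have hx : ζ1 = ((ζ1.re : ℝ) : ℂ) := (Complex.conj_eq_iff_re.mp h).symm
      set x : ℝ := ζ1.re with hxdef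
      set y : ℝ := E1 - x with hydef
      have hy : ζ2 = ((y : ℝ) : ℂ) := by
        rw [hydef]; push_cast
        linear_combination hsum' - hx
      have hxy : x * y = E2 := by
        have h2 := hprod'
        rw [hx, hy] at h2
        exact_mod_cast h2
      have hx0 : x < 0 := by
        by_contra hc
        push_neg at hc
        have hy0 : y < 0 := by rw [hydef]; linarith
        nlinarith [mul_nonneg hc (le_of_lt (neg_pos.mpr hy0))]
      have hy0 : y < 0 := by
        by_contra hc
        push_neg at hc
        nlinarith [mul_nonneg (le_of_lt (neg_pos.mpr hx0)) hc]
      have hxabs : |x| ≤ B := by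
        rw [abs_le]
        refine ⟨by rw [hydef] at hy0; linarith, by linarith⟩
      have hyabs : |y| ≤ B := by
        rw [abs_le]
        refine ⟨by linarith, by linarith⟩
      have hxk : -B ^ k ≤ x ^ k := by
        have h1 : |x ^ k| ≤ B ^ k := by
          rw [abs_pow]; exact pow_le_pow_left₀ (abs_nonneg x) hxabs k
        linarith [neg_abs_le (x ^ k), (abs_le.mp h1).1]
      have hyk : -B ^ k ≤ y ^ k := by
        have h1 : |y ^ k| ≤ B ^ k := by
          rw [abs_pow]; exact pow_le_pow_left₀ (abs_nonneg y) hyabs k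
        linarith [neg_abs_le (y ^ k), (abs_le.mp h1).1]
      have hp : ζ1 ^ k + ζ2 ^ k = (((x ^ k + y ^ k : ℝ)) : ℂ) := by
        rw [hx, hy]; push_cast; ring
      rw [hp]
      constructor
      · simp [← Complex.ofReal_pow]
      · simp only [Complex.ofReal_re]
        linarith
    · -- complex conjugate roots
      have habs : ‖ζ1‖ ≤ B := by
        have h1 : ζ1 * (starRingEnd ℂ) ζ1 = (E2 : ℂ) := by rw [h]; exact hprod'
        rw [Complex.mul_conj] at h1
        have h2 : Complex.normSq ζ1 = E2 := by exact_mod_cast h1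
        have h3 : (‖ζ1‖) ^ 2 = E2 := by rw [Complex.sq_norm, h2]
        nlinarith [norm_nonneg ζ1]
      have hp : ζ1 ^ k + ζ2 ^ k = ζ1 ^ k + (starRingEnd ℂ) (ζ1 ^ k) := by
        rw [← h, ← map_pow]
      rw [hp]
      constructor
      · rw [Complex.add_im, Complex.conj_im]; ring
      · have h1 : ‖ζ1 ^ k‖ ≤ B ^ k := by
          rw [norm_pow]
          exact pow_le_pow_left₀ (norm_nonneg ζ1) habs k
        have h2 : -(B ^ k) ≤ (ζ1 ^ k).re := by
          have := Complex.abs_re_le_norm (ζ1 ^ k)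
          have h3 : |(ζ1 ^ k).re| ≤ B ^ k := le_trans this h1
          linarith [(abs_le.mp h3).1]
        simp only [Complex.add_re, Complex.conj_re]
        linarith
  refine ⟨key.1, ?_⟩
  have hM : (((r - 1) * (s - 1) : ℤ) : ℝ) = A * B := by rw [hA, hB]; push_cast; ring
  rw [hM, mul_pow]
  have hAk : (3:ℝ) ≤ A ^ k := le_trans hA3 (le_self_pow₀ (by linarith) hk0)
  have hBk : B ≤ B ^ k := le_self_pow₀ (by linarith) hk0
  have hBk0 : (0:ℝ) ≤ B ^ k := by positivity
  have hmul : 3 * B ^ k ≤ A ^ k * B ^ k := mul_le_mul_of_nonneg_right hAk hBk0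
  have := key.2
  linarith
end

section
/- Suppose s ≥ 3 and r ≥ s+1. Then the series ∑_{k≥1} λ_k·δ_k² converges, and ∑_{k=1}^∞ λ_k·δ_k² = ln( r·(rs−r−s) / ((r−2)·√(Q(r,s)) ) ). -/
open Complex

set_option maxHeartbeats 1000000 in
/-- Auxiliary: the analytic core with abstract real parameters. -/
lemma aux_hasSum (a σ P : ℝ) (ζ1 ζ2 : ℂ) (hσ : ζ1 + ζ2 = (σ : ℂ))
    (hP : ζ1 * ζ2 = (P : ℂ)) (ha : 1 < a) (hσneg : σ < 0) (hPpos : 0 < P)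
    (hσ2 : σ ^ 2 < a) (hPa : P < a) :
    HasSum (fun k : ℕ =>
        ((ζ1 ^ (k + 1) + ζ2 ^ (k + 1)).re - 1) ^ 2 / (2 * ((k : ℝ) + 1) * a ^ (k + 1)))
      (Real.log (1 - σ / a + P / a ^ 2) -
        (1 / 2) * Real.log ((1 - (σ ^ 2 - 2 * P) / a + P ^ 2 / a ^ 2) *
          (1 - P / a) ^ 2 * (1 - 1 / a))) := by
  have ha0 : (0 : ℝ) < a := lt_trans one_pos ha
  have haC : ((a : ℝ) : ℂ) ≠ 0 := by exact_mod_cast ha0.ne'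
  -- normSq bounds
  have hn : Complex.normSq ζ1 < a ∧ Complex.normSq ζ2 < a := by
    by_cases him : ζ1.im = 0
    · have him2 : ζ2.im = 0 := by
        have h := congrArg Complex.im hσ
        simp [Complex.add_im, him] at h
        exact h
      have hre1 : ζ1.re + ζ2.re = σ := by
        have h := congrArg Complex.re hσ; simpa using h
      have hre2 : ζ1.re * ζ2.re = P := by
        have h := congrArg Complex.re hP
        rw [Complex.mul_re, him, him2] at h
        simpa using h
      have hx1 : ζ1.re < 0 := by nlinarith
      have hx2 : ζ2.re < 0 := by nlinarith
      constructor
      · rw [Complex.normSq_apply, him]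
        nlinarith
      · rw [Complex.normSq_apply, him2]
        nlinarith
    · -- conjugate case
      have hq1 : ζ1 ^ 2 = (σ : ℂ) * ζ1 - (P : ℂ) := by
        linear_combination ζ1 * hσ - hP
      have him2 : (ζ1 ^ 2).im = σ * ζ1.im := by
        rw [hq1]
        simp [Complex.sub_im, Complex.mul_im]
      have hre1 : ζ1.re = σ / 2 := by
        rw [sq, Complex.mul_im] at him2
        have : (2 * ζ1.re) * ζ1.im = σ * ζ1.im := by ring_nf; ring_nf at him2; linarith
        have h2 := mul_right_cancel₀ him this
        linarith
      have hζ2 : ζ2 = (σ : ℂ) - ζ1 := by linear_combination hσ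
      have hPval : σ / 2 * (σ / 2) + ζ1.im * ζ1.im = P := by
        have h := congrArg Complex.re hP
        rw [Complex.mul_re, hζ2] at h
        simp [Complex.sub_re, Complex.sub_im, hre1] at h
        nlinarith [h]
      constructor
      · rw [Complex.normSq_apply, hre1]
        nlinarith
      · rw [Complex.normSq_apply, hζ2]
        simp [Complex.sub_re, Complex.sub_im, hre1]
        nlinarith
  obtain ⟨hn1, hn2⟩ := hn
  have habs1 : ‖ζ1‖ ^ 2 < a := by rwa [Complex.sq_norm]
  have habs2 : ‖ζ2‖ ^ 2 < a := by rwa [Complex.sq_norm]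
  have habs1' : ‖ζ1‖ < a := by nlinarith [norm_nonneg ζ1]
  have habs2' : ‖ζ2‖ < a := by nlinarith [norm_nonneg ζ2]
  -- the six norm bounds
  have hz1 : ‖ζ1 ^ 2 / ((a:ℝ):ℂ)‖ < 1 := by
    rw [norm_div, norm_pow, Complex.norm_real, Real.norm_eq_abs, abs_of_pos ha0,
      div_lt_one ha0]
    exact habs1
  have hz2 : ‖ζ2 ^ 2 / ((a:ℝ):ℂ)‖ < 1 := by
    rw [norm_div, norm_pow, Complex.norm_real, Real.norm_eq_abs, abs_of_pos ha0,
      div_lt_one ha0]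
    exact habs2
  have hz3 : ‖ζ1 * ζ2 / ((a:ℝ):ℂ)‖ < 1 := by
    rw [hP, ← Complex.ofReal_div, Complex.norm_real, Real.norm_eq_abs,
      abs_of_pos (div_pos hPpos ha0), div_lt_one ha0]
    exact hPa
  have hz4 : ‖ζ1 / ((a:ℝ):ℂ)‖ < 1 := by
    rw [norm_div, Complex.norm_real, Real.norm_eq_abs, abs_of_pos ha0, div_lt_one ha0]
    exact habs1'
  have hz5 : ‖ζ2 / ((a:ℝ):ℂ)‖ < 1 := by
    rw [norm_div, Complex.norm_real, Real.norm_eq_abs, abs_of_pos ha0, div_lt_one ha0]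
    exact habs2'
  have hz6 : ‖1 / ((a:ℝ):ℂ)‖ < 1 := by
    rw [norm_div, Complex.norm_real, Real.norm_eq_abs, abs_of_pos ha0, norm_one,
      div_lt_one ha0]
    exact ha
  have h1 := Complex.hasSum_taylorSeries_neg_log hz1
  have h2 := Complex.hasSum_taylorSeries_neg_log hz2
  have h3 := Complex.hasSum_taylorSeries_neg_log hz3
  have h4 := Complex.hasSum_taylorSeries_neg_log hz4
  have h5 := Complex.hasSum_taylorSeries_neg_log hz5
  have h6 := Complex.hasSum_taylorSeries_neg_log hz6
  have htot := ((((((h1.add h2).add (h3.mul_left ((2:ℝ):ℂ))).sub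
      (h4.mul_left ((2:ℝ):ℂ))).sub (h5.mul_left ((2:ℝ):ℂ))).add h6).mul_left ((1/2:ℝ):ℂ))
  have hshift := (hasSum_nat_add_iff' 1).mpr htot
  have hre := Complex.hasSum_re hshift
  -- imaginary parts of power sums vanish
  have himz : ∀ m : ℕ, (ζ1 ^ m + ζ2 ^ m).im = 0 := by
    have key : ∀ m : ℕ, (ζ1 ^ m + ζ2 ^ m).im = 0 ∧ (ζ1 ^ (m+1) + ζ2 ^ (m+1)).im = 0 := by
      intro m
      induction m with
      | zero =>
        refine ⟨by norm_num, ?_⟩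
        rw [zero_add, pow_one, pow_one, hσ]
        exact Complex.ofReal_im σ
      | succ n ih =>
        refine ⟨ih.2, ?_⟩
        have hrec : ζ1^(n+2) + ζ2^(n+2)
            = (σ:ℂ)*(ζ1^(n+1)+ζ2^(n+1)) - (P:ℂ)*(ζ1^n+ζ2^n) := by
          linear_combination (ζ1^(n+1)+ζ2^(n+1))*hσ - (ζ1^n+ζ2^n)*hP
        rw [hrec, Complex.sub_im, Complex.im_ofReal_mul, Complex.im_ofReal_mul,
          ih.1, ih.2]
        ring
    exact fun m => (key m).1
  -- positivity of the four real quantities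
  have hAr : (0:ℝ) < 1 - σ/a + P/a^2 := by
    have h1 : σ/a < 0 := div_neg_of_neg_of_pos hσneg ha0
    have h2 : 0 < P/a^2 := by positivity
    linarith
  have hCr : (0:ℝ) < 1 - P/a := by
    rw [sub_pos, div_lt_one ha0]; exact hPa
  have hDr : (0:ℝ) < 1 - 1/a := by
    rw [sub_pos, div_lt_one ha0]; exact ha
  have hBr : (0:ℝ) < 1 - (σ^2-2*P)/a + P^2/a^2 := by
    have key : 1 - (σ^2-2*P)/a + P^2/a^2 = ((a+P)^2 - a*σ^2)/a^2 := by
      field_simp; ring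
    rw [key]
    apply div_pos _ (by positivity)
    nlinarith
  -- complex products are real
  have hBc : (1 - ζ1^2/((a:ℝ):ℂ))*(1 - ζ2^2/((a:ℝ):ℂ))
      = ((1 - (σ^2-2*P)/a + P^2/a^2 : ℝ) : ℂ) := by
    push_cast
    linear_combination (-(ζ1+ζ2+(σ:ℂ))/((a:ℝ):ℂ)) * hσ
      + (2/((a:ℝ):ℂ) + (ζ1*ζ2+(P:ℂ))/((a:ℝ):ℂ)^2) * hP
  have hAc : (1 - ζ1/((a:ℝ):ℂ))*(1 - ζ2/((a:ℝ):ℂ))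
      = ((1 - σ/a + P/a^2 : ℝ) : ℂ) := by
    push_cast
    linear_combination (-1/((a:ℝ):ℂ)) * hσ + (1/((a:ℝ):ℂ)^2) * hP
  have hCc : 1 - ζ1*ζ2/((a:ℝ):ℂ) = ((1 - P/a : ℝ):ℂ) := by
    push_cast; rw [hP]
  have hDc : (1:ℂ) - 1/((a:ℝ):ℂ) = ((1 - 1/a :ℝ):ℂ) := by
    push_cast; ring
  -- nonvanishing
  have hne : ∀ z : ℂ, ‖z‖ < 1 → ‖(1 - z)‖ ≠ 0 := by
    intro z hz
    rw [ne_eq, norm_eq_zero, sub_eq_zero]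
    intro h
    rw [← h] at hz
    simp at hz
  convert hre using 1
  · funext n
    have hwim := himz (n+1)
    set c := (ζ1 ^ (n + 1) + ζ2 ^ (n + 1)).re with hc
    have hw : ζ1^(n+1) + ζ2^(n+1) = ((c : ℝ) : ℂ) :=
      Complex.ext (by rw [Complex.ofReal_re]) (by rw [Complex.ofReal_im]; exact hwim)
    have hm0 : (((n+1 : ℕ)) : ℂ) ≠ 0 := Nat.cast_ne_zero.mpr (Nat.succ_ne_zero n)
    have hAe : (((a:ℝ):ℂ))^(n+1) ≠ 0 := pow_ne_zero _ haC
    have p1 : ∀ z : ℂ, (z^2/((a:ℝ):ℂ))^(n+1) = (z^(n+1))^2/((a:ℝ):ℂ)^(n+1) := by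
      intro z
      rw [div_pow, ← pow_mul, ← pow_mul, mul_comm 2 (n+1)]
    have p2 : ∀ z : ℂ, (z/((a:ℝ):ℂ))^(n+1) = z^(n+1)/((a:ℝ):ℂ)^(n+1) := fun z =>
      div_pow z _ (n+1)
    have step : ((1/2:ℝ):ℂ) * ((ζ1^2/((a:ℝ):ℂ))^(n+1)/((n+1:ℕ):ℂ)
          + (ζ2^2/((a:ℝ):ℂ))^(n+1)/((n+1:ℕ):ℂ)
          + ((2:ℝ):ℂ)*((ζ1*ζ2/((a:ℝ):ℂ))^(n+1)/((n+1:ℕ):ℂ))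
          - ((2:ℝ):ℂ)*((ζ1/((a:ℝ):ℂ))^(n+1)/((n+1:ℕ):ℂ))
          - ((2:ℝ):ℂ)*((ζ2/((a:ℝ):ℂ))^(n+1)/((n+1:ℕ):ℂ))
          + (1/((a:ℝ):ℂ))^(n+1)/((n+1:ℕ):ℂ))
          = (ζ1^(n+1) + ζ2^(n+1) - 1)^2 / (2*((n+1:ℕ):ℂ)*(((a:ℝ):ℂ))^(n+1)) := by
      rw [p1 ζ1, p1 ζ2, p2 (ζ1*ζ2), p2 ζ1, p2 ζ2, p2 1, mul_pow, one_pow]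
      set X := (((a:ℝ):ℂ))^(n+1) with hXdef
      set M := ((n+1:ℕ):ℂ) with hMdef
      field_simp
      push_cast; ring
    rw [step, hw]
    have cast2 : ((((c:ℝ)):ℂ) - 1)^2 / (2*((n+1:ℕ):ℂ)*(((a:ℝ):ℂ))^(n+1))
        = (((c - 1)^2/(2*((n:ℝ)+1)*a^(n+1)) : ℝ) : ℂ) := by
      push_cast
      ring
    rw [cast2, Complex.ofReal_re]
  · -- value equality
    rw [Finset.range_one, Finset.sum_singleton]
    have hf0 : ((1/2:ℝ):ℂ) * ((ζ1^2/((a:ℝ):ℂ))^(0:ℕ)/((0:ℕ):ℂ)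
          + (ζ2^2/((a:ℝ):ℂ))^(0:ℕ)/((0:ℕ):ℂ)
          + ((2:ℝ):ℂ)*((ζ1*ζ2/((a:ℝ):ℂ))^(0:ℕ)/((0:ℕ):ℂ))
          - ((2:ℝ):ℂ)*((ζ1/((a:ℝ):ℂ))^(0:ℕ)/((0:ℕ):ℂ))
          - ((2:ℝ):ℂ)*((ζ2/((a:ℝ):ℂ))^(0:ℕ)/((0:ℕ):ℂ))
          + (1/((a:ℝ):ℂ))^(0:ℕ)/((0:ℕ):ℂ)) = 0 := by
      norm_num
    rw [hf0, sub_zero]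
    simp only [Complex.re_ofReal_mul, Complex.add_re, Complex.sub_re, Complex.neg_re,
      Complex.log_re]
    have e12 : Real.log ‖(1 - ζ1^2/((a:ℝ):ℂ))‖
        + Real.log ‖(1 - ζ2^2/((a:ℝ):ℂ))‖
        = Real.log (1 - (σ^2-2*P)/a + P^2/a^2) := by
      rw [← Real.log_mul (hne _ hz1) (hne _ hz2), ← norm_mul, hBc, Complex.norm_real, Real.norm_eq_abs,
        abs_of_pos hBr]
    have e45 : Real.log ‖(1 - ζ1/((a:ℝ):ℂ))‖
        + Real.log ‖(1 - ζ2/((a:ℝ):ℂ))‖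
        = Real.log (1 - σ/a + P/a^2) := by
      rw [← Real.log_mul (hne _ hz4) (hne _ hz5), ← norm_mul, hAc, Complex.norm_real, Real.norm_eq_abs,
        abs_of_pos hAr]
    have e3 : Real.log ‖(1 - ζ1*ζ2/((a:ℝ):ℂ))‖ = Real.log (1 - P/a) := by
      rw [hCc, Complex.norm_real, Real.norm_eq_abs, abs_of_pos hCr]
    have e6 : Real.log ‖(1 - 1/((a:ℝ):ℂ))‖ = Real.log (1 - 1/a) := by
      rw [hDc, Complex.norm_real, Real.norm_eq_abs, abs_of_pos hDr]
    have expand : Real.log ((1 - (σ^2-2*P)/a + P^2/a^2) * (1 - P/a)^2 * (1 - 1/a))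
        = Real.log (1 - (σ^2-2*P)/a + P^2/a^2) + 2*Real.log (1 - P/a)
          + Real.log (1 - 1/a) := by
      rw [Real.log_mul (by positivity) hDr.ne', Real.log_mul hBr.ne' (by positivity),
        Real.log_pow]
      push_cast; ring
    rw [expand]
    linarith [e12, e45, e3, e6]

set_option maxHeartbeats 2000000 in
/-- If `s ≥ 3` and `r ≥ s+1`, and `ζ₁, ζ₂` are the two roots of the quadratic
`z² + ((rs²−s²−2rs+r+2)/(rs−r−s))z + (s−1)(s−2)(r−1)/(rs−r−s) = 0`, then with
`λ_k = ((r−1)(s−1))^k/(2k)` and `δ_k = (ζ₁^k + ζ₂^k − 1)/((r−1)(s−1))^k` (a real number),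
the series `∑_{k≥1} λ_k δ_k²` converges, with sum
`ln( r(rs−r−s) / ((r−2)√(Q(r,s))) )` where
`Q(r,s) = r²s² − rs³ − 2r²s + 3rs² + s³ + r² − 6rs + 4r − 4s + 4`. -/
theorem stmt_5 (r s : ℤ) (hs : 3 ≤ s) (hr : s + 1 ≤ r) (ζ1 ζ2 : ℂ)
    (hsum : ζ1 + ζ2 =
      -(((r * s ^ 2 - s ^ 2 - 2 * r * s + r + 2 : ℤ) : ℂ) / ((r * s - r - s : ℤ) : ℂ)))
    (hprod : ζ1 * ζ2 =
      (((s - 1) * (s - 2) * (r - 1) : ℤ) : ℂ) / ((r * s - r - s : ℤ) : ℂ)) :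
    HasSum
      (fun k : ℕ =>
        ((((r - 1) * (s - 1) : ℤ) : ℝ) ^ (k + 1) / (2 * ((k : ℝ) + 1))) *
          (((ζ1 ^ (k + 1) + ζ2 ^ (k + 1)).re - 1) /
            (((r - 1) * (s - 1) : ℤ) : ℝ) ^ (k + 1)) ^ 2)
      (Real.log (((r : ℝ) * ((r * s - r - s : ℤ) : ℝ)) /
        (((r : ℝ) - 2) *
          Real.sqrt ((r ^ 2 * s ^ 2 - r * s ^ 3 - 2 * r ^ 2 * s + 3 * r * s ^ 2 + s ^ 3
              + r ^ 2 - 6 * r * s + 4 * r - 4 * s + 4 : ℤ) : ℝ)))) := by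
  obtain ⟨t, rfl⟩ : ∃ t : ℕ, s = (t : ℤ) + 3 := ⟨(s - 3).toNat, by omega⟩
  obtain ⟨u, rfl⟩ : ∃ u : ℕ, r = (u : ℤ) + t + 4 := ⟨(r - t - 4).toNat, by omega⟩
  have hmpos : (0:ℝ) < ((u:ℝ)*(t:ℝ) + 2*(u:ℝ) + (t:ℝ)^2 + 5*(t:ℝ) + 5) := by positivity
  have hNpos : (0:ℝ) < ((u:ℝ)*(t:ℝ)^2 + 4*(u:ℝ)*(t:ℝ) + 4*(u:ℝ) + (t:ℝ)^3 + 7*(t:ℝ)^2 + 14*(t:ℝ) + 9) := by positivity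
  have hapos : (0:ℝ) < (((u:ℝ)*(t:ℝ) + 2*(u:ℝ) + (t:ℝ)^2 + 5*(t:ℝ) + 5) + 1) := by positivity
  have ha1 : (1:ℝ) < (((u:ℝ)*(t:ℝ) + 2*(u:ℝ) + (t:ℝ)^2 + 5*(t:ℝ) + 5) + 1) := by nlinarith [hmpos]
  have hσ : ζ1 + ζ2 = (((-(((u:ℝ)*(t:ℝ)^2 + 4*(u:ℝ)*(t:ℝ) + 4*(u:ℝ) + (t:ℝ)^3 + 7*(t:ℝ)^2 + 14*(t:ℝ) + 9)/((u:ℝ)*(t:ℝ) + 2*(u:ℝ) + (t:ℝ)^2 + 5*(t:ℝ) + 5))) : ℝ) : ℂ) := by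
    rw [hsum]; push_cast; ring
  have hP : ζ1 * ζ2 = (((((t:ℝ)+2)*((t:ℝ)+1)*((u:ℝ)+(t:ℝ)+3)/((u:ℝ)*(t:ℝ) + 2*(u:ℝ) + (t:ℝ)^2 + 5*(t:ℝ) + 5)) : ℝ) : ℂ) := by
    rw [hprod]; push_cast; ring
  have hσneg : (-(((u:ℝ)*(t:ℝ)^2 + 4*(u:ℝ)*(t:ℝ) + 4*(u:ℝ) + (t:ℝ)^3 + 7*(t:ℝ)^2 + 14*(t:ℝ) + 9)/((u:ℝ)*(t:ℝ) + 2*(u:ℝ) + (t:ℝ)^2 + 5*(t:ℝ) + 5))) < 0 := neg_neg_iff_pos.mpr (div_pos hNpos hmpos)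
  have hPpos : (0:ℝ) < (((t:ℝ)+2)*((t:ℝ)+1)*((u:ℝ)+(t:ℝ)+3)/((u:ℝ)*(t:ℝ) + 2*(u:ℝ) + (t:ℝ)^2 + 5*(t:ℝ) + 5)) := by positivity
  have hGpos : (0:ℝ) < (69 + 173*(t:ℝ) + 163*(t:ℝ)^2 + 71*(t:ℝ)^3 + 14*(t:ℝ)^4 + (t:ℝ)^5 + 98*(u:ℝ) + 221*(u:ℝ)*(t:ℝ) + 188*(u:ℝ)*(t:ℝ)^2 + 75*(u:ℝ)*(t:ℝ)^3 + 14*(u:ℝ)*(t:ℝ)^4 + (u:ℝ)*(t:ℝ)^5 + 48*(u:ℝ)^2 + 92*(u:ℝ)^2*(t:ℝ) + 64*(u:ℝ)^2*(t:ℝ)^2 + 19*(u:ℝ)^2*(t:ℝ)^3 + 2*(u:ℝ)^2*(t:ℝ)^4 + 8*(u:ℝ)^3 + 12*(u:ℝ)^3*(t:ℝ) + 6*(u:ℝ)^3*(t:ℝ)^2 + (u:ℝ)^3*(t:ℝ)^3) := by positivity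
  have hσ2 : ((-(((u:ℝ)*(t:ℝ)^2 + 4*(u:ℝ)*(t:ℝ) + 4*(u:ℝ) + (t:ℝ)^3 + 7*(t:ℝ)^2 + 14*(t:ℝ) + 9)/((u:ℝ)*(t:ℝ) + 2*(u:ℝ) + (t:ℝ)^2 + 5*(t:ℝ) + 5))))^2 < (((u:ℝ)*(t:ℝ) + 2*(u:ℝ) + (t:ℝ)^2 + 5*(t:ℝ) + 5) + 1) := by
    rw [neg_pow, div_pow]
    have key : (((u:ℝ)*(t:ℝ) + 2*(u:ℝ) + (t:ℝ)^2 + 5*(t:ℝ) + 5) + 1) * (((u:ℝ)*(t:ℝ) + 2*(u:ℝ) + (t:ℝ)^2 + 5*(t:ℝ) + 5))^2 - (((u:ℝ)*(t:ℝ)^2 + 4*(u:ℝ)*(t:ℝ) + 4*(u:ℝ) + (t:ℝ)^3 + 7*(t:ℝ)^2 + 14*(t:ℝ) + 9))^2 = (69 + 173*(t:ℝ) + 163*(t:ℝ)^2 + 71*(t:ℝ)^3 + 14*(t:ℝ)^4 + (t:ℝ)^5 + 98*(u:ℝ) + 221*(u:ℝ)*(t:ℝ) + 188*(u:ℝ)*(t:ℝ)^2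 + 75*(u:ℝ)*(t:ℝ)^3 + 14*(u:ℝ)*(t:ℝ)^4 + (u:ℝ)*(t:ℝ)^5 + 48*(u:ℝ)^2 + 92*(u:ℝ)^2*(t:ℝ) + 64*(u:ℝ)^2*(t:ℝ)^2 + 19*(u:ℝ)^2*(t:ℝ)^3 + 2*(u:ℝ)^2*(t:ℝ)^4 + 8*(u:ℝ)^3 + 12*(u:ℝ)^3*(t:ℝ) + 6*(u:ℝ)^3*(t:ℝ)^2 + (u:ℝ)^3*(t:ℝ)^3) := by ring
    have h2 : (((u:ℝ)*(t:ℝ)^2 + 4*(u:ℝ)*(t:ℝ) + 4*(u:ℝ) + (t:ℝ)^3 + 7*(t:ℝ)^2 + 14*(t:ℝ) + 9))^2 < (((u:ℝ)*(t:ℝ) + 2*(u:ℝ) + (t:ℝ)^2 + 5*(t:ℝ) + 5) + 1) * (((u:ℝ)*(t:ℝ) + 2*(u:ℝ) + (t:ℝ)^2 + 5*(t:ℝ) + 5))^2 := by nlinarith [hGpos, key]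
    calc (-1)^2 * (((u:ℝ)*(t:ℝ)^2 + 4*(u:ℝ)*(t:ℝ) + 4*(u:ℝ) + (t:ℝ)^3 + 7*(t:ℝ)^2 + 14*(t:ℝ) + 9)^2/((u:ℝ)*(t:ℝ) + 2*(u:ℝ) + (t:ℝ)^2 + 5*(t:ℝ) + 5)^2) = ((u:ℝ)*(t:ℝ)^2 + 4*(u:ℝ)*(t:ℝ) + 4*(u:ℝ) + (t:ℝ)^3 + 7*(t:ℝ)^2 + 14*(t:ℝ) + 9)^2/((u:ℝ)*(t:ℝ) + 2*(u:ℝ) + (t:ℝ)^2 + 5*(t:ℝ) + 5)^2 := by ring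
    _ < (((u:ℝ)*(t:ℝ) + 2*(u:ℝ) + (t:ℝ)^2 + 5*(t:ℝ) + 5) + 1) := by rw [div_lt_iff₀ (by positivity)]; linarith [h2]
  have hPa : (((t:ℝ)+2)*((t:ℝ)+1)*((u:ℝ)+(t:ℝ)+3)/((u:ℝ)*(t:ℝ) + 2*(u:ℝ) + (t:ℝ)^2 + 5*(t:ℝ) + 5)) < (((u:ℝ)*(t:ℝ) + 2*(u:ℝ) + (t:ℝ)^2 + 5*(t:ℝ) + 5) + 1) := by
    rw [div_lt_iff₀ hmpos]
    have key : (((u:ℝ)*(t:ℝ) + 2*(u:ℝ) + (t:ℝ)^2 + 5*(t:ℝ) + 5) + 1) * ((u:ℝ)*(t:ℝ) + 2*(u:ℝ) + (t:ℝ)^2 + 5*(t:ℝ) + 5) - ((t:ℝ)+2)*((t:ℝ)+1)*((u:ℝ)+(t:ℝ)+3)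
        = ((t:ℝ)+2)^2*((u:ℝ)+(t:ℝ)+3)*((u:ℝ)+(t:ℝ)+2) := by ring
    nlinarith [key, sq_nonneg ((t:ℝ)+2), mul_pos (mul_pos (by positivity : (0:ℝ) < ((t:ℝ)+2)^2) (by positivity : (0:ℝ) < (u:ℝ)+(t:ℝ)+3)) (by positivity : (0:ℝ) < (u:ℝ)+(t:ℝ)+2)]
  have H := aux_hasSum (((u:ℝ)*(t:ℝ) + 2*(u:ℝ) + (t:ℝ)^2 + 5*(t:ℝ) + 5) + 1) (-(((u:ℝ)*(t:ℝ)^2 + 4*(u:ℝ)*(t:ℝ) + 4*(u:ℝ) + (t:ℝ)^3 + 7*(t:ℝ)^2 + 14*(t:ℝ) + 9)/((u:ℝ)*(t:ℝ) + 2*(u:ℝ) + (t:ℝ)^2 + 5*(t:ℝ) + 5))) (((t:ℝ)+2)*((t:ℝ)+1)*((u:ℝ)+(t:ℝ)+3)/((u:ℝ)*(t:ℝ) + 2*(u:ℝ) + (t:ℝ)^2 + 5*(t:ℝ) + 5)) ζ1 ζ2 hσ hP ha1 hσneg hPpos hσ2 hPa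
  convert H using 1
  · funext k
    have hcast : ((((u:ℤ)+(t:ℤ)+4-1)*((t:ℤ)+3-1) : ℤ) : ℝ) = (((u:ℝ)*(t:ℝ) + 2*(u:ℝ) + (t:ℝ)^2 + 5*(t:ℝ) + 5) + 1) := by
      push_cast; ring
    rw [hcast]
    set Xp := ((((u:ℝ)*(t:ℝ) + 2*(u:ℝ) + (t:ℝ)^2 + 5*(t:ℝ) + 5) + 1))^(k+1) with hXp
    have h1 : Xp ≠ 0 := by rw [hXp]; positivity
    have h2 : ((k:ℝ)+1) ≠ 0 := by positivity
    field_simp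
  · -- value equality
    have hrcast : (((u:ℤ)+(t:ℤ)+4 : ℤ) : ℝ) = ((u:ℝ)+(t:ℝ)+4) := by push_cast; ring
    have hmcast : ((((u:ℤ)+(t:ℤ)+4)*((t:ℤ)+3) - ((u:ℤ)+(t:ℤ)+4) - ((t:ℤ)+3) : ℤ) : ℝ) = ((u:ℝ)*(t:ℝ) + 2*(u:ℝ) + (t:ℝ)^2 + 5*(t:ℝ) + 5) := by
      push_cast; ring
    have hQcast : ((((u:ℤ)+(t:ℤ)+4)^2*((t:ℤ)+3)^2 - ((u:ℤ)+(t:ℤ)+4)*((t:ℤ)+3)^3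
        - 2*((u:ℤ)+(t:ℤ)+4)^2*((t:ℤ)+3) + 3*((u:ℤ)+(t:ℤ)+4)*((t:ℤ)+3)^2 + ((t:ℤ)+3)^3
        + ((u:ℤ)+(t:ℤ)+4)^2 - 6*((u:ℤ)+(t:ℤ)+4)*((t:ℤ)+3) + 4*((u:ℤ)+(t:ℤ)+4)
        - 4*((t:ℤ)+3) + 4 : ℤ) : ℝ) = (27 + 45*(t:ℝ) + 22*(t:ℝ)^2 + 3*(t:ℝ)^3 + 18*(u:ℝ) + 25*(u:ℝ)*(t:ℝ) + 10*(u:ℝ)*(t:ℝ)^2 + (u:ℝ)*(t:ℝ)^3 + 4*(u:ℝ)^2 + 4*(u:ℝ)^2*(t:ℝ) + (u:ℝ)^2*(t:ℝ)^2) := by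
      push_cast; ring
    rw [hrcast, hmcast, hQcast]
    have hQpos : (0:ℝ) < (27 + 45*(t:ℝ) + 22*(t:ℝ)^2 + 3*(t:ℝ)^3 + 18*(u:ℝ) + 25*(u:ℝ)*(t:ℝ) + 10*(u:ℝ)*(t:ℝ)^2 + (u:ℝ)*(t:ℝ)^3 + 4*(u:ℝ)^2 + 4*(u:ℝ)^2*(t:ℝ) + (u:ℝ)^2*(t:ℝ)^2) := by positivity
    have hsq : (0:ℝ) < Real.sqrt (27 + 45*(t:ℝ) + 22*(t:ℝ)^2 + 3*(t:ℝ)^3 + 18*(u:ℝ) + 25*(u:ℝ)*(t:ℝ) + 10*(u:ℝ)*(t:ℝ)^2 + (u:ℝ)*(t:ℝ)^3 + 4*(u:ℝ)^2 + 4*(u:ℝ)^2*(t:ℝ) + (u:ℝ)^2*(t:ℝ)^2) := Real.sqrt_pos.mpr hQpos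
    have hrr2 : (0:ℝ) < ((u:ℝ)+(t:ℝ)+4) - 2 := by
      nlinarith [Nat.cast_nonneg (α := ℝ) u, Nat.cast_nonneg (α := ℝ) t]
    have hAe : (1 - (-(((u:ℝ)*(t:ℝ)^2 + 4*(u:ℝ)*(t:ℝ) + 4*(u:ℝ) + (t:ℝ)^3 + 7*(t:ℝ)^2 + 14*(t:ℝ) + 9)/((u:ℝ)*(t:ℝ) + 2*(u:ℝ) + (t:ℝ)^2 + 5*(t:ℝ) + 5)))/(((u:ℝ)*(t:ℝ) + 2*(u:ℝ) + (t:ℝ)^2 + 5*(t:ℝ) + 5) + 1) + (((t:ℝ)+2)*((t:ℝ)+1)*((u:ℝ)+(t:ℝ)+3)/((u:ℝ)*(t:ℝ) + 2*(u:ℝ) + (t:ℝ)^2 + 5*(t:ℝ) + 5))/(((u:ℝ)*(t:ℝ) + 2*(u:ℝ) + (t:ℝ)^2 + 5*(t:ℝ) + 5) + 1)^2) = (((u:ℝ)*(t:ℝ) + 2*(u:ℝ) + (t:ℝ)^2 + 5*(t:ℝ) + 5)*(((u:ℝ)*(t:ℝ) + 2*(u:ℝ) + (t:ℝ)^2 +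 5*(t:ℝ) + 5) + 1) + ((u:ℝ)*(t:ℝ)^2 + 4*(u:ℝ)*(t:ℝ) + 4*(u:ℝ) + (t:ℝ)^3 + 7*(t:ℝ)^2 + 14*(t:ℝ) + 9) + ((t:ℝ)+1))/(((u:ℝ)*(t:ℝ) + 2*(u:ℝ) + (t:ℝ)^2 + 5*(t:ℝ) + 5)*(((u:ℝ)*(t:ℝ) + 2*(u:ℝ) + (t:ℝ)^2 + 5*(t:ℝ) + 5) + 1)) := by
      field_simp
      ring
    have hBe : (1 - ((-(((u:ℝ)*(t:ℝ)^2 + 4*(u:ℝ)*(t:ℝ) + 4*(u:ℝ) + (t:ℝ)^3 + 7*(t:ℝ)^2 + 14*(t:ℝ) + 9)/((u:ℝ)*(t:ℝ) + 2*(u:ℝ) + (t:ℝ)^2 + 5*(t:ℝ) + 5)))^2 - 2*(((t:ℝ)+2)*((t:ℝ)+1)*((u:ℝ)+(t:ℝ)+3)/((u:ℝ)*(t:ℝ) + 2*(u:ℝ) + (t:ℝ)^2 + 5*(t:ℝ) + 5)))/(((u:ℝ)*(t:ℝ) + 2*(u:ℝ) + (t:ℝ)^2 + 5*(t:ℝ)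 + 5) + 1) + (((t:ℝ)+2)*((t:ℝ)+1)*((u:ℝ)+(t:ℝ)+3)/((u:ℝ)*(t:ℝ) + 2*(u:ℝ) + (t:ℝ)^2 + 5*(t:ℝ) + 5))^2/(((u:ℝ)*(t:ℝ) + 2*(u:ℝ) + (t:ℝ)^2 + 5*(t:ℝ) + 5) + 1)^2) = ((((u:ℝ)*(t:ℝ) + 2*(u:ℝ) + (t:ℝ)^2 + 5*(t:ℝ) + 5)+1)*(((u:ℝ)*(t:ℝ) + 2*(u:ℝ) + (t:ℝ)^2 + 5*(t:ℝ) + 5)+(t:ℝ)+1)^2 - ((u:ℝ)*(t:ℝ)^2 + 4*(u:ℝ)*(t:ℝ) + 4*(u:ℝ) + (t:ℝ)^3 + 7*(t:ℝ)^2 + 14*(t:ℝ) + 9)^2)/(((u:ℝ)*(t:ℝ) + 2*(u:ℝ) + (t:ℝ)^2 + 5*(t:ℝ) + 5)^2*(((u:ℝ)*(t:ℝ) + 2*(u:ℝ) + (t:ℝ)^2 + 5*(t:ℝ) + 5) + 1)) := by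
      field_simp
      ring
    have hCe : (1 - (((t:ℝ)+2)*((t:ℝ)+1)*((u:ℝ)+(t:ℝ)+3)/((u:ℝ)*(t:ℝ) + 2*(u:ℝ) + (t:ℝ)^2 + 5*(t:ℝ) + 5))/(((u:ℝ)*(t:ℝ) + 2*(u:ℝ) + (t:ℝ)^2 + 5*(t:ℝ) + 5) + 1)) = (((u:ℝ)+(t:ℝ)+2)*((t:ℝ)+2))/((u:ℝ)*(t:ℝ) + 2*(u:ℝ) + (t:ℝ)^2 + 5*(t:ℝ) + 5) := by
      field_simp
      ring
    have hDe : (1 - 1/(((u:ℝ)*(t:ℝ) + 2*(u:ℝ) + (t:ℝ)^2 + 5*(t:ℝ) + 5) + 1)) = ((u:ℝ)*(t:ℝ) + 2*(u:ℝ) + (t:ℝ)^2 + 5*(t:ℝ) + 5)/(((u:ℝ)*(t:ℝ) + 2*(u:ℝ) + (t:ℝ)^2 + 5*(t:ℝ) + 5) + 1) := by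
      field_simp
      ring
    have hBnum : (0:ℝ) < ((((u:ℝ)*(t:ℝ) + 2*(u:ℝ) + (t:ℝ)^2 + 5*(t:ℝ) + 5)+1)*(((u:ℝ)*(t:ℝ) + 2*(u:ℝ) + (t:ℝ)^2 + 5*(t:ℝ) + 5)+(t:ℝ)+1)^2 - ((u:ℝ)*(t:ℝ)^2 + 4*(u:ℝ)*(t:ℝ) + 4*(u:ℝ) + (t:ℝ)^3 + 7*(t:ℝ)^2 + 14*(t:ℝ) + 9)^2) := by
      have e : ((((u:ℝ)*(t:ℝ) + 2*(u:ℝ) + (t:ℝ)^2 + 5*(t:ℝ) + 5)+1)*(((u:ℝ)*(t:ℝ) + 2*(u:ℝ) + (t:ℝ)^2 + 5*(t:ℝ) + 5)+(t:ℝ)+1)^2 - ((u:ℝ)*(t:ℝ)^2 + 4*(u:ℝ)*(t:ℝ) + 4*(u:ℝ) + (t:ℝ)^3 + 7*(t:ℝ)^2 + 14*(t:ℝ) + 9)^2) = (135 + 360*(t:ℝ) + 362*(t:ℝ)^2 + 170*(t:ℝ)^3 + 37*(t:ℝ)^4 + 3*(t:ℝ)^5 + 144*(u:ℝ) + 332*(u:ℝ)*(t:ℝ)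 + 282*(u:ℝ)*(t:ℝ)^2 + 108*(u:ℝ)*(t:ℝ)^3 + 18*(u:ℝ)*(t:ℝ)^4 + (u:ℝ)*(t:ℝ)^5 + 56*(u:ℝ)^2 + 108*(u:ℝ)^2*(t:ℝ) + 74*(u:ℝ)^2*(t:ℝ)^2 + 21*(u:ℝ)^2*(t:ℝ)^3 + 2*(u:ℝ)^2*(t:ℝ)^4 + 8*(u:ℝ)^3 + 12*(u:ℝ)^3*(t:ℝ) + 6*(u:ℝ)^3*(t:ℝ)^2 + (u:ℝ)^3*(t:ℝ)^3) := by ring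
      rw [e]; positivity
    have hA' : (0:ℝ) < (1 - (-(((u:ℝ)*(t:ℝ)^2 + 4*(u:ℝ)*(t:ℝ) + 4*(u:ℝ) + (t:ℝ)^3 + 7*(t:ℝ)^2 + 14*(t:ℝ) + 9)/((u:ℝ)*(t:ℝ) + 2*(u:ℝ) + (t:ℝ)^2 + 5*(t:ℝ) + 5)))/(((u:ℝ)*(t:ℝ) + 2*(u:ℝ) + (t:ℝ)^2 + 5*(t:ℝ) + 5) + 1) + (((t:ℝ)+2)*((t:ℝ)+1)*((u:ℝ)+(t:ℝ)+3)/((u:ℝ)*(t:ℝ) + 2*(u:ℝ) + (t:ℝ)^2 + 5*(t:ℝ) + 5))/(((u:ℝ)*(t:ℝ) + 2*(u:ℝ) + (t:ℝ)^2 + 5*(t:ℝ) + 5) + 1)^2) := by rw [hAe]; positivity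
    have hB' : (0:ℝ) < (1 - ((-(((u:ℝ)*(t:ℝ)^2 + 4*(u:ℝ)*(t:ℝ) + 4*(u:ℝ) + (t:ℝ)^3 + 7*(t:ℝ)^2 + 14*(t:ℝ) + 9)/((u:ℝ)*(t:ℝ) + 2*(u:ℝ) + (t:ℝ)^2 + 5*(t:ℝ) + 5)))^2 - 2*(((t:ℝ)+2)*((t:ℝ)+1)*((u:ℝ)+(t:ℝ)+3)/((u:ℝ)*(t:ℝ) + 2*(u:ℝ) + (t:ℝ)^2 + 5*(t:ℝ) + 5)))/(((u:ℝ)*(t:ℝ) + 2*(u:ℝ) + (t:ℝ)^2 + 5*(t:ℝ) + 5) + 1) + (((t:ℝ)+2)*((t:ℝ)+1)*((u:ℝ)+(t:ℝ)+3)/((u:ℝ)*(t:ℝ) + 2*(u:ℝ) + (t:ℝ)^2 + 5*(t:ℝ) + 5))^2/(((u:ℝ)*(t:ℝ) + 2*(u:ℝ) + (t:ℝ)^2 + 5*(t:ℝ) + 5) + 1)^2) := by rw [hBe]; exact div_pos hBnum (by positivity)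
    have hC' : (0:ℝ) < (1 - (((t:ℝ)+2)*((t:ℝ)+1)*((u:ℝ)+(t:ℝ)+3)/((u:ℝ)*(t:ℝ) + 2*(u:ℝ) + (t:ℝ)^2 + 5*(t:ℝ) + 5))/(((u:ℝ)*(t:ℝ) + 2*(u:ℝ) + (t:ℝ)^2 + 5*(t:ℝ) + 5) + 1)) := by rw [hCe]; positivity
    have hD' : (0:ℝ) < (1 - 1/(((u:ℝ)*(t:ℝ) + 2*(u:ℝ) + (t:ℝ)^2 + 5*(t:ℝ) + 5) + 1)) := by rw [hDe]; positivity
    have hXpos : (0:ℝ) < ((((u:ℝ)+(t:ℝ)+4)*((u:ℝ)*(t:ℝ) + 2*(u:ℝ) + (t:ℝ)^2 + 5*(t:ℝ) + 5))/((((u:ℝ)+(t:ℝ)+4)-2)*Real.sqrt (27 + 45*(t:ℝ) + 22*(t:ℝ)^2 + 3*(t:ℝ)^3 + 18*(u:ℝ) + 25*(u:ℝ)*(t:ℝ) + 10*(u:ℝ)*(t:ℝ)^2 + (u:ℝ)*(t:ℝ)^3 + 4*(u:ℝ)^2 + 4*(u:ℝ)^2*(t:ℝ) + (u:ℝ)^2*(t:ℝ)^2)))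 := by positivity
    have h2T : 2 * Real.log ((((u:ℝ)+(t:ℝ)+4)*((u:ℝ)*(t:ℝ) + 2*(u:ℝ) + (t:ℝ)^2 + 5*(t:ℝ) + 5))/((((u:ℝ)+(t:ℝ)+4)-2)*Real.sqrt (27 + 45*(t:ℝ) + 22*(t:ℝ)^2 + 3*(t:ℝ)^3 + 18*(u:ℝ) + 25*(u:ℝ)*(t:ℝ) + 10*(u:ℝ)*(t:ℝ)^2 + (u:ℝ)*(t:ℝ)^3 + 4*(u:ℝ)^2 + 4*(u:ℝ)^2*(t:ℝ) + (u:ℝ)^2*(t:ℝ)^2))) = Real.log (((u:ℝ)+(t:ℝ)+4)^2*((u:ℝ)*(t:ℝ) + 2*(u:ℝ) + (t:ℝ)^2 + 5*(t:ℝ) + 5)^2/((((u:ℝ)+(t:ℝ)+4)-2)^2*(27 + 45*(t:ℝ) + 22*(t:ℝ)^2 + 3*(t:ℝ)^3 + 18*(u:ℝ) + 25*(u:ℝ)*(t:ℝ) + 10*(u:ℝ)*(t:ℝ)^2 + (u:ℝ)*(t:ℝ)^3 + 4*(u:ℝ)^2 + 4*(u:ℝ)^2*(t:ℝ) + (u:ℝ)^2*(t:ℝ)^2)))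 := by
      have hXsq : (((((u:ℝ)+(t:ℝ)+4)*((u:ℝ)*(t:ℝ) + 2*(u:ℝ) + (t:ℝ)^2 + 5*(t:ℝ) + 5))/((((u:ℝ)+(t:ℝ)+4)-2)*Real.sqrt (27 + 45*(t:ℝ) + 22*(t:ℝ)^2 + 3*(t:ℝ)^3 + 18*(u:ℝ) + 25*(u:ℝ)*(t:ℝ) + 10*(u:ℝ)*(t:ℝ)^2 + (u:ℝ)*(t:ℝ)^3 + 4*(u:ℝ)^2 + 4*(u:ℝ)^2*(t:ℝ) + (u:ℝ)^2*(t:ℝ)^2))))^2 = ((u:ℝ)+(t:ℝ)+4)^2*((u:ℝ)*(t:ℝ) + 2*(u:ℝ) + (t:ℝ)^2 + 5*(t:ℝ) + 5)^2/((((u:ℝ)+(t:ℝ)+4)-2)^2*(27 + 45*(t:ℝ) + 22*(t:ℝ)^2 + 3*(t:ℝ)^3 + 18*(u:ℝ) + 25*(u:ℝ)*(t:ℝ) + 10*(u:ℝ)*(t:ℝ)^2 + (u:ℝ)*(t:ℝ)^3 + 4*(u:ℝ)^2 + 4*(u:ℝ)^2*(t:ℝ) + (u:ℝ)^2*(t:ℝ)^2))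 := by
        rw [div_pow, mul_pow, mul_pow, Real.sq_sqrt hQpos.le]
      rw [← hXsq, Real.log_pow]
      norm_num
    have h2V : 2 * (Real.log (1 - (-(((u:ℝ)*(t:ℝ)^2 + 4*(u:ℝ)*(t:ℝ) + 4*(u:ℝ) + (t:ℝ)^3 + 7*(t:ℝ)^2 + 14*(t:ℝ) + 9)/((u:ℝ)*(t:ℝ) + 2*(u:ℝ) + (t:ℝ)^2 + 5*(t:ℝ) + 5)))/(((u:ℝ)*(t:ℝ) + 2*(u:ℝ) + (t:ℝ)^2 + 5*(t:ℝ) + 5) + 1) + (((t:ℝ)+2)*((t:ℝ)+1)*((u:ℝ)+(t:ℝ)+3)/((u:ℝ)*(t:ℝ) + 2*(u:ℝ) + (t:ℝ)^2 + 5*(t:ℝ) + 5))/(((u:ℝ)*(t:ℝ) + 2*(u:ℝ) + (t:ℝ)^2 + 5*(t:ℝ) + 5) + 1)^2) - 1/2 * Real.log ((1 - ((-(((u:ℝ)*(t:ℝ)^2 + 4*(u:ℝ)*(t:ℝ) + 4*(u:ℝ) + (t:ℝ)^3 + 7*(t:ℝ)^2 + 14*(t:ℝ) + 9)/((u:ℝ)*(t:ℝ)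 + 2*(u:ℝ) + (t:ℝ)^2 + 5*(t:ℝ) + 5)))^2 - 2*(((t:ℝ)+2)*((t:ℝ)+1)*((u:ℝ)+(t:ℝ)+3)/((u:ℝ)*(t:ℝ) + 2*(u:ℝ) + (t:ℝ)^2 + 5*(t:ℝ) + 5)))/(((u:ℝ)*(t:ℝ) + 2*(u:ℝ) + (t:ℝ)^2 + 5*(t:ℝ) + 5) + 1) + (((t:ℝ)+2)*((t:ℝ)+1)*((u:ℝ)+(t:ℝ)+3)/((u:ℝ)*(t:ℝ) + 2*(u:ℝ) + (t:ℝ)^2 + 5*(t:ℝ) + 5))^2/(((u:ℝ)*(t:ℝ) + 2*(u:ℝ) + (t:ℝ)^2 + 5*(t:ℝ) + 5) + 1)^2) * (1 - (((t:ℝ)+2)*((t:ℝ)+1)*((u:ℝ)+(t:ℝ)+3)/((u:ℝ)*(t:ℝ) + 2*(u:ℝ) + (t:ℝ)^2 + 5*(t:ℝ) + 5))/(((u:ℝ)*(t:ℝ) + 2*(u:ℝ) + (t:ℝ)^2 + 5*(t:ℝ) + 5) + 1))^2 * (1 - 1/(((u:ℝ)*(t:ℝ) + 2*(u:ℝ)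 + (t:ℝ)^2 + 5*(t:ℝ) + 5) + 1))))
        = Real.log (((1 - (-(((u:ℝ)*(t:ℝ)^2 + 4*(u:ℝ)*(t:ℝ) + 4*(u:ℝ) + (t:ℝ)^3 + 7*(t:ℝ)^2 + 14*(t:ℝ) + 9)/((u:ℝ)*(t:ℝ) + 2*(u:ℝ) + (t:ℝ)^2 + 5*(t:ℝ) + 5)))/(((u:ℝ)*(t:ℝ) + 2*(u:ℝ) + (t:ℝ)^2 + 5*(t:ℝ) + 5) + 1) + (((t:ℝ)+2)*((t:ℝ)+1)*((u:ℝ)+(t:ℝ)+3)/((u:ℝ)*(t:ℝ) + 2*(u:ℝ) + (t:ℝ)^2 + 5*(t:ℝ) + 5))/(((u:ℝ)*(t:ℝ) + 2*(u:ℝ) + (t:ℝ)^2 + 5*(t:ℝ) + 5) + 1)^2))^2/((1 - ((-(((u:ℝ)*(t:ℝ)^2 + 4*(u:ℝ)*(t:ℝ) + 4*(u:ℝ) + (t:ℝ)^3 + 7*(t:ℝ)^2 + 14*(t:ℝ) + 9)/((u:ℝ)*(t:ℝ) + 2*(u:ℝ) + (t:ℝ)^2 + 5*(t:ℝ) + 5)))^2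 - 2*(((t:ℝ)+2)*((t:ℝ)+1)*((u:ℝ)+(t:ℝ)+3)/((u:ℝ)*(t:ℝ) + 2*(u:ℝ) + (t:ℝ)^2 + 5*(t:ℝ) + 5)))/(((u:ℝ)*(t:ℝ) + 2*(u:ℝ) + (t:ℝ)^2 + 5*(t:ℝ) + 5) + 1) + (((t:ℝ)+2)*((t:ℝ)+1)*((u:ℝ)+(t:ℝ)+3)/((u:ℝ)*(t:ℝ) + 2*(u:ℝ) + (t:ℝ)^2 + 5*(t:ℝ) + 5))^2/(((u:ℝ)*(t:ℝ) + 2*(u:ℝ) + (t:ℝ)^2 + 5*(t:ℝ) + 5) + 1)^2) * (1 - (((t:ℝ)+2)*((t:ℝ)+1)*((u:ℝ)+(t:ℝ)+3)/((u:ℝ)*(t:ℝ) + 2*(u:ℝ) + (t:ℝ)^2 + 5*(t:ℝ) + 5))/(((u:ℝ)*(t:ℝ) + 2*(u:ℝ) + (t:ℝ)^2 + 5*(t:ℝ) + 5) + 1))^2 * (1 - 1/(((u:ℝ)*(t:ℝ) + 2*(u:ℝ) + (t:ℝ)^2 + 5*(t:ℝ) + 5) + 1)))) := by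
      rw [Real.log_div (pow_ne_zero 2 hA'.ne') (by positivity), Real.log_pow]
      push_cast; ring
    have hratio : ((1 - (-(((u:ℝ)*(t:ℝ)^2 + 4*(u:ℝ)*(t:ℝ) + 4*(u:ℝ) + (t:ℝ)^3 + 7*(t:ℝ)^2 + 14*(t:ℝ) + 9)/((u:ℝ)*(t:ℝ) + 2*(u:ℝ) + (t:ℝ)^2 + 5*(t:ℝ) + 5)))/(((u:ℝ)*(t:ℝ) + 2*(u:ℝ) + (t:ℝ)^2 + 5*(t:ℝ) + 5) + 1) + (((t:ℝ)+2)*((t:ℝ)+1)*((u:ℝ)+(t:ℝ)+3)/((u:ℝ)*(t:ℝ) + 2*(u:ℝ) + (t:ℝ)^2 + 5*(t:ℝ) + 5))/(((u:ℝ)*(t:ℝ) + 2*(u:ℝ) + (t:ℝ)^2 + 5*(t:ℝ) + 5) + 1)^2))^2/((1 - ((-(((u:ℝ)*(t:ℝ)^2 + 4*(u:ℝ)*(t:ℝ) + 4*(u:ℝ) + (t:ℝ)^3 + 7*(t:ℝ)^2 + 14*(t:ℝ) + 9)/((u:ℝ)*(t:ℝ) + 2*(u:ℝ) + (t:ℝ)^2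 + 5*(t:ℝ) + 5)))^2 - 2*(((t:ℝ)+2)*((t:ℝ)+1)*((u:ℝ)+(t:ℝ)+3)/((u:ℝ)*(t:ℝ) + 2*(u:ℝ) + (t:ℝ)^2 + 5*(t:ℝ) + 5)))/(((u:ℝ)*(t:ℝ) + 2*(u:ℝ) + (t:ℝ)^2 + 5*(t:ℝ) + 5) + 1) + (((t:ℝ)+2)*((t:ℝ)+1)*((u:ℝ)+(t:ℝ)+3)/((u:ℝ)*(t:ℝ) + 2*(u:ℝ) + (t:ℝ)^2 + 5*(t:ℝ) + 5))^2/(((u:ℝ)*(t:ℝ) + 2*(u:ℝ) + (t:ℝ)^2 + 5*(t:ℝ) + 5) + 1)^2) * (1 - (((t:ℝ)+2)*((t:ℝ)+1)*((u:ℝ)+(t:ℝ)+3)/((u:ℝ)*(t:ℝ) + 2*(u:ℝ) + (t:ℝ)^2 + 5*(t:ℝ) + 5))/(((u:ℝ)*(t:ℝ) + 2*(u:ℝ) + (t:ℝ)^2 + 5*(t:ℝ) + 5) + 1))^2 * (1 - 1/(((u:ℝ)*(t:ℝ) + 2*(u:ℝ) + (t:ℝ)^2 + 5*(t:ℝ)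 + 5) + 1))) = ((u:ℝ)+(t:ℝ)+4)^2*((u:ℝ)*(t:ℝ) + 2*(u:ℝ) + (t:ℝ)^2 + 5*(t:ℝ) + 5)^2/((((u:ℝ)+(t:ℝ)+4)-2)^2*(27 + 45*(t:ℝ) + 22*(t:ℝ)^2 + 3*(t:ℝ)^3 + 18*(u:ℝ) + 25*(u:ℝ)*(t:ℝ) + 10*(u:ℝ)*(t:ℝ)^2 + (u:ℝ)*(t:ℝ)^3 + 4*(u:ℝ)^2 + 4*(u:ℝ)^2*(t:ℝ) + (u:ℝ)^2*(t:ℝ)^2)) := by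
      rw [hAe, hBe, hCe, hDe]
      rw [div_eq_div_iff (mul_pos (mul_pos (div_pos hBnum (by positivity)) (by positivity))
          (div_pos hmpos hapos)).ne' (by positivity)]
      field_simp
      ring
    have hfin : 2 * Real.log ((((u:ℝ)+(t:ℝ)+4)*((u:ℝ)*(t:ℝ) + 2*(u:ℝ) + (t:ℝ)^2 + 5*(t:ℝ) + 5))/((((u:ℝ)+(t:ℝ)+4)-2)*Real.sqrt (27 + 45*(t:ℝ) + 22*(t:ℝ)^2 + 3*(t:ℝ)^3 + 18*(u:ℝ) + 25*(u:ℝ)*(t:ℝ) + 10*(u:ℝ)*(t:ℝ)^2 + (u:ℝ)*(t:ℝ)^3 + 4*(u:ℝ)^2 + 4*(u:ℝ)^2*(t:ℝ) + (u:ℝ)^2*(t:ℝ)^2)))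
        = 2 * (Real.log (1 - (-(((u:ℝ)*(t:ℝ)^2 + 4*(u:ℝ)*(t:ℝ) + 4*(u:ℝ) + (t:ℝ)^3 + 7*(t:ℝ)^2 + 14*(t:ℝ) + 9)/((u:ℝ)*(t:ℝ) + 2*(u:ℝ) + (t:ℝ)^2 + 5*(t:ℝ) + 5)))/(((u:ℝ)*(t:ℝ) + 2*(u:ℝ) + (t:ℝ)^2 + 5*(t:ℝ) + 5) + 1) + (((t:ℝ)+2)*((t:ℝ)+1)*((u:ℝ)+(t:ℝ)+3)/((u:ℝ)*(t:ℝ) + 2*(u:ℝ) + (t:ℝ)^2 + 5*(t:ℝ) + 5))/(((u:ℝ)*(t:ℝ) + 2*(u:ℝ) + (t:ℝ)^2 + 5*(t:ℝ) + 5) + 1)^2) - 1/2 * Real.log ((1 - ((-(((u:ℝ)*(t:ℝ)^2 + 4*(u:ℝ)*(t:ℝ) + 4*(u:ℝ) + (t:ℝ)^3 + 7*(t:ℝ)^2 + 14*(t:ℝ) + 9)/((u:ℝ)*(t:ℝ) + 2*(u:ℝ) + (t:ℝ)^2 + 5*(t:ℝ) + 5)))^2 - 2*(((t:ℝ)+2)*((t:ℝ)+1)*((u:ℝ)+(t:ℝ)+3)/((u:ℝ)*(t:ℝ)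 + 2*(u:ℝ) + (t:ℝ)^2 + 5*(t:ℝ) + 5)))/(((u:ℝ)*(t:ℝ) + 2*(u:ℝ) + (t:ℝ)^2 + 5*(t:ℝ) + 5) + 1) + (((t:ℝ)+2)*((t:ℝ)+1)*((u:ℝ)+(t:ℝ)+3)/((u:ℝ)*(t:ℝ) + 2*(u:ℝ) + (t:ℝ)^2 + 5*(t:ℝ) + 5))^2/(((u:ℝ)*(t:ℝ) + 2*(u:ℝ) + (t:ℝ)^2 + 5*(t:ℝ) + 5) + 1)^2) * (1 - (((t:ℝ)+2)*((t:ℝ)+1)*((u:ℝ)+(t:ℝ)+3)/((u:ℝ)*(t:ℝ) + 2*(u:ℝ) + (t:ℝ)^2 + 5*(t:ℝ) + 5))/(((u:ℝ)*(t:ℝ) + 2*(u:ℝ) + (t:ℝ)^2 + 5*(t:ℝ) + 5) + 1))^2 * (1 - 1/(((u:ℝ)*(t:ℝ) + 2*(u:ℝ) + (t:ℝ)^2 + 5*(t:ℝ) + 5) + 1)))) := by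
      rw [h2T, h2V, hratio]
    linarith [hfin]
end

section
/- For every integer s ≥ 2 there exists a unique real number ρ ∈ (2,∞) such that L(ρ,s) = 0; moreover L(r,s) < 0 for all real r with 2 < r < ρ, and L(r,s) > 0 for all real r > ρ. -/
noncomputable section

/-- `L(r,s) = ln(r−1) + ln(s−1) + ((s−1)(rs−r−s)/s)·ln(1 − s/(rs−r))`. -/
def Lfun (r s : ℝ) : ℝ :=
  Real.log (r - 1) + Real.log (s - 1) +
    ((s - 1) * (r * s - r - s) / s) * Real.log (1 - s / (r * s - r))

end

open Real Set Filter Topology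

namespace Stmt7Aux

noncomputable def F (σ x : ℝ) : ℝ :=
  Real.log (1 + x) - (σ - 1) / σ * x * (Real.log (x + σ) - Real.log x)

noncomputable def Fd (σ x : ℝ) : ℝ :=
  1 / (1 + x) + (σ - 1) / (x + σ) - (σ - 1) / σ * (Real.log (x + σ) - Real.log x)


lemma two_mul_log_lt {x : ℝ} (hx : 1 < x) : 2 * Real.log x < x - 1 / x := by
  have hg : ∀ y : ℝ, 0 < y →
      HasDerivAt (fun y : ℝ => y - 1 / y - 2 * Real.log y) (1 - (-(y^2)⁻¹) - 2 * y⁻¹) y := by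
    intro y hy
    have h1 : HasDerivAt (fun y : ℝ => 1 / y) (-(y^2)⁻¹) y := by
      simpa [one_div] using hasDerivAt_inv (ne_of_gt hy)
    exact ((hasDerivAt_id y).sub h1).sub ((Real.hasDerivAt_log (ne_of_gt hy)).const_mul 2)
  have key : StrictMonoOn (fun y : ℝ => y - 1 / y - 2 * Real.log y) (Ici 1) := by
    apply strictMonoOn_of_deriv_pos (convex_Ici 1)
    · intro y hy
      have hy0 : (0:ℝ) < y := lt_of_lt_of_le one_pos hy
      exact (hg y hy0).continuousAt.continuousWithinAt
    · intro y hy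
      rw [interior_Ici] at hy
      have hy1 : (1:ℝ) < y := hy
      have hy0 : (0:ℝ) < y := lt_trans one_pos hy1
      rw [(hg y hy0).deriv]
      have hne : y ≠ 0 := ne_of_gt hy0
      have : 1 - (-(y^2)⁻¹) - 2 * y⁻¹ = (y-1)^2 / y^2 := by field_simp; ring
      rw [this]
      have h2 : (0:ℝ) < (y-1)^2 := pow_pos (sub_pos.mpr hy1) 2
      positivity
  have h := key (self_mem_Ici) (le_of_lt hx) hx
  simp only [Real.log_one] at h
  norm_num [one_div] at h ⊢
  linarith

lemma hasDerivAt_F {σ x : ℝ} (hσ : 2 ≤ σ) (hx : 0 < x) :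
    HasDerivAt (F σ) (Fd σ x) x := by
  have hx1 : (0:ℝ) < 1 + x := by linarith
  have hxσ : (0:ℝ) < x + σ := by linarith
  have h1 : HasDerivAt (fun y : ℝ => Real.log (1 + y)) (1 / (1 + x)) x := by
    simpa using (HasDerivAt.log ((hasDerivAt_id x).const_add 1) (ne_of_gt hx1))
  have h2 : HasDerivAt (fun y : ℝ => Real.log (y + σ)) (1 / (x + σ)) x := by
    simpa using (HasDerivAt.log ((hasDerivAt_id x).add_const σ) (ne_of_gt hxσ))
  have h3 : HasDerivAt Real.log x⁻¹ x := Real.hasDerivAt_log (ne_of_gt hx)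
  have hu : HasDerivAt (fun y : ℝ => (σ - 1) / σ * y) ((σ - 1) / σ) x := by
    simpa using (hasDerivAt_id x).const_mul ((σ - 1) / σ)
  have hv : HasDerivAt (fun y : ℝ => Real.log (y + σ) - Real.log y) (1 / (x + σ) - x⁻¹) x :=
    h2.sub h3
  have hprod := hu.mul hv
  have := h1.sub hprod
  refine HasDerivAt.congr_deriv this ?_
  unfold Fd
  have hσ0 : σ ≠ 0 := by positivity
  field_simp
  ring

lemma key {σ x : ℝ} (hσ : 2 ≤ σ) (hcase : σ = 2 ∨ 3 ≤ σ)
    (hxa : σ - 2 < x) (hx : 0 < x) (hz : F σ x = 0) : 0 < Fd σ x := by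
  have hσ0 : (0:ℝ) < σ := by linarith
  have hx1 : (0:ℝ) < 1 + x := by linarith
  have hxσ : (0:ℝ) < x + σ := by linarith
  have hc : (0:ℝ) < (σ - 1) / σ := by
    apply div_pos <;> linarith
  rcases le_or_gt (σ * (σ - 1) * (1 + x)) (2 * x * (x + σ)) with hC | hC
  · -- Case C : unconditional positivity of Fd
    have ht : (1:ℝ) < (x + σ) / x := by
      rw [lt_div_iff₀ hx]; linarith
    have hlog := two_mul_log_lt ht
    have hld : Real.log ((x + σ) / x) = Real.log (x + σ) - Real.log x :=
      Real.log_div (ne_of_gt hxσ) (ne_of_gt hx)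
    rw [hld] at hlog
    -- hlog : 2*(log(x+σ) - log x) < (x+σ)/x - 1/((x+σ)/x)
    have hbound : Real.log (x + σ) - Real.log x < σ * (2*x + σ) / (2 * x * (x + σ)) := by
      have he : (x + σ) / x - 1 / ((x + σ) / x) = σ * (2*x + σ) / (x * (x + σ)) := by
        field_simp; ring
      rw [he] at hlog
      rw [show σ * (2*x + σ) / (2 * x * (x + σ)) = (σ * (2*x + σ) / (x * (x + σ))) / 2 by
        field_simp]
      linarith
    have h1 : (σ - 1) / σ * (Real.log (x + σ) - Real.log x)
        < (σ - 1) / σ * (σ * (2*x + σ) / (2 * x * (x + σ))) := by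
      exact (mul_lt_mul_iff_right₀ hc).mpr hbound
    have h2 : (σ - 1) / σ * (σ * (2*x + σ) / (2 * x * (x + σ)))
        ≤ 1 / (1 + x) + (σ - 1) / (x + σ) := by
      rw [div_add_div _ _ (ne_of_gt hx1) (ne_of_gt hxσ), show (σ - 1) / σ * (σ * (2*x + σ) / (2 * x * (x + σ))) = (σ - 1) * (2*x + σ) / (2 * x * (x + σ)) by field_simp, div_le_div_iff₀ (by positivity) (by positivity)]
      nlinarith [hC, hx1, hxσ, hx]
    unfold Fd
    linarith
  · -- Case ¬C : use the zero hypothesis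
    set v := Real.sqrt (1 + x) with hv
    have hv0 : 0 < v := Real.sqrt_pos.mpr hx1
    have hv2 : v ^ 2 = 1 + x := Real.sq_sqrt (le_of_lt hx1)
    have hv1 : 1 < v := by
      nlinarith [hv2, hv0]
    -- W : (x+σ)(v−1) ≤ (σ−1)(1+x)
    have hW : (x + σ) * (v - 1) ≤ (σ - 1) * (1 + x) := by
      rcases hcase with h2 | h3
      · subst h2
        have hx2 : x ^ 2 + x < 1 := by nlinarith
        have hxlt : x < 1 := by nlinarith
        have hvlt : v < 3/2 := by nlinarith [hv2, hv0]
        nlinarith [hv2, hv1, hvlt, hv0]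
      · have hx1' : (1:ℝ) ≤ x := by linarith
        have hxle : x ≤ σ * (σ - 2) := by nlinarith
        have hvσ : v ≤ σ - 1 := by nlinarith [hv2, hv0]
        have hq : (0:ℝ) ≤ v^2 - v + 1 := by nlinarith [sq_nonneg (v-1)]
        nlinarith [mul_nonneg (sub_nonneg.mpr hvσ) hq, hv1, hv2]
    have hinv : 1 / v ≤ 1 / (1 + x) + (σ - 1) / (x + σ) := by
      rw [div_add_div _ _ (ne_of_gt hx1) (ne_of_gt hxσ), div_le_div_iff₀ hv0 (by positivity)]
      nlinarith [hW, hv0, hv2]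
    have hlogx : Real.log (1 + x) < x / v := by
      have h2l := two_mul_log_lt hv1
      have hL : Real.log (1 + x) = 2 * Real.log v := by
        rw [← hv2, Real.log_pow]; push_cast; ring
      have he : v - 1 / v = x / v := by
        field_simp
        linear_combination hv2
      rw [he] at h2l
      linarith
    -- from hz : log(1+x) = c x (log(x+σ) - log x)
    have hzz : (σ - 1) / σ * (Real.log (x + σ) - Real.log x) = Real.log (1 + x) / x := by
      have h0 : (σ - 1) / σ * x * (Real.log (x + σ) - Real.log x) = Real.log (1 + x) := by
        unfold F at hz; linarith
      rw [eq_div_iff (ne_of_gt hx)]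
      linear_combination h0
    unfold Fd
    rw [hzz]
    have h5 : Real.log (1 + x) / x < 1 / v := by
      rw [div_lt_div_iff₀ hx hv0]
      have hmul : (x / v) * v = x := div_mul_cancel₀ _ (ne_of_gt hv0)
      have := (mul_lt_mul_iff_left₀ hv0).mpr hlogx
      rw [hmul] at this
      linarith
    linarith [hinv, h5]

lemma Fpos {σ : ℝ} (hσ : 2 ≤ σ) : 0 < F σ (Real.exp (σ - 1)) := by
  set M := Real.exp (σ - 1) with hM
  have hM0 : 0 < M := Real.exp_pos _
  have hσ0 : (0:ℝ) < σ := by linarith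
  have hMσ : 0 < M + σ := by linarith
  have hld : Real.log (M + σ) - Real.log M = Real.log ((M + σ) / M) :=
    (Real.log_div (ne_of_gt hMσ) (ne_of_gt hM0)).symm
  have hgt1 : (1:ℝ) < (M + σ) / M := by rw [lt_div_iff₀ hM0]; linarith
  have h1 : Real.log ((M + σ) / M) < (M + σ) / M - 1 :=
    Real.log_lt_sub_one_of_pos (div_pos hMσ hM0) (ne_of_gt hgt1)
  have h2 : (M + σ) / M - 1 = σ / M := by field_simp; ring
  have hcM : 0 < (σ - 1) / σ * M := mul_pos (div_pos (by linarith) hσ0) hM0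
  have h3 : (σ - 1) / σ * M * (Real.log (M + σ) - Real.log M)
      < (σ - 1) / σ * M * (σ / M) := by
    apply (mul_lt_mul_iff_right₀ hcM).mpr
    rw [hld]; linarith
  have h4 : (σ - 1) / σ * M * (σ / M) = σ - 1 := by field_simp
  have h5 : σ - 1 < Real.log (1 + M) := by
    have : Real.log M < Real.log (1 + M) := Real.log_lt_log hM0 (by linarith)
    rw [hM, Real.log_exp] at this
    linarith
  unfold F
  linarith

-- negativity instances
lemma Fneg2 : F 2 (1/4) < 0 := by
  unfold F
  have h1 : Real.log (1/4 + 2) - Real.log (1/4) = Real.log 9 := by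
    rw [← Real.log_div (by norm_num) (by norm_num)]; norm_num
  have h2 : (8:ℝ) * Real.log (5/4) < Real.log 9 := by
    have := Real.log_lt_log (show (0:ℝ) < (5/4:ℝ)^8 by positivity)
      (show ((5/4:ℝ)^8) < 9 by norm_num)
    rw [Real.log_pow] at this
    push_cast at this
    linarith
  have h3 : (1:ℝ) + 1/4 = 5/4 := by norm_num
  rw [h1, h3]
  norm_num
  linarith
lemma Fneg3 : F 3 2 < 0 := by
  unfold F
  have h1 : Real.log (2 + 3) - Real.log 2 = Real.log (5/2) := by
    rw [← Real.log_div (by norm_num) (by norm_num)]; norm_num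
  have h2 : (3:ℝ) * Real.log 3 < 4 * Real.log (5/2) := by
    have := Real.log_lt_log (x := (3:ℝ)^3) (by positivity) (show (3:ℝ)^3 < (5/2)^4 by norm_num)
    rwa [Real.log_pow, Real.log_pow] at this
  have h3 : (1:ℝ) + 2 = 3 := by norm_num
  rw [h1, h3]
  norm_num
  linarith
lemma Fneg4 : F 4 3 < 0 := by
  unfold F
  have h1 : Real.log (3 + 4) - Real.log 3 = Real.log (7/3) := by
    rw [← Real.log_div (by norm_num) (by norm_num)]; norm_num
  have h2 : (4:ℝ) * Real.log 4 < 9 * Real.log (7/3) := by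
    have := Real.log_lt_log (x := (4:ℝ)^4) (by positivity) (show (4:ℝ)^4 < (7/3)^9 by norm_num)
    rwa [Real.log_pow, Real.log_pow] at this
  have h3 : (1:ℝ) + 3 = 4 := by norm_num
  rw [h1, h3]
  norm_num
  linarith
lemma Fneg5 {σ : ℝ} (hσ : 5 ≤ σ) : F σ (σ - 1) < 0 := by
  have hσ0 : (0:ℝ) < σ := by linarith
  have h1 : Real.log ((2*σ - 1) / (σ - 1)) > Real.log 2 := by
    apply Real.log_lt_log (by norm_num)
    rw [lt_div_iff₀ (by linarith)]
    linarith
  have hld : Real.log (σ - 1 + σ) - Real.log (σ - 1) = Real.log ((2*σ - 1) / (σ - 1)) := by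
    rw [← Real.log_div (by linarith) (by linarith)]
    ring_nf
  have hlog2 : Real.log σ ≤ (σ - 2) * Real.log 2 := by
    have h8 : Real.log σ = Real.log (σ/8) + 3 * Real.log 2 := by
      rw [show (3:ℝ) * Real.log 2 = Real.log ((2:ℝ)^3) by rw [Real.log_pow]; push_cast; ring]
      rw [← Real.log_mul (by positivity) (by norm_num)]
      norm_num
    have h9 : Real.log (σ/8) ≤ σ/8 - 1 := Real.log_le_sub_one_of_pos (by positivity)
    have hl2 : (0.6931:ℝ) < Real.log 2 := by
      have := Real.log_two_gt_d9; linarith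
    nlinarith [hl2, hσ]
  have hpos2 : (0:ℝ) < Real.log 2 := Real.log_pos (by norm_num)
  -- coefficient (σ-1)/σ*(σ-1) ≥ σ-2
  have hcoef : σ - 2 ≤ (σ - 1) / σ * (σ - 1) := by
    rw [div_mul_eq_mul_div, le_div_iff₀ hσ0]
    nlinarith
  have hL : Real.log (1 + (σ - 1)) = Real.log σ := by norm_num
  unfold F
  rw [hld, hL]
  have hbig : (σ - 2) * Real.log 2 < (σ - 1) / σ * (σ - 1) * Real.log ((2*σ - 1) / (σ - 1)) := by
    calc (σ - 2) * Real.log 2 < (σ - 2) * Real.log ((2*σ - 1) / (σ - 1)) := by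
          apply (mul_lt_mul_iff_right₀ (by linarith)).mpr; linarith
      _ ≤ (σ - 1) / σ * (σ - 1) * Real.log ((2*σ - 1) / (σ - 1)) := by
          apply mul_le_mul_of_nonneg_right hcoef
          linarith
  linarith


lemma right_pos {f : ℝ → ℝ} {z d q : ℝ} (hf : HasDerivAt f d z) (hd : 0 < d)
    (hfz : f z = 0) (hq : z < q) : ∃ p, p ∈ Ioo z q ∧ 0 < f p := by
  have hslope := hasDerivAt_iff_tendsto_slope.mp hf
  have h1 : Tendsto (slope f z) (𝓝[>] z) (𝓝 d) :=
    hslope.mono_left (nhdsWithin_mono _ fun y hy => ne_of_gt hy)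
  have h2 : ∀ᶠ y in 𝓝[>] z, 0 < slope f z y := h1.eventually (eventually_gt_nhds hd)
  have h3 : Ioo z q ∈ 𝓝[>] z := Ioo_mem_nhdsGT_of_mem ⟨le_refl z, hq⟩
  obtain ⟨p, hp1, hp2⟩ := (h2.and (eventually_of_mem h3 fun y hy => hy)).exists
  refine ⟨p, hp2, ?_⟩
  have hs : slope f z p = (f p - f z) / (p - z) := slope_def_field f z p
  rw [hs, hfz, sub_zero] at hp1
  have hpz : 0 < p - z := sub_pos.mpr hp2.1
  have := mul_pos hp1 hpz
  rwa [div_mul_cancel₀ _ (ne_of_gt hpz)] at this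

lemma left_contra {f : ℝ → ℝ} {z d p : ℝ} (hf : HasDerivAt f d z) (hd : 0 < d)
    (hfz : f z = 0) (hp : p < z) (hpos : ∀ y, p ≤ y → y < z → 0 < f y) : False := by
  have hslope := hasDerivAt_iff_tendsto_slope.mp hf
  have h1 : Tendsto (slope f z) (𝓝[<] z) (𝓝 d) :=
    hslope.mono_left (nhdsWithin_mono _ fun y hy => ne_of_lt hy)
  have h2 : ∀ᶠ y in 𝓝[<] z, 0 < slope f z y := h1.eventually (eventually_gt_nhds hd)
  have h3 : Ioo p z ∈ 𝓝[<] z := Ioo_mem_nhdsLT_of_mem ⟨hp, le_refl z⟩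
  obtain ⟨y, hy1, hy2⟩ := (h2.and (eventually_of_mem h3 fun y hy => hy)).exists
  have hs : slope f z y = (f y - f z) / (y - z) := slope_def_field f z y
  rw [hs, hfz, sub_zero] at hy1
  have hyz : y - z < 0 := sub_neg.mpr hy2.2
  have hfy : 0 < f y := hpos y (le_of_lt hy2.1) hy2.2
  have : f y / (y - z) < 0 := div_neg_of_pos_of_neg hfy hyz
  linarith

lemma no_downcross {f : ℝ → ℝ} {a : ℝ}
    (hcont : ∀ x ∈ Ioi a, ContinuousAt f x)
    (hkey : ∀ x ∈ Ioi a, f x = 0 → ∃ d, HasDerivAt f d x ∧ 0 < d)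
    {p q : ℝ} (hap : a < p) (hpq : p < q) (hfp : 0 < f p) (hfq : f q ≤ 0) : False := by
  have hconOn : ContinuousOn f (Icc p q) := fun x hx =>
    (hcont x (lt_of_lt_of_le hap hx.1)).continuousWithinAt
  set S := {y ∈ Icc p q | f y ≤ 0} with hS
  have hSne : S.Nonempty := ⟨q, ⟨le_of_lt hpq, le_refl q⟩, hfq⟩
  have hSbdd : BddBelow S := ⟨p, fun y hy => hy.1.1⟩
  have hSclosed : IsClosed S := by
    have : S = Icc p q ∩ f ⁻¹' (Iic 0) := by
      ext y
      constructor
      · intro hy; exact ⟨hy.1, hy.2⟩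
      · intro hy; exact ⟨hy.1, hy.2⟩
    rw [this]
    exact hconOn.preimage_isClosed_of_isClosed isClosed_Icc isClosed_Iic
  set z := sInf S with hz
  have hzS : z ∈ S := hSclosed.csInf_mem hSne hSbdd
  have hzq : z ≤ q := hzS.1.2
  have hpz : p < z := by
    rcases lt_or_eq_of_le hzS.1.1 with h | h
    · exact h
    · exfalso; rw [← h] at hzS; linarith [hzS.2]
  have hbefore : ∀ y, p ≤ y → y < z → 0 < f y := by
    intro y h1 h2
    by_contra h
    push_neg at h
    have : y ∈ S := ⟨⟨h1, le_trans (le_of_lt h2) hzq⟩, h⟩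
    exact absurd (csInf_le hSbdd this) (not_le.mpr h2)
  have hfz : f z = 0 := by
    rcases lt_or_eq_of_le hzS.2 with h | h
    · exfalso
      have hsub : Icc p z ⊆ Icc p q := Icc_subset_Icc (le_refl p) hzq
      have hivt := intermediate_value_Icc' (le_of_lt hpz) (hconOn.mono hsub)
      have h0 : (0:ℝ) ∈ Icc (f z) (f p) := ⟨le_of_lt h, le_of_lt hfp⟩
      obtain ⟨w, hw, hfw⟩ := hivt h0
      have hwS : w ∈ S := ⟨⟨hw.1, le_trans hw.2 hzq⟩, le_of_eq hfw⟩
      have := csInf_le hSbdd hwS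
      have hwz : w = z := le_antisymm hw.2 this
      rw [hwz] at hfw; linarith
    · exact h
  obtain ⟨d, hder, hdpos⟩ := hkey z (lt_trans hap hpz) hfz
  exact left_contra hder hdpos hfz hpz hbefore

lemma exists_rho {σ : ℝ} (hσ : 2 ≤ σ) (hcase : σ = 2 ∨ 3 ≤ σ)
    {m₁ : ℝ} (hm₁a : σ - 2 < m₁) (hm₁ : F σ m₁ < 0) (hm₁M : m₁ < Real.exp (σ - 1)) :
    ∃ ρ, σ - 2 < ρ ∧ F σ ρ = 0 ∧
      (∀ x, σ - 2 < x → F σ x = 0 → x = ρ) ∧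
      (∀ x, σ - 2 < x → x < ρ → F σ x < 0) ∧
      (∀ x, ρ < x → 0 < F σ x) := by
  have ha0 : (0:ℝ) ≤ σ - 2 := by linarith
  have hpos : ∀ x : ℝ, σ - 2 < x → 0 < x := fun x hx => lt_of_le_of_lt ha0 hx
  have hcont : ∀ x ∈ Ioi (σ - 2), ContinuousAt (F σ) x := fun x hx =>
    (hasDerivAt_F hσ (hpos x hx)).continuousAt
  have hkey : ∀ x ∈ Ioi (σ - 2), F σ x = 0 → ∃ d, HasDerivAt (F σ) d x ∧ 0 < d :=
    fun x hx hz => ⟨Fd σ x, hasDerivAt_F hσ (hpos x hx), key hσ hcase hx (hpos x hx) hz⟩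
  set M := Real.exp (σ - 1) with hM
  -- IVT on [m₁, M]
  have hconOn : ContinuousOn (F σ) (Icc m₁ M) := fun x hx =>
    (hcont x (lt_of_lt_of_le hm₁a hx.1)).continuousWithinAt
  have hivt := intermediate_value_Icc (le_of_lt hm₁M) hconOn
  obtain ⟨ρ, hρmem, hρ⟩ := hivt ⟨le_of_lt hm₁, le_of_lt (Fpos hσ)⟩
  have hρa : σ - 2 < ρ := lt_of_lt_of_le hm₁a hρmem.1
  refine ⟨ρ, hρa, hρ, ?_, ?_, ?_⟩
  · -- uniqueness
    intro x hxa hx0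
    by_contra hne
    rcases lt_or_gt_of_ne hne with hlt | hgt
    · -- x < ρ : right of x, F > 0 somewhere, then downcross at ρ
      obtain ⟨d, hd1, hd2⟩ := hkey x hxa hx0
      obtain ⟨p, hp1, hp2⟩ := right_pos hd1 hd2 hx0 hlt
      exact no_downcross hcont hkey (lt_trans hxa hp1.1) hp1.2 hp2 (le_of_eq hρ)
    · obtain ⟨d, hd1, hd2⟩ := hkey ρ hρa hρ
      obtain ⟨p, hp1, hp2⟩ := right_pos hd1 hd2 hρ hgt
      exact no_downcross hcont hkey (lt_trans hρa hp1.1) hp1.2 hp2 (le_of_eq hx0)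
  · -- negative before
    intro x hxa hxρ
    rcases lt_trichotomy (F σ x) 0 with h | h | h
    · exact h
    · exfalso
      obtain ⟨d, hd1, hd2⟩ := hkey x hxa h
      obtain ⟨p, hp1, hp2⟩ := right_pos hd1 hd2 h hxρ
      exact no_downcross hcont hkey (lt_trans hxa hp1.1) hp1.2 hp2 (le_of_eq hρ)
    · exact absurd (no_downcross hcont hkey hxa hxρ h (le_of_eq hρ)) (fun h => h)
  · -- positive after
    intro x hρx
    by_contra h
    push_neg at h
    obtain ⟨d, hd1, hd2⟩ := hkey ρ hρa hρ
    obtain ⟨p, hp1, hp2⟩ := right_pos hd1 hd2 hρ hρx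
    exact no_downcross hcont hkey (lt_trans hρa hp1.1) hp1.2 hp2 h

lemma Lfun_eq_F {σ r : ℝ} (hσ : 2 ≤ σ) (hr : 2 < r) :
    Lfun r σ = F σ ((r - 1) * (σ - 1) - 1) := by
  set m := (r - 1) * (σ - 1) - 1 with hm
  have hσ1 : (1:ℝ) ≤ σ - 1 := by linarith
  have hm0 : 0 < m := by nlinarith
  have hmσ : 0 < m + σ := by linarith
  have hrσ : r * σ - r = m + σ := by rw [hm]; ring
  have hrσ2 : r * σ - r - σ = m := by rw [hm]; ring
  have h1m : 1 + m = (r - 1) * (σ - 1) := by rw [hm]; ring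
  have hlog1 : Real.log (r - 1) + Real.log (σ - 1) = Real.log (1 + m) := by
    rw [h1m, Real.log_mul (by linarith) (by linarith)]
  have harg : 1 - σ / (r * σ - r) = m / (m + σ) := by
    rw [hrσ]
    field_simp
    ring
  have hlog2 : Real.log (1 - σ / (r * σ - r)) = Real.log m - Real.log (m + σ) := by
    rw [harg, Real.log_div (ne_of_gt hm0) (ne_of_gt hmσ)]
  have hcoef : (σ - 1) * (r * σ - r - σ) / σ = (σ - 1) / σ * m := by
    rw [hrσ2]; ring
  unfold Lfun F
  rw [hlog2, hcoef]
  rw [show Real.log (r - 1) + Real.log (σ - 1) +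
      (σ - 1) / σ * m * (Real.log m - Real.log (m + σ)) =
      (Real.log (r - 1) + Real.log (σ - 1)) -
      (σ - 1) / σ * m * (Real.log (m + σ) - Real.log m) by ring, hlog1]


end Stmt7Aux

open Stmt7Aux

/-- For every integer `s ≥ 2` there is a unique real `ρ ∈ (2,∞)` with `L(ρ,s) = 0`;
moreover `L(r,s) < 0` for `2 < r < ρ` and `L(r,s) > 0` for `r > ρ`. -/
theorem stmt_7 (s : ℤ) (hs : 2 ≤ s) :
    ∃ ρ : ℝ, 2 < ρ ∧ Lfun ρ (s : ℝ) = 0 ∧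
      (∀ x : ℝ, 2 < x → Lfun x (s : ℝ) = 0 → x = ρ) ∧
      (∀ x : ℝ, 2 < x → x < ρ → Lfun x (s : ℝ) < 0) ∧
      (∀ x : ℝ, ρ < x → 0 < Lfun x (s : ℝ)) := by
  set σ : ℝ := (s : ℝ) with hσdef
  have hσ : 2 ≤ σ := by rw [hσdef]; exact_mod_cast hs
  have hσ1 : (0:ℝ) < σ - 1 := by linarith
  have hScase : s = 2 ∨ s = 3 ∨ s = 4 ∨ 5 ≤ s := by omega
  have hcase : σ = 2 ∨ 3 ≤ σ := by
    rcases hScase with h | h | h | h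
    · left; rw [hσdef, h]; norm_num
    · right; rw [hσdef, h]; norm_num
    · right; rw [hσdef, h]; norm_num
    · right; rw [hσdef]
      have : (3:ℤ) ≤ s := by omega
      exact_mod_cast this
  have hm₁ : ∃ m₁, σ - 2 < m₁ ∧ F σ m₁ < 0 ∧ m₁ ≤ σ - 1 := by
    rcases hScase with h | h | h | h
    · have hσ2 : σ = 2 := by rw [hσdef, h]; norm_num
      exact ⟨1/4, by rw [hσ2]; norm_num, by rw [hσ2]; exact Fneg2, by rw [hσ2]; norm_num⟩
    · have hσ3 : σ = 3 := by rw [hσdef, h]; norm_num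
      exact ⟨2, by rw [hσ3]; norm_num, by rw [hσ3]; exact Fneg3, by rw [hσ3]; norm_num⟩
    · have hσ4 : σ = 4 := by rw [hσdef, h]; norm_num
      exact ⟨3, by rw [hσ4]; norm_num, by rw [hσ4]; exact Fneg4, by rw [hσ4]; norm_num⟩
    · have hσ5 : 5 ≤ σ := by rw [hσdef]; exact_mod_cast h
      exact ⟨σ - 1, by linarith, Fneg5 hσ5, le_refl _⟩
  obtain ⟨m₁, hm₁a, hm₁neg, hm₁le⟩ := hm₁
  have hm₁M : m₁ < Real.exp (σ - 1) := by
    have := Real.add_one_le_exp (σ - 1)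
    linarith
  obtain ⟨ρm, hρa, hρ0, huniq, hneg, hpos⟩ := exists_rho hσ hcase hm₁a hm₁neg hm₁M
  set ρ : ℝ := (ρm + 1) / (σ - 1) + 1 with hρdef
  have hmρ : (ρ - 1) * (σ - 1) - 1 = ρm := by
    rw [hρdef]
    field_simp
    ring
  have hρ2 : 2 < ρ := by
    have h := hρa
    rw [← hmρ] at h
    nlinarith [h, hσ1]
  have hmmap : ∀ x : ℝ, 2 < x → σ - 2 < (x - 1) * (σ - 1) - 1 := by
    intro x hx; nlinarith
  refine ⟨ρ, hρ2, ?_, ?_, ?_, ?_⟩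
  · rw [Lfun_eq_F hσ hρ2, hmρ]; exact hρ0
  · intro x hx hLx
    rw [Lfun_eq_F hσ hx] at hLx
    have := huniq _ (hmmap x hx) hLx
    rw [← hmρ] at this
    nlinarith [this, hσ1]
  · intro x hx hxρ
    rw [Lfun_eq_F hσ hx]
    apply hneg _ (hmmap x hx)
    rw [← hmρ]
    nlinarith [hσ1, hxρ]
  · intro x hρx
    have hx2 : 2 < x := lt_trans hρ2 hρx
    rw [Lfun_eq_F hσ hx2]
    apply hpos
    rw [← hmρ]
    nlinarith [hσ1, hρx]
end

section
/- For every integer s ≥ 4 and every real number x with 1 − 2/s ≤ x ≤ s − 1 − 1/s, f_s(x) < 0. -/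
noncomputable section

/-- `f_s(x) = ln(sx+1) − (s−1)·x·ln(1 + 1/x)`. -/
def fS (s x : ℝ) : ℝ := Real.log (s * x + 1) - (s - 1) * x * Real.log (1 + 1 / x)

end

open Real Finset

lemma aux_log_ge_inv (x : ℝ) (hx : 0 < x) : 1/(x+1) ≤ Real.log (1 + 1/x) := by
  have h1 : (1 : ℝ) + 1/x = (x+1)/x := by field_simp
  have h2 : Real.log ((x+1)/x) = - Real.log (x/(x+1)) := by
    rw [← Real.log_inv]; congr 1; field_simp
  have h3 : Real.log (x/(x+1)) ≤ x/(x+1) - 1 :=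
    Real.log_le_sub_one_of_pos (by positivity)
  have h4 : x/(x+1) - 1 = -(1/(x+1)) := by field_simp; ring
  rw [h1, h2]; linarith [h3, h4 ▸ h3]

lemma aux_log_tangent (y y₀ : ℝ) (hy : 0 < y) (hy₀ : 0 < y₀) :
    Real.log y ≤ Real.log y₀ + (y - y₀)/y₀ := by
  have h : Real.log (y/y₀) ≤ y/y₀ - 1 := Real.log_le_sub_one_of_pos (by positivity)
  rw [Real.log_div (ne_of_gt hy) (ne_of_gt hy₀)] at h
  have h2 : y/y₀ - 1 = (y - y₀)/y₀ := by field_simp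
  linarith [h2 ▸ h]

lemma aux_log_chord (t₁ t₂ t : ℝ) (h0 : 0 < 1 + t₁) (h12 : t₁ < t₂) (ha : t₁ ≤ t) (hb : t ≤ t₂) :
    (t₂ - t) * Real.log (1+t₁) + (t - t₁) * Real.log (1+t₂) ≤ (t₂ - t₁) * Real.log (1+t) := by
  have hd : 0 < t₂ - t₁ := by linarith
  have key := strictConcaveOn_log_Ioi.concaveOn.2 (Set.mem_Ioi.mpr h0)
    (Set.mem_Ioi.mpr (show (0:ℝ) < 1 + t₂ by linarith))
    (show (0:ℝ) ≤ (t₂ - t)/(t₂ - t₁) by apply div_nonneg <;> linarith)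
    (show (0:ℝ) ≤ (t - t₁)/(t₂ - t₁) by apply div_nonneg <;> linarith)
    (show (t₂ - t)/(t₂ - t₁) + (t - t₁)/(t₂ - t₁) = 1 by field_simp; ring)
  have he : ((t₂ - t)/(t₂ - t₁)) • (1+t₁) + ((t - t₁)/(t₂ - t₁)) • (1+t₂) = 1 + t := by
    simp only [smul_eq_mul]; field_simp; ring
  rw [he] at key
  simp only [smul_eq_mul] at key
  rw [div_mul_eq_mul_div, div_mul_eq_mul_div, ← add_div, div_le_iff₀ hd] at key
  linarith [key]

lemma aux_fS_mono (σ s x : ℝ) (h1 : 1 ≤ σ) (hσ : σ ≤ s) (hx : 0 < x) : fS s x ≤ fS σ x := by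
  unfold fS
  have hσx : (0:ℝ) < σ * x + 1 := by nlinarith
  have hsx : (0:ℝ) < s * x + 1 := by nlinarith
  have hlog : Real.log (s*x+1) - Real.log (σ*x+1) ≤ (s - σ) * x / (σ*x+1) := by
    rw [← Real.log_div (ne_of_gt hsx) (ne_of_gt hσx)]
    have h := Real.log_le_sub_one_of_pos (show (0:ℝ) < (s*x+1)/(σ*x+1) by positivity)
    have e : (s*x+1)/(σ*x+1) - 1 = (s - σ) * x / (σ*x+1) := by field_simp; ring
    linarith [e ▸ h]
  have hL : 1/(x+1) ≤ Real.log (1 + 1/x) := aux_log_ge_inv x hx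
  have hsub : (s - σ) * x / (σ*x+1) ≤ (s - σ) * x * Real.log (1 + 1/x) := by
    have hxx : (0:ℝ) < x + 1 := by linarith
    have h5 : (s - σ) * x / (σ*x+1) ≤ (s - σ) * x / (x+1) := by
      apply div_le_div_of_nonneg_left _ hxx _ <;> nlinarith
    have h6 : (s - σ) * x / (x+1) ≤ (s - σ) * x * Real.log (1+1/x) := by
      rw [div_eq_mul_one_div]
      exact mul_le_mul_of_nonneg_left hL (by nlinarith)
    linarith
  nlinarith [hsub, hlog]


lemma aux_neg_log_one_sub_bounds (x : ℝ) (n : ℕ) (h0 : 0 ≤ x) (h1 : x < 1) :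
    (∑ i ∈ range n, x ^ (i + 1) / (i + 1)) - x ^ (n+1) / (1 - x) ≤ - Real.log (1 - x) ∧
    - Real.log (1 - x) ≤ (∑ i ∈ range n, x ^ (i + 1) / (i + 1)) + x ^ (n+1) / (1 - x) := by
  have h := Real.abs_log_sub_add_sum_range_le (by rw [abs_of_nonneg h0]; exact h1) n
  rw [abs_of_nonneg h0] at h
  rw [abs_le] at h
  constructor <;> linarith [h.1, h.2]

lemma aux_log_32 : (0.4052 : ℝ) ≤ Real.log (3/2) := by
  have h := (aux_neg_log_one_sub_bounds (1/3) 10 (by norm_num) (by norm_num)).1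
  have e : (1:ℝ) - 1/3 = 2/3 := by norm_num
  rw [e] at h
  have e2 : Real.log (2/3) = - Real.log (3/2) := by
    rw [← Real.log_inv]; norm_num
  rw [e2] at h
  simp only [Finset.sum_range_succ, Finset.sum_range_zero] at h
  norm_num at h ⊢
  linarith

lemma aux_log_1511 : (0.31015 : ℝ) ≤ Real.log (15/11) := by
  have h := (aux_neg_log_one_sub_bounds (4/15) 12 (by norm_num) (by norm_num)).1
  have e : (1:ℝ) - 4/15 = 11/15 := by norm_num
  rw [e] at h
  have e2 : Real.log (11/15) = - Real.log (15/11) := by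
    rw [← Real.log_inv]; norm_num
  rw [e2] at h
  simp only [Finset.sum_range_succ, Finset.sum_range_zero] at h
  norm_num at h ⊢
  linarith

lemma aux_log_54 : (0.22311 : ℝ) ≤ Real.log (5/4) := by
  have h := (aux_neg_log_one_sub_bounds (1/5) 9 (by norm_num) (by norm_num)).1
  have e : (1:ℝ) - 1/5 = 4/5 := by norm_num
  rw [e] at h
  have e2 : Real.log (4/5) = - Real.log (5/4) := by
    rw [← Real.log_inv]; norm_num
  rw [e2] at h
  simp only [Finset.sum_range_succ, Finset.sum_range_zero] at h
  norm_num at h ⊢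
  linarith

lemma aux_log_4940 : Real.log (49/40) ≤ (0.20295 : ℝ) := by
  have h := (aux_neg_log_one_sub_bounds (9/49) 8 (by norm_num) (by norm_num)).2
  have e : (1:ℝ) - 9/49 = 40/49 := by norm_num
  rw [e] at h
  have e2 : Real.log (40/49) = - Real.log (49/40) := by
    rw [← Real.log_inv]; norm_num
  rw [e2] at h
  simp only [Finset.sum_range_succ, Finset.sum_range_zero] at h
  norm_num at h ⊢
  linarith

lemma aux_log3 : (1.0983 : ℝ) ≤ Real.log 3 := by
  have h : Real.log 3 = Real.log 2 + Real.log (3/2) := by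
    rw [← Real.log_mul (by norm_num) (by norm_num)]; norm_num
  have := Real.log_two_gt_d9
  linarith [aux_log_32]

lemma aux_log_495 : Real.log (49/5) ≤ (2.2824 : ℝ) := by
  have h : Real.log (49/5) = 3 * Real.log 2 + Real.log (49/40) := by
    rw [show (49:ℝ)/5 = 2^3 * (49/40) by norm_num,
      Real.log_mul (by norm_num) (by norm_num), Real.log_pow]
    push_cast; ring
  have := Real.log_two_lt_d9
  linarith [aux_log_4940]

lemma aux_log16 : Real.log 16 ≤ (2.77258873 : ℝ) := by
  have h : Real.log 16 = 4 * Real.log 2 := by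
    rw [show (16:ℝ) = 2^4 by norm_num, Real.log_pow]; push_cast; ring
  have := Real.log_two_lt_d9
  linarith

lemma aux_caseA (x : ℝ) (ha : 1/2 ≤ x) (hb : x ≤ 11/4) : fS 4 x < 0 := by
  have hx : 0 < x := by linarith
  have hch := aux_log_chord (4/11) 2 (1/x) (by norm_num) (by norm_num)
    (by rw [le_div_iff₀ hx]; linarith) (by rw [div_le_iff₀ hx]; linarith)
  rw [show (1:ℝ) + 4/11 = 15/11 by norm_num, show (1:ℝ) + 2 = 3 by norm_num] at hch
  -- multiply chord by x
  have hch' : (2*x - 1) * Real.log (15/11) + (1 - (4/11)*x) * Real.log 3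
      ≤ (18/11) * (x * Real.log (1 + 1/x)) := by
    have := mul_le_mul_of_nonneg_left hch (le_of_lt hx)
    have e : x * ((2 - 1/x) * Real.log (15/11) + (1/x - 4/11) * Real.log 3)
        = (2*x - 1) * Real.log (15/11) + (1 - (4/11)*x) * Real.log 3 := by
      field_simp
    have e2 : x * ((2 - 4/11) * Real.log (1 + 1/x)) = (18/11) * (x * Real.log (1 + 1/x)) := by
      ring
    linarith [e ▸ e2 ▸ this]
  have htan := aux_log_tangent (4*x+1) (49/5) (by linarith) (by norm_num)
  have e1 : (0.31015 : ℝ) * (2*x-1) ≤ Real.log (15/11) * (2*x-1) :=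
    mul_le_mul_of_nonneg_right aux_log_1511 (by linarith)
  have e2 : (1.0983 : ℝ) * (1 - (4/11)*x) ≤ Real.log 3 * (1 - (4/11)*x) :=
    mul_le_mul_of_nonneg_right aux_log3 (by linarith)
  have := aux_log_495
  show Real.log (4*x+1) - (4-1) * x * Real.log (1 + 1/x) < 0
  nlinarith [hch', htan, e1, e2]

lemma aux_caseA2 (x : ℝ) (ha : 11/4 ≤ x) (hb : x ≤ 4) : fS 5 x < 0 := by
  have hx : 0 < x := by linarith
  have hch := aux_log_chord (1/4) (4/11) (1/x) (by norm_num) (by norm_num)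
    (by rw [le_div_iff₀ hx]; linarith) (by rw [div_le_iff₀ hx]; linarith)
  rw [show (1:ℝ) + 1/4 = 5/4 by norm_num, show (1:ℝ) + 4/11 = 15/11 by norm_num] at hch
  have hch' : ((4/11)*x - 1) * Real.log (5/4) + (1 - (1/4)*x) * Real.log (15/11)
      ≤ (5/44) * (x * Real.log (1 + 1/x)) := by
    have := mul_le_mul_of_nonneg_left hch (le_of_lt hx)
    have e : x * ((4/11 - 1/x) * Real.log (5/4) + (1/x - 1/4) * Real.log (15/11))
        = ((4/11)*x - 1) * Real.log (5/4) + (1 - (1/4)*x) * Real.log (15/11) := by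
      field_simp
    have e2 : x * ((4/11 - 1/4) * Real.log (1 + 1/x)) = (5/44) * (x * Real.log (1 + 1/x)) := by
      ring
    linarith [e ▸ e2 ▸ this]
  have htan := aux_log_tangent (5*x+1) 16 (by linarith) (by norm_num)
  have e1 : (0.22311 : ℝ) * ((4/11)*x - 1) ≤ Real.log (5/4) * ((4/11)*x - 1) :=
    mul_le_mul_of_nonneg_right aux_log_54 (by linarith)
  have e2 : (0.31015 : ℝ) * (1 - (1/4)*x) ≤ Real.log (15/11) * (1 - (1/4)*x) :=
    mul_le_mul_of_nonneg_right aux_log_1511 (by linarith)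
  have := aux_log16
  show Real.log (5*x+1) - (5-1) * x * Real.log (1 + 1/x) < 0
  nlinarith [hch', htan, e1, e2]

lemma aux_caseB (x : ℝ) (hx4 : 4 ≤ x) : fS (x+1) x < 0 := by
  have hx : 0 < x := by linarith
  have hL := aux_log_ge_inv x hx
  have hL' : x^2 * (1/(x+1)) ≤ x^2 * Real.log (1 + 1/x) :=
    mul_le_mul_of_nonneg_left hL (by positivity)
  -- log(x^2+x+1) ≤ 2 log x + (x+1)/x^2
  have hsplit : Real.log (x^2+x+1) ≤ 2 * Real.log x + (x+1)/x^2 := by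
    have h1 : Real.log ((x^2+x+1)/x^2) = Real.log (x^2+x+1) - 2 * Real.log x := by
      rw [Real.log_div (by positivity) (by positivity), Real.log_pow]
      push_cast; ring
    have h2 : Real.log ((x^2+x+1)/x^2) ≤ (x^2+x+1)/x^2 - 1 :=
      Real.log_le_sub_one_of_pos (by positivity)
    have h3 : (x^2+x+1)/x^2 - 1 = (x+1)/x^2 := by field_simp; ring
    linarith [h3 ▸ (h1 ▸ h2)]
  -- log x ≤ x/4 - 1 + 2 log 2
  have hlogx : Real.log x ≤ x/4 - 1 + 2 * Real.log 2 := by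
    have h1 : Real.log x = Real.log 4 + Real.log (x/4) := by
      rw [← Real.log_mul (by norm_num) (by positivity)]; ring_nf
    have h2 : Real.log (x/4) ≤ x/4 - 1 := Real.log_le_sub_one_of_pos (by positivity)
    have h4 : Real.log 4 = 2 * Real.log 2 := by
      rw [show (4:ℝ) = 2^2 by norm_num, Real.log_pow]; push_cast; ring
    rw [h1, h4]; linarith
  have hl2 := Real.log_two_lt_d9
  -- rational facts
  have f1 : x^2 * (1/(x+1)) = x - 1 + 1/(x+1) := by field_simp; ring
  have f2 : (x+1)/x^2 ≤ 5/16 := by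
    rw [div_le_iff₀ (by positivity)]; nlinarith
  have f3 : 1/5 - (x-4)/25 ≤ 1/(x+1) := by
    rw [le_div_iff₀ (by linarith : (0:ℝ) < x + 1)]; nlinarith [sq_nonneg (x-4)]
  show Real.log ((x+1)*x+1) - ((x+1)-1) * x * Real.log (1 + 1/x) < 0
  have e4 : (x+1)*x+1 = x^2+x+1 := by ring
  have e5 : ((x+1)-1) * x * Real.log (1 + 1/x) = x^2 * Real.log (1 + 1/x) := by ring
  rw [e4, e5]
  nlinarith [hL', hsplit, hlogx, f1, f2, f3]

/-- For every integer `s ≥ 4` and every real `x` with `1 − 2/s ≤ x ≤ s − 1 − 1/s`,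
`f_s(x) < 0`. -/
theorem stmt_8 (s : ℤ) (hs : 4 ≤ s) (x : ℝ)
    (h1 : 1 - 2 / (s : ℝ) ≤ x) (h2 : x ≤ (s : ℝ) - 1 - 1 / (s : ℝ)) :
    fS (s : ℝ) x < 0 := by
  have hs4 : (4:ℝ) ≤ (s:ℝ) := by exact_mod_cast hs
  have hspos : (0:ℝ) < (s:ℝ) := by linarith
  have hhalf : (1:ℝ)/2 ≤ x := by
    have : 2 / (s:ℝ) ≤ 1/2 := by rw [div_le_iff₀ hspos]; linarith
    linarith
  have hx : 0 < x := by linarith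
  rcases le_or_gt x (11/4) with hA | hA'
  · have hm := aux_fS_mono 4 (s:ℝ) x (by norm_num) hs4 hx
    linarith [aux_caseA x hhalf hA]
  rcases le_or_gt x 4 with hA2 | hB
  · have hs5 : (5:ℝ) ≤ (s:ℝ) := by
      have : (5:ℤ) ≤ s := by
        by_contra h
        have : s = 4 := by omega
        subst this
        norm_num at h2
        linarith
      exact_mod_cast this
    have hm := aux_fS_mono 5 (s:ℝ) x (by norm_num) hs5 hx
    linarith [aux_caseA2 x (le_of_lt hA') hA2]
  · have hxs : x + 1 ≤ (s:ℝ) := by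
      have : (0:ℝ) < 1 / (s:ℝ) := by positivity
      linarith
    have hm := aux_fS_mono (x+1) (s:ℝ) x (by linarith) hxs hx
    linarith [aux_caseB x (le_of_lt hB)]
end

section
/- For every integer s ≥ 4 and every real number x ≥ s − 1 − 1/s, the derivative f_s′(x) = s/(sx+1) − (s−1)·ln(1 + 1/x) + (s−1)/(x+1) is strictly positive; in particular f_s is strictly increasing on [s − 1 − 1/s, ∞). -/
/-- For every integer `s ≥ 4` and every real `x ≥ s − 1 − 1/s`, the function `f_s` has
derivative `s/(sx+1) − (s−1)ln(1+1/x) + (s−1)/(x+1)` at `x`, which is strictly positive;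
in particular `f_s` is strictly increasing on `[s − 1 − 1/s, ∞)`. -/
theorem stmt_9 (s : ℤ) (hs : 4 ≤ s) :
    (∀ x : ℝ, (s : ℝ) - 1 - 1 / (s : ℝ) ≤ x →
      HasDerivAt (fS (s : ℝ))
        ((s : ℝ) / ((s : ℝ) * x + 1) - ((s : ℝ) - 1) * Real.log (1 + 1 / x)
          + ((s : ℝ) - 1) / (x + 1)) x ∧
      0 < (s : ℝ) / ((s : ℝ) * x + 1) - ((s : ℝ) - 1) * Real.log (1 + 1 / x)
          + ((s : ℝ) - 1) / (x + 1)) ∧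
    StrictMonoOn (fS (s : ℝ)) (Set.Ici ((s : ℝ) - 1 - 1 / (s : ℝ))) := by
  have hs' : (4 : ℝ) ≤ (s : ℝ) := by exact_mod_cast hs
  have hspos : (0 : ℝ) < (s : ℝ) := by linarith
  have hinv : 1 / (s : ℝ) ≤ 1 := by rw [div_le_one hspos]; linarith
  have main : ∀ x : ℝ, (s : ℝ) - 1 - 1 / (s : ℝ) ≤ x →
      HasDerivAt (fS (s : ℝ))
        ((s : ℝ) / ((s : ℝ) * x + 1) - ((s : ℝ) - 1) * Real.log (1 + 1 / x)
          + ((s : ℝ) - 1) / (x + 1)) x ∧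
      0 < (s : ℝ) / ((s : ℝ) * x + 1) - ((s : ℝ) - 1) * Real.log (1 + 1 / x)
          + ((s : ℝ) - 1) / (x + 1) := by
    intro x hx
    have hx2 : (2 : ℝ) ≤ x := by linarith
    have hx0 : (0 : ℝ) < x := by linarith
    have hx1 : (0 : ℝ) < x + 1 := by linarith
    have hsx : (0 : ℝ) < (s : ℝ) * x + 1 := by positivity
    have hfrac : (0 : ℝ) < 1 + 1 / x := by positivity
    have hfne : (1 : ℝ) + 1 / x ≠ 1 := by
      have := one_div_pos.mpr hx0; intro h; linarith [h ▸ this]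
    -- derivative
    have h1 : HasDerivAt (fun y : ℝ => Real.log ((s : ℝ) * y + 1)) ((s : ℝ) / ((s : ℝ) * x + 1)) x := by
      have hlin : HasDerivAt (fun y : ℝ => (s : ℝ) * y + 1) (s : ℝ) x := by
        simpa using ((hasDerivAt_id x).const_mul (s : ℝ)).add_const 1
      simpa using hlin.log hsx.ne'
    have h2 : HasDerivAt (fun y : ℝ => 1 + 1 / y) (-(x ^ 2)⁻¹) x := by
      simpa [one_div] using (hasDerivAt_inv hx0.ne').const_add (1 : ℝ)
    have h3 := h2.log hfrac.ne'
    have h4 : HasDerivAt (fun y : ℝ => ((s : ℝ) - 1) * y) ((s : ℝ) - 1) x := by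
      simpa using (hasDerivAt_id x).const_mul ((s : ℝ) - 1)
    have h5 := h4.mul h3
    have h6 := h1.sub h5
    have hDA : HasDerivAt (fS (s : ℝ))
        ((s : ℝ) / ((s : ℝ) * x + 1) - ((s : ℝ) - 1) * Real.log (1 + 1 / x)
          + ((s : ℝ) - 1) / (x + 1)) x := by
      unfold fS
      convert h6 using 1
      · rfl
      · rfl
      · rfl
      have hxne : x ≠ 0 := hx0.ne'
      field_simp
      ring
    refine ⟨hDA, ?_⟩
    -- positivity
    have hlog : Real.log (1 + 1 / x) < 1 / x := by
      have h := Real.log_lt_sub_one_of_pos hfrac hfne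
      linarith
    have hmul : ((s : ℝ) - 1) * Real.log (1 + 1 / x) < ((s : ℝ) - 1) * (1 / x) :=
      mul_lt_mul_of_pos_left hlog (by linarith)
    have hsxge : (s : ℝ) ^ 2 - (s : ℝ) - 1 ≤ (s : ℝ) * x := by
      have h' : (s : ℝ) * ((s : ℝ) - 1 - 1 / s) ≤ (s : ℝ) * x :=
        mul_le_mul_of_nonneg_left hx hspos.le
      have hss : (s : ℝ) * ((s : ℝ) - 1 - 1 / s) = (s : ℝ) ^ 2 - s - 1 := by
        field_simp
      linarith [hss ▸ h']
    have hkey : ((s : ℝ) - 1) / (x * (x + 1)) < (s : ℝ) / ((s : ℝ) * x + 1) := by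
      rw [div_lt_div_iff₀ (by positivity) hsx]
      have p1 : x * ((s : ℝ) ^ 2 - s - 1) ≤ x * ((s : ℝ) * x) :=
        mul_le_mul_of_nonneg_left hsxge hx0.le
      have p2 : 2 * ((s : ℝ) - 1) ≤ x * ((s : ℝ) - 1) :=
        mul_le_mul_of_nonneg_right hx2 (by linarith)
      nlinarith [p1, p2]
    have hdiff : ((s : ℝ) - 1) * (1 / x) - ((s : ℝ) - 1) / (x + 1) = ((s : ℝ) - 1) / (x * (x + 1)) := by
      field_simp
      ring
    linarith [hkey, hmul, hdiff]
  refine ⟨main, ?_⟩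
  apply strictMonoOn_of_deriv_pos (convex_Ici _)
  · intro x hx
    exact ((main x hx).1).continuousAt.continuousWithinAt
  · intro x hx
    rw [interior_Ici] at hx
    have hx' := le_of_lt (Set.mem_Ioi.mp hx)
    rw [(main x hx').1.deriv]
    exact (main x hx').2
end

section
/- Suppose s ≥ 3 and r > ρ(s), i.e. r ≥ s+1 and L(r,s) > 0. For every τ ≥ 1, the function η_τ(β,γ,δ) = φ(α_τ, β, γ, δ) attains a unique global maximum over K_τ = {(β,γ,δ) ∈ ℝ³ : 0 ≤ γ ≤ β, 0 ≤ δ ≤ α_τ−β, β+γ ≤ 1−α_τ}, achieved at the point (β_τ, γ_τ, δ_τ). In particular, for every τ > 1 the partial derivatives ∂φ/∂β, ∂φ/∂γ and ∂φ/∂δ all vanish at x_τ = (α_τ, β_τ, γ_τ, δ_τ). -/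
noncomputable section

/-- `g(x) = x·ln x` (note `g(0) = 0` automatically, since `Real.log 0 = 0`). -/
def xlog (x : ℝ) : ℝ := x * Real.log x

/-- `h(r,s) = (r−2)² + 2(s−2)(r−1)(r−2) + (1/2)(s−2)(s−3)(r−1)²`. -/
def hRS (r s : ℝ) : ℝ :=
  (r - 2) ^ 2 + 2 * (s - 2) * (r - 1) * (r - 2) + (1 / 2) * (s - 2) * (s - 3) * (r - 1) ^ 2

/-- `κ₁ = (r−1)^{s−2}(r−2)²(s−1)(s−2)^{2(s−2)}` (real exponents, via `rpow`). -/
def kap1 (r s : ℝ) : ℝ := (r - 1) ^ (s - 2) * (r - 2) ^ 2 * (s - 1) * (s - 2) ^ (2 * (s - 2))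

/-- `κ₂ = 2h(r,s)/(r−2)²`. -/
def kap2 (r s : ℝ) : ℝ := 2 * hRS r s / (r - 2) ^ 2

/-- `κ₃ = (rs−r−s)²/h(r,s)`. -/
def kap3 (r s : ℝ) : ℝ := (r * s - r - s) ^ 2 / hRS r s

/-- `κ₄ = (r−3)/(r−2)`. -/
def kap4 (r : ℝ) : ℝ := (r - 3) / (r - 2)

/-- The function `φ` of four real variables `(α,β,γ,δ)` (with parameters `r,s`). -/
def phiRS (r s α β γ δ : ℝ) : ℝ :=
  xlog (1 - α - β) + 2 * (s - 1) * xlog α + ((s - 1) / s) * xlog (r * s - r - s - s * α)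
    - xlog (β - γ) - xlog δ - 2 * xlog γ - 2 * xlog (α - β - δ)
    - xlog ((s - 3) * α + β + δ) - xlog (1 - α - β - γ)
    + α * Real.log (kap1 r s) + β * Real.log (kap2 r s) + γ * Real.log (kap3 r s)
    + δ * Real.log (kap4 r)

/-- Membership in the domain `K = {(α,β,γ,δ) : 0 ≤ γ ≤ β, 0 ≤ δ ≤ α−β, α+β+γ ≤ 1}`. -/
def memK (α β γ δ : ℝ) : Prop :=
  0 ≤ γ ∧ γ ≤ β ∧ 0 ≤ δ ∧ δ ≤ α - β ∧ α + β + γ ≤ 1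

end

noncomputable section

/-- `D_τ = (τ−1)² + 2κ₃τ − κ₃`. -/
def DT (r s τ : ℝ) : ℝ := (τ - 1) ^ 2 + 2 * kap3 r s * τ - kap3 r s

/-- `p_τ = ((τ−1)² + κ₃(τ−1))/D_τ`. -/
def pT (r s τ : ℝ) : ℝ := ((τ - 1) ^ 2 + kap3 r s * (τ - 1)) / DT r s τ

/-- `q_τ = κ₄·τ·(τ−1)²/(κ₂·D_τ)`. -/
def qT (r s τ : ℝ) : ℝ := kap4 r * τ * (τ - 1) ^ 2 / (kap2 r s * DT r s τ)

/-- `N_τ = p_τ + q_τ + ((s−3)/(2κ₄))q_τ + √((s−2)/κ₄·q_τ(p_τ+q_τ) + (s−3)²/(4κ₄²)·q_τ²)`. -/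
def NT (r s τ : ℝ) : ℝ :=
  pT r s τ + qT r s τ + ((s - 3) / (2 * kap4 r)) * qT r s τ +
    Real.sqrt (((s - 2) / kap4 r) * qT r s τ * (pT r s τ + qT r s τ) +
      ((s - 3) ^ 2 / (4 * (kap4 r) ^ 2)) * (qT r s τ) ^ 2)

/-- `α_τ = N_τ/(1+N_τ)`. -/
def alphaT (r s τ : ℝ) : ℝ := NT r s τ / (1 + NT r s τ)

/-- `β_τ = p_τ(1−α_τ)`. -/
def betaT (r s τ : ℝ) : ℝ := pT r s τ * (1 - alphaT r s τ)

/-- `γ_τ = (κ₃(τ−1)/D_τ)(1−α_τ)`. -/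
def gammaT (r s τ : ℝ) : ℝ := (kap3 r s * (τ - 1) / DT r s τ) * (1 - alphaT r s τ)

/-- `δ_τ = q_τ(1−α_τ)`. -/
def deltaT (r s τ : ℝ) : ℝ := qT r s τ * (1 - alphaT r s τ)

end


section aux


section helpers

lemma hasDerivAt_affine (c w t : ℝ) : HasDerivAt (fun x : ℝ => c + x*w) w t := by
  simpa using ((hasDerivAt_id t).mul_const w).const_add c

lemma hasDerivAt_xlog_affine {c w t : ℝ} (h : c + t*w ≠ 0) :
    HasDerivAt (fun x => xlog (c + x*w)) ((Real.log (c + t*w) + 1) * w) t := by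
  simpa [xlog, Function.comp_def] using
    (Real.hasDerivAt_mul_log h).comp t (hasDerivAt_affine c w t)

lemma hasDerivAt_logterm_affine {c w t : ℝ} (h : c + t*w ≠ 0) (w2 : ℝ) :
    HasDerivAt (fun x => (Real.log (c + x*w) + 1) * w2) ((c + t*w)⁻¹ * w * w2) t := by
  have := ((Real.hasDerivAt_log h).comp t (hasDerivAt_affine c w t)).add_const (1:ℝ)
  simpa [Function.comp] using this.mul_const w2

lemma cont_xlog_affine (c w : ℝ) : Continuous (fun x : ℝ => xlog (c + x*w)) := by
  have : (fun x : ℝ => xlog (c + x*w)) = (fun y => y * Real.log y) ∘ (fun x => c + x*w) := by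
    funext x; simp [xlog]
  rw [this]
  exact Real.continuous_mul_log.comp (by continuity)

lemma cs_div (p q x y : ℝ) (hx : 0 < x) (hy : 0 < y) :
    (p+q)^2/(x+y) ≤ p^2/x + q^2/y := by
  rw [div_add_div _ _ (ne_of_gt hx) (ne_of_gt hy),
    div_le_div_iff₀ (by positivity) (by positivity)]
  linarith [sq_nonneg (p*y - q*x)]

lemma convex_pos {a a' t : ℝ} (ha : 0 < a) (ha' : 0 ≤ a') (h0 : 0 ≤ t) (h1 : t < 1) :
    0 < (1-t)*a + t*a' := by
  have h2 : 0 < (1-t)*a := mul_pos (by linarith) ha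
  have h3 : 0 ≤ t*a' := mul_nonneg h0 ha'
  linarith

lemma f2neg (At Bt Ct Dt Et Ft Gt vb vc vd : ℝ) (hA : 0 < At) (hB : 0 < Bt) (hC : 0 < Ct)
    (hD : 0 < Dt) (hE : 0 < Et) (hF : 0 < Ft) (hG : 0 < Gt) (hsum : At = Gt + Ct)
    (hv : vb ≠ 0 ∨ vc ≠ 0 ∨ vd ≠ 0) :
    At⁻¹*(-vb)*(-vb) - Bt⁻¹*(vb-vc)*(vb-vc) - Dt⁻¹*vd*vd - 2*(Ct⁻¹*vc*vc)
      - 2*(Et⁻¹*(-(vb+vd))*(-(vb+vd))) - Ft⁻¹*(vb+vd)*(vb+vd)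
      - Gt⁻¹*(-(vb+vc))*(-(vb+vc)) < 0 := by
  have key : At⁻¹*(-vb)*(-vb) ≤ Gt⁻¹*(-(vb+vc))*(-(vb+vc)) + Ct⁻¹*vc*vc := by
    have h1 : At⁻¹*(-vb)*(-vb) = ((vb+vc) + (-vc))^2/(Gt + Ct) := by
      rw [← hsum]; field_simp; ring
    have h2 := cs_div (vb+vc) (-vc) Gt Ct hG hC
    rw [h1]
    refine h2.trans_eq ?_
    field_simp
  have aux : ∀ a x : ℝ, 0 < a → 0 ≤ a⁻¹*x*x := fun a x ha => by
    rw [mul_assoc]; exact mul_nonneg (inv_nonneg.mpr ha.le) (mul_self_nonneg x)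
  have hB' : 0 ≤ Bt⁻¹*(vb-vc)*(vb-vc) := aux _ _ hB
  have hC' : 0 ≤ Ct⁻¹*vc*vc := aux _ _ hC
  have hD' : 0 ≤ Dt⁻¹*vd*vd := aux _ _ hD
  have hE' : 0 ≤ Et⁻¹*(-(vb+vd))*(-(vb+vd)) := aux _ _ hE
  have hF' : 0 ≤ Ft⁻¹*(vb+vd)*(vb+vd) := aux _ _ hF
  have hpos : 0 < Bt⁻¹*(vb-vc)*(vb-vc) + Ct⁻¹*vc*vc + Dt⁻¹*vd*vd := by
    by_cases hvc : vc = 0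
    · subst hvc
      rcases hv with h|h|h
      · have : 0 < Bt⁻¹*(vb-0)*(vb-0) := by
          have := mul_self_pos.mpr (show vb - 0 ≠ 0 by simpa using h)
          have := mul_pos (inv_pos.mpr hB) this
          linarith
        linarith
      · exact absurd rfl h
      · have : 0 < Dt⁻¹*vd*vd := by
          have := mul_pos (inv_pos.mpr hD) (mul_self_pos.mpr h)
          linarith
        linarith
    · have : 0 < Ct⁻¹*vc*vc := by
        have := mul_pos (inv_pos.mpr hC) (mul_self_pos.mpr hvc)
        linarith
      linarith
  linarith

end helpers


lemma HasDerivAt.xlog_comp {u : ℝ → ℝ} {u' x : ℝ} (hu : HasDerivAt u u' x)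
    (h : u x ≠ 0) : HasDerivAt (fun t => xlog (u t)) ((Real.log (u x) + 1) * u') x := by
  simpa [xlog, Function.comp_def] using (Real.hasDerivAt_mul_log h).comp x hu

set_option maxHeartbeats 1000000 in
lemma segment_lemma (A B C Dl E F G k2 k3 k4 vb vc vd : ℝ)
    (hA : 0 < A) (hB : 0 < B) (hC : 0 < C) (hDl : 0 < Dl) (hE : 0 < E) (hF : 0 < F)
    (hG : 0 < G) (hk2 : 0 < k2) (hk3 : 0 < k3) (hk4 : 0 < k4)
    (hsum : A = G + C)
    (e1A : 0 ≤ A - vb) (e1B : 0 ≤ B + (vb - vc)) (e1C : 0 ≤ C + vc) (e1D : 0 ≤ Dl + vd)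
    (e1E : 0 ≤ E - (vb + vd)) (e1F : 0 ≤ F + (vb + vd)) (e1G : 0 ≤ G - (vb + vc))
    (idb : E^2 * G * k2 = A * B * F)
    (idc : B * G * k3 = C^2)
    (idd : E^2 * k4 = Dl * F)
    (hv : vb ≠ 0 ∨ vc ≠ 0 ∨ vd ≠ 0) :
    xlog (A - vb) - xlog (B + (vb-vc)) - xlog (Dl + vd) - 2*xlog (C + vc)
      - 2*xlog (E - (vb+vd)) - xlog (F + (vb+vd)) - xlog (G - (vb+vc))
      + (vb*Real.log k2 + vc*Real.log k3 + vd*Real.log k4)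
    < xlog A - xlog B - xlog Dl - 2*xlog C - 2*xlog E - xlog F - xlog G := by
  set f : ℝ → ℝ := fun t =>
    xlog (A + t*(-vb)) - xlog (B + t*(vb-vc)) - xlog (Dl + t*vd) - 2*xlog (C + t*vc)
      - 2*xlog (E + t*(-(vb+vd))) - xlog (F + t*(vb+vd)) - xlog (G + t*(-(vb+vc)))
      + t*(vb*Real.log k2 + vc*Real.log k3 + vd*Real.log k4) with hf
  set f1 : ℝ → ℝ := fun t =>
    (Real.log (A + t*(-vb)) + 1) * (-vb) - (Real.log (B + t*(vb-vc)) + 1) * (vb-vc)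
      - (Real.log (Dl + t*vd) + 1) * vd - 2*((Real.log (C + t*vc) + 1) * vc)
      - 2*((Real.log (E + t*(-(vb+vd))) + 1) * (-(vb+vd)))
      - (Real.log (F + t*(vb+vd)) + 1) * (vb+vd)
      - (Real.log (G + t*(-(vb+vc))) + 1) * (-(vb+vc))
      + (vb*Real.log k2 + vc*Real.log k3 + vd*Real.log k4) with hf1
  -- positivity of arguments on [0,1)
  have pA : ∀ t : ℝ, 0 ≤ t → t < 1 → 0 < A + t*(-vb) := fun t h0 h1 => by
    have : A + t*(-vb) = (1-t)*A + t*(A - vb) := by ring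
    rw [this]; exact convex_pos hA e1A h0 h1
  have pB : ∀ t : ℝ, 0 ≤ t → t < 1 → 0 < B + t*(vb-vc) := fun t h0 h1 => by
    have : B + t*(vb-vc) = (1-t)*B + t*(B + (vb - vc)) := by ring
    rw [this]; exact convex_pos hB e1B h0 h1
  have pC : ∀ t : ℝ, 0 ≤ t → t < 1 → 0 < C + t*vc := fun t h0 h1 => by
    have : C + t*vc = (1-t)*C + t*(C + vc) := by ring
    rw [this]; exact convex_pos hC e1C h0 h1
  have pD : ∀ t : ℝ, 0 ≤ t → t < 1 → 0 < Dl + t*vd := fun t h0 h1 => by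
    have : Dl + t*vd = (1-t)*Dl + t*(Dl + vd) := by ring
    rw [this]; exact convex_pos hDl e1D h0 h1
  have pE : ∀ t : ℝ, 0 ≤ t → t < 1 → 0 < E + t*(-(vb+vd)) := fun t h0 h1 => by
    have : E + t*(-(vb+vd)) = (1-t)*E + t*(E - (vb + vd)) := by ring
    rw [this]; exact convex_pos hE e1E h0 h1
  have pF : ∀ t : ℝ, 0 ≤ t → t < 1 → 0 < F + t*(vb+vd) := fun t h0 h1 => by
    have : F + t*(vb+vd) = (1-t)*F + t*(F + (vb + vd)) := by ring
    rw [this]; exact convex_pos hF e1F h0 h1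
  have pG : ∀ t : ℝ, 0 ≤ t → t < 1 → 0 < G + t*(-(vb+vc)) := fun t h0 h1 => by
    have : G + t*(-(vb+vc)) = (1-t)*G + t*(G - (vb + vc)) := by ring
    rw [this]; exact convex_pos hG e1G h0 h1
  -- first derivative
  have hder : ∀ t : ℝ, 0 ≤ t → t < 1 → HasDerivAt f (f1 t) t := fun t h0 h1 => by
    have d1 := hasDerivAt_xlog_affine (ne_of_gt (pA t h0 h1))
    have d2 := hasDerivAt_xlog_affine (ne_of_gt (pB t h0 h1))
    have d3 := hasDerivAt_xlog_affine (ne_of_gt (pD t h0 h1))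
    have d4 := (hasDerivAt_xlog_affine (ne_of_gt (pC t h0 h1))).const_mul (2:ℝ)
    have d5 := (hasDerivAt_xlog_affine (ne_of_gt (pE t h0 h1))).const_mul (2:ℝ)
    have d6 := hasDerivAt_xlog_affine (ne_of_gt (pF t h0 h1))
    have d7 := hasDerivAt_xlog_affine (ne_of_gt (pG t h0 h1))
    have d8 : HasDerivAt (fun x : ℝ => x*(vb*Real.log k2 + vc*Real.log k3 + vd*Real.log k4))
        (vb*Real.log k2 + vc*Real.log k3 + vd*Real.log k4) t := by
      simpa using (hasDerivAt_id t).mul_const (vb*Real.log k2 + vc*Real.log k3 + vd*Real.log k4)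
    exact ((((((d1.sub d2).sub d3).sub d4).sub d5).sub d6).sub d7).add d8
  -- second derivative
  have hder2 : ∀ t : ℝ, 0 ≤ t → t < 1 → HasDerivAt f1
      ((A + t*(-vb))⁻¹*(-vb)*(-vb) - (B + t*(vb-vc))⁻¹*(vb-vc)*(vb-vc)
        - (Dl + t*vd)⁻¹*vd*vd - 2*((C + t*vc)⁻¹*vc*vc)
        - 2*((E + t*(-(vb+vd)))⁻¹*(-(vb+vd))*(-(vb+vd)))
        - (F + t*(vb+vd))⁻¹*(vb+vd)*(vb+vd)
        - (G + t*(-(vb+vc)))⁻¹*(-(vb+vc))*(-(vb+vc))) t := fun t h0 h1 => by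
    have d1 := hasDerivAt_logterm_affine (ne_of_gt (pA t h0 h1)) (-vb)
    have d2 := hasDerivAt_logterm_affine (ne_of_gt (pB t h0 h1)) (vb-vc)
    have d3 := hasDerivAt_logterm_affine (ne_of_gt (pD t h0 h1)) vd
    have d4 := (hasDerivAt_logterm_affine (ne_of_gt (pC t h0 h1)) vc).const_mul (2:ℝ)
    have d5 := (hasDerivAt_logterm_affine (ne_of_gt (pE t h0 h1)) (-(vb+vd))).const_mul (2:ℝ)
    have d6 := hasDerivAt_logterm_affine (ne_of_gt (pF t h0 h1)) (vb+vd)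
    have d7 := hasDerivAt_logterm_affine (ne_of_gt (pG t h0 h1)) (-(vb+vc))
    have := (((((((d1.sub d2).sub d3).sub d4).sub d5).sub d6).sub d7).add_const
      (vb*Real.log k2 + vc*Real.log k3 + vd*Real.log k4))
    exact this
  -- log identities
  have idb' : 2*Real.log E + Real.log G + Real.log k2
      = Real.log A + Real.log B + Real.log F := by
    have h := congrArg Real.log idb
    rw [Real.log_mul (by positivity) (ne_of_gt hk2), Real.log_mul (by positivity) (ne_of_gt hG),
      Real.log_mul (by positivity) (ne_of_gt hF), Real.log_mul (ne_of_gt hA) (ne_of_gt hB),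
      Real.log_pow] at h
    push_cast at h
    linarith
  have idc' : Real.log B + Real.log G + Real.log k3 = 2*Real.log C := by
    have h := congrArg Real.log idc
    rw [Real.log_mul (by positivity) (ne_of_gt hk3), Real.log_mul (ne_of_gt hB) (ne_of_gt hG),
      Real.log_pow] at h
    push_cast at h
    linarith
  have idd' : 2*Real.log E + Real.log k4 = Real.log Dl + Real.log F := by
    have h := congrArg Real.log idd
    rw [Real.log_mul (by positivity) (ne_of_gt hk4), Real.log_mul (ne_of_gt hDl) (ne_of_gt hF),
      Real.log_pow] at h
    push_cast at h
    linarith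
  -- f1 0 = 0
  have hf10 : f1 0 = 0 := by
    simp only [hf1, zero_mul, add_zero, mul_zero]
    linear_combination vb*idb' + vc*idc' + vd*idd'
  -- f1 < 0 on (0,1)
  have hf1neg : ∀ t : ℝ, 0 < t → t < 1 → f1 t < 0 := fun t h0 h1 => by
    have hanti : StrictAntiOn f1 (Set.Icc 0 t) := by
      apply strictAntiOn_of_deriv_neg (convex_Icc 0 t)
      · intro u hu
        exact (hder2 u hu.1 (lt_of_le_of_lt hu.2 h1)).continuousAt.continuousWithinAt
      · intro u hu
        rw [interior_Icc] at hu
        rw [(hder2 u hu.1.le (lt_trans hu.2 h1)).deriv]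
        exact f2neg _ _ _ _ _ _ _ _ _ _ (pA u hu.1.le (lt_trans hu.2 h1))
          (pB u hu.1.le (lt_trans hu.2 h1)) (pC u hu.1.le (lt_trans hu.2 h1))
          (pD u hu.1.le (lt_trans hu.2 h1)) (pE u hu.1.le (lt_trans hu.2 h1))
          (pF u hu.1.le (lt_trans hu.2 h1)) (pG u hu.1.le (lt_trans hu.2 h1))
          (by rw [hsum]; ring) hv
    have := hanti (Set.left_mem_Icc.mpr h0.le) (Set.right_mem_Icc.mpr h0.le) h0
    rw [hf10] at this
    exact this
  -- f strictly decreasing on [0,1]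
  have hfc : Continuous f := by
    refine Continuous.add ?_ (continuous_id.mul continuous_const)
    refine Continuous.sub ?_ (cont_xlog_affine G (-(vb+vc)))
    refine Continuous.sub ?_ (cont_xlog_affine F (vb+vd))
    refine Continuous.sub ?_ (continuous_const.mul (cont_xlog_affine E (-(vb+vd))))
    refine Continuous.sub ?_ (continuous_const.mul (cont_xlog_affine C vc))
    refine Continuous.sub ?_ (cont_xlog_affine Dl vd)
    exact (cont_xlog_affine A (-vb)).sub (cont_xlog_affine B (vb-vc))
  have hanti : StrictAntiOn f (Set.Icc 0 1) := by
    apply strictAntiOn_of_deriv_neg (convex_Icc 0 1) hfc.continuousOn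
    intro u hu
    rw [interior_Icc] at hu
    rw [(hder u hu.1.le hu.2).deriv]
    exact hf1neg u hu.1 hu.2
  have hfin := hanti (Set.left_mem_Icc.mpr zero_le_one) (Set.right_mem_Icc.mpr zero_le_one)
    zero_lt_one
  have h0 : f 0 = xlog A - xlog B - xlog Dl - 2*xlog C - 2*xlog E - xlog F - xlog G := by
    simp [hf]
  have h1 : f 1 = xlog (A - vb) - xlog (B + (vb-vc)) - xlog (Dl + vd) - 2*xlog (C + vc)
      - 2*xlog (E - (vb+vd)) - xlog (F + (vb+vd)) - xlog (G - (vb+vc))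
      + (vb*Real.log k2 + vc*Real.log k3 + vd*Real.log k4) := by
    simp only [hf, one_mul]
    ring_nf
  rw [h0, h1] at hfin
  exact hfin


set_option maxHeartbeats 1000000 in

lemma master (s τ k2 k3 k4 D p q N α β γ δ : ℝ)
    (hs3 : 3 ≤ s) (hτ : 1 < τ) (hk2 : 0 < k2) (hk3 : 0 < k3) (hk4 : 0 < k4)
    (hD : D = (τ-1)^2 + 2*k3*τ - k3)
    (hp : p = ((τ-1)^2 + k3*(τ-1))/D)
    (hq : q = k4*τ*(τ-1)^2/(k2*D))
    (hN : N = p + q + ((s - 3) / (2 * k4)) * q +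
      Real.sqrt ((s - 2) / k4 * q * (p + q) + (s - 3) ^ 2 / (4 * k4 ^ 2) * q ^ 2))
    (hα : α = N/(1+N)) (hβ : β = p*(1-α)) (hγ : γ = k3*(τ-1)/D*(1-α)) (hδ : δ = q*(1-α)) :
    (0 < 1-α-β) ∧ (0 < β-γ) ∧ (0 < γ) ∧ (0 < δ) ∧ (0 < α-β-δ) ∧ (0 < (s-3)*α+β+δ) ∧
    (0 < 1-α-β-γ) ∧
    ((α-β-δ)^2*(1-α-β-γ)*k2 = (1-α-β)*(β-γ)*((s-3)*α+β+δ)) ∧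
    ((β-γ)*(1-α-β-γ)*k3 = γ^2) ∧
    ((α-β-δ)^2*k4 = δ*((s-3)*α+β+δ)) ∧ (0 ≤ α) := by
  have hτ1 : 0 < τ - 1 := by linarith
  have hτ0 : 0 < τ := by linarith
  have hDpos : 0 < D := by
    rw [hD]
    have h1 : 0 < k3*(2*τ-1) := mul_pos hk3 (by linarith)
    have h2 : 0 ≤ (τ-1)^2 := sq_nonneg _
    linarith
  have hppos : 0 < p := by
    rw [hp]
    have h1 : 0 < k3*(τ-1) := mul_pos hk3 hτ1
    exact div_pos (by positivity) hDpos
  have hqpos : 0 < q := by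
    rw [hq]
    exact div_pos (by positivity) (by positivity)
  set Y := (s - 2) / k4 with hYdef
  set Z := (s - 3) ^ 2 / (4 * k4 ^ 2) with hZdef
  set c := (s - 3) / (2 * k4) with hcdef
  set X := Y * q * (p + q) + Z * q ^ 2 with hXdef
  have hYpos : 0 < Y := by rw [hYdef]; exact div_pos (by linarith) hk4
  have hZ0 : 0 ≤ Z := by rw [hZdef]; positivity
  have hc0 : 0 ≤ c := by
    rw [hcdef]; exact div_nonneg (by linarith) (by linarith)
  have hXpos : 0 < X := by
    rw [hXdef]
    have h1 : 0 < Y * q * (p + q) := by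
      apply mul_pos (mul_pos hYpos hqpos); linarith
    have h2 : 0 ≤ Z * q^2 := mul_nonneg hZ0 (sq_nonneg q)
    linarith
  have hsX : Real.sqrt X ^ 2 = X := Real.sq_sqrt hXpos.le
  have hsXpos : 0 < Real.sqrt X := Real.sqrt_pos.mpr hXpos
  have hW : N - (p+q) - c*q = Real.sqrt X := by rw [hN]; ring
  have hWpos : 0 < N - (p+q) := by
    have h1 : 0 ≤ c*q := mul_nonneg hc0 hqpos.le
    linarith
  have hNpos : 0 < N := by linarith
  have h1N : 0 < 1 + N := by linarith
  -- u facts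
  have h6' : 1/(1+N) + N/(1+N) = 1 := by rw [← add_div, div_self h1N.ne']
  have hu : 1 - α = 1/(1+N) := by rw [hα]; linarith [h6']
  have hupos : 0 < 1 - α := by rw [hu]; positivity
  have hα0 : 0 ≤ α := by rw [hα]; positivity
  -- key quadratic identity
  have hYk : k4*Y = s-2 := by rw [hYdef, mul_comm, div_mul_cancel₀ _ hk4.ne']
  have hck : 2*k4*c = s-3 := by
    rw [hcdef, mul_comm, div_mul_cancel₀ _ (mul_pos two_pos hk4).ne']
  have hZc : c^2 = Z := by rw [hcdef, hZdef, div_pow]; congr 1; ring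
  have h4 : (N - (p+q) - c*q)^2 = X := by rw [hW]; exact hsX
  have hquad : k4*(N-(p+q))^2 = q*((s-3)*N+(p+q)) := by
    linear_combination k4*h4 + k4*hXdef.symm - k4*q^2*hZc + q*(p+q)*hYk +
      q*(N-(p+q))*hck
  -- second identity
  have hqq : q*(k2*D) = k4*(τ*(τ-1)^2) := by
    rw [hq, div_mul_cancel₀ _ (mul_pos hk2 hDpos).ne']; ring
  have h5 : k4*(k2*(N-(p+q))^2*D) = k4*(τ*(τ-1)^2*((s-3)*N+(p+q))) := by
    linear_combination (k2*D)*hquad + ((s-3)*N+(p+q))*hqq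
  have id2 : k2*(N-(p+q))^2*D = τ*(τ-1)^2*((s-3)*N+(p+q)) :=
    mul_left_cancel₀ hk4.ne' h5
  have id2' : k2*(N-(p+q))^2 = τ*(τ-1)^2*((s-3)*N+(p+q))/D := by
    rw [eq_div_iff hDpos.ne']; linear_combination id2
  -- u-form of coordinates
  have h6 : 1/(1+N) + N/(1+N) = 1 := by rw [← add_div, div_self h1N.ne']
  have eα : α = N*(1-α) := by
    rw [show (1:ℝ)-α = 1/(1+N) from by rw [hα]; linarith [h6], hα]; ring
  have hpD : p*D = (τ-1)^2 + k3*(τ-1) := by rw [hp, div_mul_cancel₀ _ hDpos.ne']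
  have h1p : 1 - p = k3*τ/D := by
    rw [eq_div_iff hDpos.ne']; linear_combination hD - hpD
  have eA : 1-α-β = (1-α)*(k3*τ/D) := by
    rw [hβ, ← h1p]; ring
  have eB : β-γ = (1-α)*((τ-1)^2/D) := by
    rw [hβ, hγ, hp]; ring
  have eC : γ = (1-α)*(k3*(τ-1)/D) := by rw [hγ]; ring
  have eD : δ = (1-α)*q := by rw [hδ]; ring
  have eE : α-β-δ = (1-α)*(N-(p+q)) := by
    rw [hβ, hδ]; linear_combination eα
  have eF : (s-3)*α+β+δ = (1-α)*((s-3)*N+(p+q)) := by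
    rw [hβ, hδ]; linear_combination (s-3)*eα
  have hcan : k3*(τ-1)/D*D = k3*(τ-1) := div_mul_cancel₀ _ hDpos.ne'
  have h1pc : 1 - p - k3*(τ-1)/D = k3/D := by
    rw [eq_div_iff hDpos.ne']; linear_combination hD - hpD - hcan
  have eG : 1-α-β-γ = (1-α)*(k3/D) := by
    rw [hβ, hγ, ← h1pc]; ring
  -- positivity
  have pA : 0 < 1-α-β := by
    rw [eA]; exact mul_pos hupos (div_pos (mul_pos hk3 hτ0) hDpos)
  have pB : 0 < β-γ := by
    rw [eB]; exact mul_pos hupos (div_pos (pow_pos hτ1 2) hDpos)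
  have pC : 0 < γ := by
    rw [eC]; exact mul_pos hupos (div_pos (mul_pos hk3 hτ1) hDpos)
  have pD : 0 < δ := by rw [eD]; exact mul_pos hupos hqpos
  have pE : 0 < α-β-δ := by rw [eE]; exact mul_pos hupos hWpos
  have pF : 0 < (s-3)*α+β+δ := by
    rw [eF]; apply mul_pos hupos
    have h1 : 0 ≤ (s-3)*N := mul_nonneg (by linarith) hNpos.le
    linarith
  have pG : 0 < 1-α-β-γ := by
    rw [eG]; exact mul_pos hupos (div_pos hk3 hDpos)
  -- product identities
  have idd : (α-β-δ)^2*k4 = δ*((s-3)*α+β+δ) := by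
    rw [eE, eF, eD]; linear_combination (1-α)^2 * hquad
  have idc : (β-γ)*(1-α-β-γ)*k3 = γ^2 := by
    rw [eB, eG, eC]; ring
  have idb : (α-β-δ)^2*(1-α-β-γ)*k2 = (1-α-β)*(β-γ)*((s-3)*α+β+δ) := by
    rw [eE, eG, eA, eB, eF]; linear_combination ((1-α)^3*k3/D)*id2'
  exact ⟨pA, pB, pC, pD, pE, pF, pG, idb, idc, idd, hα0⟩

end aux

set_option maxHeartbeats 2000000 in
/-- If `s ≥ 3` and `r > ρ(s)` (i.e. `r ≥ s+1` and `L(r,s) > 0`), then for every `τ ≥ 1`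
the function `η_τ(β,γ,δ) = φ(α_τ,β,γ,δ)` attains a unique global maximum over
`K_τ = {(β,γ,δ) : 0 ≤ γ ≤ β, 0 ≤ δ ≤ α_τ−β, β+γ ≤ 1−α_τ}` at `(β_τ,γ_τ,δ_τ)`; in
particular, for every `τ > 1` the partial derivatives of `φ` with respect to `β`, `γ`
and `δ` all vanish at `x_τ = (α_τ,β_τ,γ_τ,δ_τ)`. -/


theorem stmt_14 (r s : ℤ) (hs : 3 ≤ s) (hr : s + 1 ≤ r) (hL : 0 < Lfun (r : ℝ) (s : ℝ))
    (τ : ℝ) (hτ : 1 ≤ τ) :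
    (0 ≤ gammaT r s τ ∧ gammaT r s τ ≤ betaT r s τ ∧ 0 ≤ deltaT r s τ ∧
      deltaT r s τ ≤ alphaT r s τ - betaT r s τ ∧
      betaT r s τ + gammaT r s τ ≤ 1 - alphaT r s τ) ∧
    (∀ β γ δ : ℝ,
      (0 ≤ γ ∧ γ ≤ β ∧ 0 ≤ δ ∧ δ ≤ alphaT r s τ - β ∧ β + γ ≤ 1 - alphaT r s τ) →
      ¬(β = betaT r s τ ∧ γ = gammaT r s τ ∧ δ = deltaT r s τ) →
      phiRS r s (alphaT r s τ) β γ δ <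
        phiRS r s (alphaT r s τ) (betaT r s τ) (gammaT r s τ) (deltaT r s τ)) ∧
    (1 < τ →
      deriv (fun b => phiRS r s (alphaT r s τ) b (gammaT r s τ) (deltaT r s τ))
          (betaT r s τ) = 0 ∧
      deriv (fun c => phiRS r s (alphaT r s τ) (betaT r s τ) c (deltaT r s τ))
          (gammaT r s τ) = 0 ∧
      deriv (fun d => phiRS r s (alphaT r s τ) (betaT r s τ) (gammaT r s τ) d)
          (deltaT r s τ) = 0) := by
  have hs3 : (3:ℝ) ≤ (s:ℝ) := by exact_mod_cast hs
  have hr1 : (s:ℝ) + 1 ≤ (r:ℝ) := by exact_mod_cast hr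
  have hr4 : (4:ℝ) ≤ (r:ℝ) := by linarith
  have hh : 0 < hRS r s := by
    unfold hRS
    have e1 : 0 < ((r:ℝ)-2)^2 := pow_pos (by linarith) 2
    have e2 : (0:ℝ) ≤ 2*((s:ℝ)-2)*((r:ℝ)-1)*((r:ℝ)-2) :=
      mul_nonneg (mul_nonneg (mul_nonneg (by norm_num) (by linarith)) (by linarith)) (by linarith)
    have e3 : (0:ℝ) ≤ 1/2*((s:ℝ)-2)*((s:ℝ)-3)*((r:ℝ)-1)^2 :=
      mul_nonneg (mul_nonneg (mul_nonneg (by norm_num) (by linarith)) (by linarith)) (sq_nonneg _)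
    linarith [e1, e2, e3]
  have hk2 : 0 < kap2 (r:ℝ) (s:ℝ) := by
    unfold kap2; exact div_pos (by linarith) (pow_pos (by linarith) 2)
  have hrs : 0 < (r:ℝ)*(s:ℝ) - (r:ℝ) - (s:ℝ) := by
    have hm : 4*((s:ℝ)-1) ≤ (r:ℝ)*((s:ℝ)-1) :=
      mul_le_mul_of_nonneg_right hr4 (by linarith)
    linarith [hm]
  have hk3 : 0 < kap3 (r:ℝ) (s:ℝ) := by
    unfold kap3; exact div_pos (by positivity) hh
  have hk4 : 0 < kap4 (r:ℝ) := by
    unfold kap4; exact div_pos (by linarith) (by linarith)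
  rcases eq_or_lt_of_le hτ with heq | hτ1
  · -- τ = 1
    subst heq
    have hp1 : pT r s 1 = 0 := by unfold pT; norm_num
    have hq1 : qT r s 1 = 0 := by unfold qT; norm_num
    have hN1 : NT r s 1 = 0 := by
      unfold NT; rw [hp1, hq1]; norm_num
    have hα1 : alphaT r s 1 = 0 := by unfold alphaT; rw [hN1]; norm_num
    have hβ1 : betaT r s 1 = 0 := by unfold betaT; rw [hp1]; ring
    have hγ1 : gammaT r s 1 = 0 := by unfold gammaT; norm_num
    have hδ1 : deltaT r s 1 = 0 := by unfold deltaT; rw [hq1]; ring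
    refine ⟨⟨by rw [hγ1], by rw [hγ1, hβ1], by rw [hδ1],
      by rw [hδ1, hα1, hβ1]; norm_num, by rw [hβ1, hγ1, hα1]; norm_num⟩, ?_, ?_⟩
    · intro β γ δ hmem hne
      exfalso
      rw [hα1] at hmem
      obtain ⟨m1, m2, m3, m4, m5⟩ := hmem
      exact hne ⟨by rw [hβ1]; linarith, by rw [hγ1]; linarith, by rw [hδ1]; linarith⟩
    · intro h1; exact absurd h1 (lt_irrefl _)
  · -- τ > 1
    obtain ⟨pA, pB, pC, pD, pE, pF, pG, idb, idc, idd, hα0⟩ :=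
      master (s:ℝ) τ (kap2 r s) (kap3 r s) (kap4 r) (DT r s τ) (pT r s τ) (qT r s τ)
        (NT r s τ) (alphaT r s τ) (betaT r s τ) (gammaT r s τ) (deltaT r s τ) hs3 hτ1 hk2 hk3 hk4
        rfl rfl rfl rfl rfl rfl rfl rfl
    have idb' : 2*Real.log (alphaT r s τ - betaT r s τ - deltaT r s τ) + Real.log (1 - alphaT r s τ - betaT r s τ - gammaT r s τ) + Real.log (kap2 r s)
        = Real.log (1 - alphaT r s τ - betaT r s τ) + Real.log (betaT r s τ - gammaT r s τ) + Real.log (((s:ℝ) - 3) * alphaT r s τ + betaT r s τ + deltaT r s τ) := by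
      have h := congrArg Real.log idb
      rw [Real.log_mul (mul_ne_zero (pow_ne_zero 2 pE.ne') pG.ne') hk2.ne',
        Real.log_mul (pow_ne_zero 2 pE.ne') pG.ne',
        Real.log_mul (mul_ne_zero pA.ne' pB.ne') pF.ne',
        Real.log_mul pA.ne' pB.ne', Real.log_pow] at h
      push_cast at h
      linarith
    have idc' : Real.log (betaT r s τ - gammaT r s τ) + Real.log (1 - alphaT r s τ - betaT r s τ - gammaT r s τ) + Real.log (kap3 r s) = 2*Real.log (gammaT r s τ) := by
      have h := congrArg Real.log idc
      rw [Real.log_mul (mul_ne_zero pB.ne' pG.ne') hk3.ne',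
        Real.log_mul pB.ne' pG.ne', Real.log_pow] at h
      push_cast at h
      linarith
    have idd' : 2*Real.log (alphaT r s τ - betaT r s τ - deltaT r s τ) + Real.log (kap4 r) = Real.log (deltaT r s τ) + Real.log (((s:ℝ) - 3) * alphaT r s τ + betaT r s τ + deltaT r s τ) := by
      have h := congrArg Real.log idd
      rw [Real.log_mul (pow_ne_zero 2 pE.ne') hk4.ne',
        Real.log_mul pD.ne' pF.ne', Real.log_pow] at h
      push_cast at h
      linarith
    refine ⟨⟨pC.le, by linarith, pD.le, by linarith, by linarith⟩, ?_, ?_⟩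
    · -- strict global maximum
      intro β' γ' δ' hmem hne
      obtain ⟨m1, m2, m3, m4, m5⟩ := hmem
      have hv : (β' - betaT r s τ) ≠ 0 ∨ (γ' - gammaT r s τ) ≠ 0 ∨ (δ' - deltaT r s τ) ≠ 0 := by
        by_contra hcon
        push_neg at hcon
        exact hne ⟨sub_eq_zero.mp hcon.1, sub_eq_zero.mp hcon.2.1,
          sub_eq_zero.mp hcon.2.2⟩
      have hsav : 0 ≤ ((s:ℝ) - 3) * alphaT r s τ :=
        mul_nonneg (by linarith) hα0
      have key := segment_lemma (1 - alphaT r s τ - betaT r s τ) (betaT r s τ - gammaT r s τ) (gammaT r s τ) (deltaT r s τ) (alphaT r s τ - betaT r s τ - deltaT r s τ) (((s:ℝ) - 3) * alphaT r s τ + betaT r s τ + deltaT r s τ) (1 - alphaT r s τ - betaT r s τ - gammaT r s τ)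
        (kap2 r s) (kap3 r s) (kap4 r) (β' - betaT r s τ) (γ' - gammaT r s τ) (δ' - deltaT r s τ)
        pA pB pC pD pE pF pG hk2 hk3 hk4 (by ring)
        (by linarith) (by linarith) (by linarith) (by linarith) (by linarith)
        (by linarith) (by linarith) idb idc idd hv
      have ediff : phiRS r s (alphaT r s τ) β' γ' δ'
          - phiRS r s (alphaT r s τ) (betaT r s τ) (gammaT r s τ) (deltaT r s τ)
          = (xlog ((1 - alphaT r s τ - betaT r s τ) - (β' - betaT r s τ)) - xlog ((betaT r s τ - gammaT r s τ) + ((β' - betaT r s τ) - (γ' - gammaT r s τ))) - xlog ((deltaT r s τ) + (δ' - deltaT r s τ)) - 2*xlog ((gammaT r s τ) + (γ' - gammaT r s τ)) - 2*xlog ((alphaT r s τ - betaT r s τ - deltaT r s τ) - ((β' - betaT r s τ) + (δ' - deltaT r s τ))) - xlog ((((s:ℝ) - 3) * alphaT r s τ + betaT r s τ + deltaT r s τ) + ((β' - betaT r s τ) + (δ' - deltaT r s τ))) - xlog ((1 - alphaT r s τ - betaT r s τ - gammaT r s τ) - ((β' - betaT r s τ) + (γ' - gammaT r s τ))) + ((β'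 - betaT r s τ)*Real.log (kap2 r s) + (γ' - gammaT r s τ)*Real.log (kap3 r s) + (δ' - deltaT r s τ)*Real.log (kap4 r))) - (xlog (1 - alphaT r s τ - betaT r s τ) - xlog (betaT r s τ - gammaT r s τ) - xlog (deltaT r s τ) - 2*xlog (gammaT r s τ) - 2*xlog (alphaT r s τ - betaT r s τ - deltaT r s τ) - xlog (((s:ℝ) - 3) * alphaT r s τ + betaT r s τ + deltaT r s τ) - xlog (1 - alphaT r s τ - betaT r s τ - gammaT r s τ)) := by
        simp only [phiRS]
        ring_nf
      linarith
    · -- vanishing partial derivatives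
      intro _
      refine ⟨?_, ?_, ?_⟩
      · have d1 := ((hasDerivAt_id' (x := betaT r s τ)).const_sub (1 - alphaT r s τ)).xlog_comp pA.ne'
        have d4 := ((hasDerivAt_id' (x := betaT r s τ)).sub_const (gammaT r s τ)).xlog_comp pB.ne'
        have d7 := (((hasDerivAt_id' (x := betaT r s τ)).const_sub (alphaT r s τ)).sub_const
          (deltaT r s τ)).xlog_comp pE.ne'
        have d8 := (((hasDerivAt_id' (x := betaT r s τ)).const_add (((s:ℝ) - 3) * alphaT r s τ)).add_const
          (deltaT r s τ)).xlog_comp pF.ne'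
        have d9 := ((((hasDerivAt_id' (x := betaT r s τ)).const_sub (1 - alphaT r s τ)).sub_const
          (gammaT r s τ))).xlog_comp pG.ne'
        have d11 := (hasDerivAt_id' (x := betaT r s τ)).mul_const (Real.log (kap2 r s))
        have H := ((((((((((((d1.add (hasDerivAt_const _ (2*((s:ℝ)-1)*xlog (alphaT r s τ)))).add
          (hasDerivAt_const _ ((((s:ℝ)-1)/(s:ℝ))*xlog ((r:ℝ)*(s:ℝ) - (r:ℝ) - (s:ℝ) - (s:ℝ)*alphaT r s τ)))).sub
          d4).sub (hasDerivAt_const _ (xlog (deltaT r s τ)))).sub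
          (hasDerivAt_const _ (2*xlog (gammaT r s τ)))).sub (d7.const_mul 2)).sub d8).sub d9).add
          (hasDerivAt_const _ (alphaT r s τ*Real.log (kap1 r s)))).add d11).add
          (hasDerivAt_const _ (gammaT r s τ*Real.log (kap3 r s)))).add
          (hasDerivAt_const _ (deltaT r s τ*Real.log (kap4 r))))
        simp only [phiRS]
        erw [H.deriv]
        beta_reduce
        linear_combination idb'
      · have d4 := ((hasDerivAt_id' (x := gammaT r s τ)).const_sub (betaT r s τ)).xlog_comp pB.ne'
        have d6 := (hasDerivAt_id' (x := gammaT r s τ)).xlog_comp pC.ne'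
        have d9 := ((hasDerivAt_id' (x := gammaT r s τ)).const_sub (1 - alphaT r s τ - betaT r s τ)).xlog_comp pG.ne'
        have d12 := (hasDerivAt_id' (x := gammaT r s τ)).mul_const (Real.log (kap3 r s))
        have H := ((((((((((((hasDerivAt_const _ (xlog (1 - alphaT r s τ - betaT r s τ))).add
          (hasDerivAt_const _ (2*((s:ℝ)-1)*xlog (alphaT r s τ)))).add
          (hasDerivAt_const _ ((((s:ℝ)-1)/(s:ℝ))*xlog ((r:ℝ)*(s:ℝ) - (r:ℝ) - (s:ℝ) - (s:ℝ)*alphaT r s τ)))).sub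
          d4).sub (hasDerivAt_const _ (xlog (deltaT r s τ)))).sub
          (d6.const_mul 2)).sub (hasDerivAt_const _ (2*xlog (alphaT r s τ - betaT r s τ - deltaT r s τ)))).sub
          (hasDerivAt_const _ (xlog (((s:ℝ) - 3) * alphaT r s τ + betaT r s τ + deltaT r s τ)))).sub d9).add
          (hasDerivAt_const _ (alphaT r s τ*Real.log (kap1 r s)))).add
          (hasDerivAt_const _ (betaT r s τ*Real.log (kap2 r s)))).add d12).add
          (hasDerivAt_const _ (deltaT r s τ*Real.log (kap4 r)))
        simp only [phiRS]
        erw [H.deriv]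
        beta_reduce
        linear_combination idc'
      · have d5 := (hasDerivAt_id' (x := deltaT r s τ)).xlog_comp pD.ne'
        have d7 := ((hasDerivAt_id' (x := deltaT r s τ)).const_sub (alphaT r s τ - betaT r s τ)).xlog_comp pE.ne'
        have d8 := ((hasDerivAt_id' (x := deltaT r s τ)).const_add (((s:ℝ) - 3) * alphaT r s τ + betaT r s τ)).xlog_comp pF.ne'
        have d13 := (hasDerivAt_id' (x := deltaT r s τ)).mul_const (Real.log (kap4 r))
        have H := ((((((((((((hasDerivAt_const _ (xlog (1 - alphaT r s τ - betaT r s τ))).add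
          (hasDerivAt_const _ (2*((s:ℝ)-1)*xlog (alphaT r s τ)))).add
          (hasDerivAt_const _ ((((s:ℝ)-1)/(s:ℝ))*xlog ((r:ℝ)*(s:ℝ) - (r:ℝ) - (s:ℝ) - (s:ℝ)*alphaT r s τ)))).sub
          (hasDerivAt_const _ (xlog (betaT r s τ - gammaT r s τ)))).sub d5).sub
          (hasDerivAt_const _ (2*xlog (gammaT r s τ)))).sub (d7.const_mul 2)).sub
          d8).sub (hasDerivAt_const _ (xlog (1 - alphaT r s τ - betaT r s τ - gammaT r s τ)))).add
          (hasDerivAt_const _ (alphaT r s τ*Real.log (kap1 r s)))).add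
          (hasDerivAt_const _ (betaT r s τ*Real.log (kap2 r s)))).add
          (hasDerivAt_const _ (gammaT r s τ*Real.log (kap3 r s)))).add d13
        simp only [phiRS]
        erw [H.deriv]
        beta_reduce
        linear_combination idd'
end
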